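/- arXiv:2604.04613 — 8 statements merged into one kernel-verified Lean document; each statement's English description precedes it below -/
import Mathlib

section
/- Let b > 0 and let v : [0,b] → ℝ be continuously differentiable, with radial average ṽ. Then ∫_0^b (ṽ'(r))² dr ≤ (4/9)·∫_0^b (v'(s))² ds, i.e. the L²(0,b)-norm of ṽ' is at most (2/3) times the L²(0,b)-norm of v'. -/
open MeasureTheory intervalIntegral Filter


lemma my_cs (f g : ℝ → ℝ) (a c : ℝ) (hac : a ≤ c)
    (hf : ContinuousOn f (Set.Icc a c)) (hg : ContinuousOn g (Set.Icc a c)) :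
    (∫ t in a..c, f t * g t) ^ 2
      ≤ (∫ t in a..c, f t ^ 2) * (∫ t in a..c, g t ^ 2) := by
  have hfg : IntervalIntegrable (fun t => f t * g t) volume a c :=
    (hf.mul hg).intervalIntegrable_of_Icc hac
  have hf2 : IntervalIntegrable (fun t => f t ^ 2) volume a c := by
    simpa [sq] using ((hf.mul hf).intervalIntegrable_of_Icc hac : IntervalIntegrable (fun t => f t * f t) volume a c)
  have hg2 : IntervalIntegrable (fun t => g t ^ 2) volume a c := by
    simpa [sq] using ((hg.mul hg).intervalIntegrable_of_Icc hac : IntervalIntegrable (fun t => g t * g t) volume a c)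
  set A := ∫ t in a..c, f t ^ 2 with hA
  set B := ∫ t in a..c, f t * g t with hB
  set C := ∫ t in a..c, g t ^ 2 with hC
  have key : ∀ lam : ℝ, 0 ≤ A * (lam * lam) + (2 * B) * lam + C := by
    intro lam
    have h0 : 0 ≤ ∫ t in a..c, (lam * f t + g t) ^ 2 := by
      apply intervalIntegral.integral_nonneg hac
      intro u _; positivity
    have hexp : (∫ t in a..c, (lam * f t + g t) ^ 2)
        = A * (lam * lam) + (2 * B) * lam + C := by
      have : ∀ t, (lam * f t + g t) ^ 2
          = (lam * lam) * f t ^ 2 + (2 * lam) * (f t * g t) + g t ^ 2 := by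
        intro t; ring
      rw [intervalIntegral.integral_congr (fun t _ => this t)]
      rw [intervalIntegral.integral_add ((hf2.const_mul _).add (hfg.const_mul _)) hg2,
        intervalIntegral.integral_add (hf2.const_mul _) (hfg.const_mul _),
        intervalIntegral.integral_const_mul, intervalIntegral.integral_const_mul]
      ring
    linarith [hexp ▸ h0]
  have := discrim_le_zero key
  rw [discrim] at this
  nlinarith [this]


lemma aux_deriv (b : ℝ) (hb : 0 < b) (v v' : ℝ → ℝ)
    (hv : ∀ x ∈ Set.Icc 0 b, HasDerivWithinAt v (v' x) (Set.Icc 0 b) x)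
    (hv' : ContinuousOn v' (Set.Icc 0 b)) {r : ℝ} (hr : r ∈ Set.Ioo 0 b) :
    deriv (fun x => (1 / x) * ∫ s in (0:ℝ)..x, v s) r
      = (∫ t in (0:ℝ)..r, t * v' t) / r ^ 2 := by
  have hcv : ContinuousOn v (Set.Icc 0 b) := fun x hx => (hv x hx).continuousWithinAt
  have hr0 : 0 < r := hr.1
  have hrb : r < b := hr.2
  have hIcc_nhds : Set.Icc (0:ℝ) b ∈ nhds r := Icc_mem_nhds hr0 hrb
  -- derivative of F at r
  have hvint : IntervalIntegrable v volume 0 r :=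
    (hcv.mono (Set.Icc_subset_Icc le_rfl hrb.le)).intervalIntegrable_of_Icc hr0.le
  have hmeas : StronglyMeasurableAtFilter v (nhds r) :=
    ContinuousOn.stronglyMeasurableAtFilter isOpen_Ioo
      (hcv.mono Set.Ioo_subset_Icc_self) _ hr
  have hvc : ContinuousAt v r := hcv.continuousAt hIcc_nhds
  have hF : HasDerivAt (fun u => ∫ s in (0:ℝ)..u, v s) (v r) r :=
    intervalIntegral.integral_hasDerivAt_right hvint hmeas hvc
  have hinv : HasDerivAt (fun x : ℝ => x⁻¹) (-(r ^ 2)⁻¹) r := hasDerivAt_inv hr0.ne'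
  have hg : HasDerivAt (fun x => (1 / x) * ∫ s in (0:ℝ)..x, v s)
      (-(r ^ 2)⁻¹ * (∫ s in (0:ℝ)..r, v s) + r⁻¹ * v r) r := by
    simp only [one_div]; exact hinv.mul hF
  rw [hg.deriv]
  -- integration by parts : ∫₀ʳ (v t + t v' t) dt = r * v r
  have hIccr : Set.Icc (0:ℝ) r ⊆ Set.Icc 0 b := Set.Icc_subset_Icc le_rfl hrb.le
  have hcont' : ContinuousOn (fun t => v t + t * v' t) (Set.Icc 0 r) :=
    ((hcv.mono hIccr).add ((continuousOn_id.mul (hv'.mono hIccr))))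
  have hint' : IntervalIntegrable (fun t => v t + t * v' t) volume 0 r :=
    hcont'.intervalIntegrable_of_Icc hr0.le
  have hibp : ∫ t in (0:ℝ)..r, (v t + t * v' t) = r * v r - 0 * v 0 := by
    apply intervalIntegral.integral_eq_sub_of_hasDeriv_right_of_le hr0.le
    · exact continuousOn_id.mul (hcv.mono hIccr)
    · intro t ht
      have htb : t ∈ Set.Ioo (0:ℝ) b := ⟨ht.1, ht.2.trans hrb⟩
      have hvd : HasDerivAt v (v' t) t :=
        (hv t (Set.Ioo_subset_Icc_self htb)).hasDerivAt (Icc_mem_nhds htb.1 htb.2)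
      have := (hasDerivAt_id t).mul hvd
      rw [show (1:ℝ) * v t + id t * v' t = v t + t * v' t by simp] at this
      exact this.hasDerivWithinAt
    · exact hint'
  have htvint : IntervalIntegrable (fun t => t * v' t) volume 0 r :=
    (continuousOn_id.mul (hv'.mono hIccr)).intervalIntegrable_of_Icc hr0.le
  have hsplit : (∫ t in (0:ℝ)..r, v t) + ∫ t in (0:ℝ)..r, t * v' t = r * v r := by
    rw [← intervalIntegral.integral_add hvint htvint]
    simpa using hibp
  have hK : (∫ t in (0:ℝ)..r, t * v' t) = r * v r - ∫ s in (0:ℝ)..r, v s := by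
    linarith [hsplit]
  rw [hK]
  field_simp
  ring

lemma aux_cs (b : ℝ) (v' : ℝ → ℝ) (hv' : ContinuousOn v' (Set.Icc 0 b))
    {r : ℝ} (hr : r ∈ Set.Icc 0 b) :
    (∫ t in (0:ℝ)..r, t * v' t) ^ 2
      ≤ (2 / 3) * r ^ ((3:ℝ)/2) * ∫ t in (0:ℝ)..r, t ^ ((3:ℝ)/2) * v' t ^ 2 := by
  have hr0 : (0:ℝ) ≤ r := hr.1
  have hIccr : Set.Icc (0:ℝ) r ⊆ Set.Icc 0 b := Set.Icc_subset_Icc le_rfl hr.2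
  have hcf : ContinuousOn (fun t : ℝ => t ^ ((1:ℝ)/4)) (Set.Icc 0 r) := by
    apply continuousOn_of_forall_continuousAt
    intro t _
    exact Real.continuousAt_rpow_const t _ (Or.inr (by norm_num))
  have hcg34 : ContinuousOn (fun t : ℝ => t ^ ((3:ℝ)/4)) (Set.Icc 0 r) := by
    apply continuousOn_of_forall_continuousAt
    intro t _
    exact Real.continuousAt_rpow_const t _ (Or.inr (by norm_num))
  have hcg : ContinuousOn (fun t : ℝ => t ^ ((3:ℝ)/4) * v' t) (Set.Icc 0 r) :=
    hcg34.mul (hv'.mono hIccr)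
  have key := my_cs (fun t => t ^ ((1:ℝ)/4)) (fun t => t ^ ((3:ℝ)/4) * v' t) 0 r hr0 hcf hcg
  have e1 : (∫ t in (0:ℝ)..r, (t ^ ((1:ℝ)/4)) * (t ^ ((3:ℝ)/4) * v' t))
      = ∫ t in (0:ℝ)..r, t * v' t := by
    apply intervalIntegral.integral_congr
    intro t ht
    rw [Set.uIcc_of_le hr0] at ht
    have ht0 : (0:ℝ) ≤ t := ht.1
    show t ^ ((1:ℝ)/4) * (t ^ ((3:ℝ)/4) * v' t) = t * v' t
    rw [← mul_assoc, ← Real.rpow_add' ht0 (by norm_num)]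
    norm_num
  have e2 : (∫ t in (0:ℝ)..r, (t ^ ((1:ℝ)/4)) ^ 2)
      = ∫ t in (0:ℝ)..r, t ^ ((1:ℝ)/2) := by
    apply intervalIntegral.integral_congr
    intro t ht
    rw [Set.uIcc_of_le hr0] at ht
    show (t ^ ((1:ℝ)/4)) ^ 2 = t ^ ((1:ℝ)/2)
    rw [← Real.rpow_natCast (t ^ ((1:ℝ)/4)) 2, ← Real.rpow_mul ht.1]
    norm_num
  have e3 : (∫ t in (0:ℝ)..r, (t ^ ((3:ℝ)/4) * v' t) ^ 2)
      = ∫ t in (0:ℝ)..r, t ^ ((3:ℝ)/2) * v' t ^ 2 := by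
    apply intervalIntegral.integral_congr
    intro t ht
    rw [Set.uIcc_of_le hr0] at ht
    show (t ^ ((3:ℝ)/4) * v' t) ^ 2 = t ^ ((3:ℝ)/2) * v' t ^ 2
    rw [mul_pow, ← Real.rpow_natCast (t ^ ((3:ℝ)/4)) 2, ← Real.rpow_mul ht.1]
    norm_num
  have e4 : (∫ t in (0:ℝ)..r, t ^ ((1:ℝ)/2)) = (2/3) * r ^ ((3:ℝ)/2) := by
    rw [integral_rpow (Or.inl (by norm_num))]
    rw [Real.zero_rpow (by norm_num)]
    norm_num
    ring
  rw [e1, e2, e3, e4] at key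
  linarith [key]

lemma aux_eps (b : ℝ) (hb : 0 < b) (v v' : ℝ → ℝ)
    (hv : ∀ x ∈ Set.Icc 0 b, HasDerivWithinAt v (v' x) (Set.Icc 0 b) x)
    (hv' : ContinuousOn v' (Set.Icc 0 b))
    (M : ℝ) (hM : ∀ x ∈ Set.Icc 0 b, |v' x| ≤ M)
    {ε : ℝ} (hε : ε ∈ Set.Ioc 0 b) :
    ∫ r in ε..b, (deriv (fun x => (1 / x) * ∫ s in (0:ℝ)..x, v s) r) ^ 2
      ≤ (4 / 9) * (∫ s in (0:ℝ)..b, v' s ^ 2) + (4 / 15) * M ^ 2 * ε := by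
  have hε0 : 0 < ε := hε.1
  have hεb : ε ≤ b := hε.2
  set K : ℝ → ℝ := fun r => ∫ t in (0:ℝ)..r, t * v' t with hKdef
  set G : ℝ → ℝ := fun r => ∫ t in (0:ℝ)..r, t ^ ((3:ℝ)/2) * v' t ^ 2 with hGdef
  set J : ℝ := ∫ s in (0:ℝ)..b, v' s ^ 2 with hJdef
  -- continuity facts
  have hq32 : ContinuousOn (fun t : ℝ => t ^ ((3:ℝ)/2)) (Set.Icc 0 b) :=
    continuousOn_of_forall_continuousAt fun t _ =>
      Real.continuousAt_rpow_const t _ (Or.inr (by norm_num))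
  have hqcont : ContinuousOn (fun t : ℝ => t ^ ((3:ℝ)/2) * v' t ^ 2) (Set.Icc 0 b) :=
    hq32.mul (hv'.pow 2)
  have htvcont : ContinuousOn (fun t : ℝ => t * v' t) (Set.Icc 0 b) :=
    continuousOn_id.mul hv'
  have hv'sq : ContinuousOn (fun t : ℝ => v' t ^ 2) (Set.Icc 0 b) := hv'.pow 2
  have hKcont : ContinuousOn K (Set.Icc 0 b) := by
    have := intervalIntegral.continuousOn_primitive_interval
      (f := fun t : ℝ => t * v' t) (μ := volume) (a := (0:ℝ)) (b := b) ?_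
    · simpa [Set.uIcc_of_le hb.le] using this
    · rw [Set.uIcc_of_le hb.le]; exact htvcont.integrableOn_Icc
  have hGcont : ContinuousOn G (Set.Icc 0 b) := by
    have := intervalIntegral.continuousOn_primitive_interval
      (f := fun t : ℝ => t ^ ((3:ℝ)/2) * v' t ^ 2) (μ := volume) (a := (0:ℝ)) (b := b) ?_
    · simpa [Set.uIcc_of_le hb.le] using this
    · rw [Set.uIcc_of_le hb.le]; exact hqcont.integrableOn_Icc
  have hsubIcc : Set.Icc ε b ⊆ Set.Icc 0 b := Set.Icc_subset_Icc hε0.le le_rfl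
  -- replace deriv by K r / r^2 a.e.
  have hb_ae : ∀ᵐ x : ℝ, x ≠ b := by
    have h0 : (volume : Measure ℝ) {b} = 0 := measure_singleton b
    rw [MeasureTheory.ae_iff]
    convert h0 using 2
    ext x; simp
  have hcongr : (∫ r in ε..b, (deriv (fun x => (1 / x) * ∫ s in (0:ℝ)..x, v s) r) ^ 2)
      = ∫ r in ε..b, (K r / r ^ 2) ^ 2 := by
    apply intervalIntegral.integral_congr_ae
    filter_upwards [hb_ae] with x hxb hxmem
    rw [Set.uIoc_of_le hεb] at hxmem
    have hxIoo : x ∈ Set.Ioo 0 b := ⟨hε0.trans hxmem.1, lt_of_le_of_ne hxmem.2 hxb⟩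
    rw [aux_deriv b hb v v' hv hv' hxIoo]
  rw [hcongr]
  -- pointwise bound on [ε, b]
  have hpt : ∀ r ∈ Set.Icc ε b, (K r / r ^ 2) ^ 2 ≤ (2/3) * (r ^ (-(5:ℝ)/2) * G r) := by
    intro r hrm
    have hrpos : 0 < r := hε0.trans_le hrm.1
    have hcs := aux_cs b v' hv' (hsubIcc hrm)
    have e : r ^ ((3:ℝ)/2) * (r ^ 4)⁻¹ = r ^ (-(5:ℝ)/2) := by
      rw [← Real.rpow_natCast r 4, ← Real.rpow_neg hrpos.le, ← Real.rpow_add hrpos]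
      norm_num
    have e2 : (K r / r ^ 2) ^ 2 = K r ^ 2 * (r ^ 4)⁻¹ := by
      rw [div_pow, ← pow_mul]; ring
    rw [e2]
    calc K r ^ 2 * (r ^ 4)⁻¹
        ≤ ((2/3) * r ^ ((3:ℝ)/2) * G r) * (r ^ 4)⁻¹ :=
          mul_le_mul_of_nonneg_right hcs (by positivity)
      _ = (2/3) * (r ^ (-(5:ℝ)/2) * G r) := by rw [← e]; ring
  -- integrability on [ε, b]
  have hrm52cont : ContinuousOn (fun r : ℝ => r ^ (-(5:ℝ)/2)) (Set.Icc ε b) :=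
    continuousOn_of_forall_continuousAt fun r hrm =>
      Real.continuousAt_rpow_const r _ (Or.inl (hε0.trans_le hrm.1).ne')
  have hlhs_cont : ContinuousOn (fun r => (K r / r ^ 2) ^ 2) (Set.Icc ε b) :=
    ((hKcont.mono hsubIcc).div (continuousOn_pow 2)
      (fun r hrm => pow_ne_zero 2 (hε0.trans_le hrm.1).ne')).pow 2
  have hrhs_cont : ContinuousOn (fun r => (2/3) * (r ^ (-(5:ℝ)/2) * G r)) (Set.Icc ε b) :=
    continuousOn_const.mul (hrm52cont.mul (hGcont.mono hsubIcc))
  have hlhsint : IntervalIntegrable (fun r => (K r / r ^ 2) ^ 2) volume ε b :=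
    hlhs_cont.intervalIntegrable_of_Icc hεb
  have hrhsint : IntervalIntegrable (fun r => (2/3) * (r ^ (-(5:ℝ)/2) * G r)) volume ε b :=
    hrhs_cont.intervalIntegrable_of_Icc hεb
  have hmono := intervalIntegral.integral_mono_on hεb hlhsint hrhsint hpt
  -- FTC for the weighted primitive
  have hGderiv : ∀ r ∈ Set.Ioo ε b, HasDerivAt G (r ^ ((3:ℝ)/2) * v' r ^ 2) r := by
    intro r hrm
    have hrIoo : r ∈ Set.Ioo 0 b := ⟨hε0.trans hrm.1, hrm.2⟩
    apply intervalIntegral.integral_hasDerivAt_right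
    · exact (hqcont.mono
        (Set.Icc_subset_Icc le_rfl hrIoo.2.le)).intervalIntegrable_of_Icc hrIoo.1.le
    · exact ContinuousOn.stronglyMeasurableAtFilter isOpen_Ioo
        (hqcont.mono Set.Ioo_subset_Icc_self) _ hrIoo
    · exact hqcont.continuousAt (Icc_mem_nhds hrIoo.1 hrIoo.2)
  have hhderiv : ∀ r ∈ Set.Ioo ε b, HasDerivWithinAt
      (fun r => r ^ (-(3:ℝ)/2) * G r)
      ((-(3:ℝ)/2) * (r ^ (-(5:ℝ)/2) * G r) + v' r ^ 2) (Set.Ioi r) r := by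
    intro r hrm
    have hrpos : 0 < r := hε0.trans hrm.1
    have h1 : HasDerivAt (fun r : ℝ => r ^ (-(3:ℝ)/2))
        ((-(3:ℝ)/2) * r ^ (-(3:ℝ)/2 - 1)) r :=
      Real.hasDerivAt_rpow_const (Or.inl hrpos.ne')
    have h2 := h1.mul (hGderiv r hrm)
    have e2 : r ^ (-(3:ℝ)/2) * (r ^ ((3:ℝ)/2) * v' r ^ 2) = v' r ^ 2 := by
      rw [← mul_assoc, ← Real.rpow_add hrpos]
      norm_num
    have e1 : -(3:ℝ)/2 - 1 = -(5:ℝ)/2 := by norm_num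
    rw [e1] at h2
    have h3 : HasDerivAt (fun r => r ^ (-(3:ℝ)/2) * G r)
        ((-(3:ℝ)/2) * (r ^ (-(5:ℝ)/2) * G r) + v' r ^ 2) r := by
      rw [show (-(3:ℝ)/2) * (r ^ (-(5:ℝ)/2) * G r) + v' r ^ 2
          = -(3:ℝ)/2 * r ^ (-(5:ℝ)/2) * G r + r ^ (-(3:ℝ)/2) * (r ^ ((3:ℝ)/2) * v' r ^ 2) by
        rw [e2]; ring]
      exact h2
    exact h3.hasDerivWithinAt
  have hhcont : ContinuousOn (fun r : ℝ => r ^ (-(3:ℝ)/2) * G r) (Set.Icc ε b) :=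
    (continuousOn_of_forall_continuousAt fun r hrm =>
      Real.continuousAt_rpow_const r _ (Or.inl (hε0.trans_le hrm.1).ne')).mul
      (hGcont.mono hsubIcc)
  have hint1 : IntervalIntegrable (fun r => r ^ (-(5:ℝ)/2) * G r) volume ε b :=
    (hrm52cont.mul (hGcont.mono hsubIcc)).intervalIntegrable_of_Icc hεb
  have hv'sqint : IntervalIntegrable (fun r => v' r ^ 2) volume ε b :=
    (hv'sq.mono hsubIcc).intervalIntegrable_of_Icc hεb
  have hφint : IntervalIntegrable
      (fun r => (-(3:ℝ)/2) * (r ^ (-(5:ℝ)/2) * G r) + v' r ^ 2) volume ε b :=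
    (hint1.const_mul _).add hv'sqint
  have hFTC := intervalIntegral.integral_eq_sub_of_hasDeriv_right_of_le hεb hhcont hhderiv hφint
  have hsplit : (∫ r in ε..b, ((-(3:ℝ)/2) * (r ^ (-(5:ℝ)/2) * G r) + v' r ^ 2))
      = (-(3:ℝ)/2) * (∫ r in ε..b, r ^ (-(5:ℝ)/2) * G r) + ∫ r in ε..b, v' r ^ 2 := by
    rw [intervalIntegral.integral_add (hint1.const_mul _) hv'sqint,
      intervalIntegral.integral_const_mul]
  rw [hsplit] at hFTC
  -- auxiliary positivity / bounds
  have hadj : (∫ r in (0:ℝ)..ε, v' r ^ 2) + (∫ r in ε..b, v' r ^ 2) = J :=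
    intervalIntegral.integral_add_adjacent_intervals
      ((hv'sq.mono (Set.Icc_subset_Icc le_rfl hεb)).intervalIntegrable_of_Icc hε0.le)
      hv'sqint
  have h0ε : 0 ≤ ∫ r in (0:ℝ)..ε, v' r ^ 2 :=
    intervalIntegral.integral_nonneg hε0.le (fun x _ => sq_nonneg _)
  have hGb : 0 ≤ G b :=
    intervalIntegral.integral_nonneg hb.le
      (fun x hx => mul_nonneg (Real.rpow_nonneg hx.1 _) (sq_nonneg _))
  have hbpow : 0 ≤ b ^ (-(3:ℝ)/2) := Real.rpow_nonneg hb.le _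
  -- bound on G ε
  have hM0 : 0 ≤ M := le_trans (abs_nonneg _) (hM 0 ⟨le_rfl, hb.le⟩)
  have hGε : G ε ≤ M ^ 2 * ((2/5) * ε ^ ((5:ℝ)/2)) := by
    have hle : ∀ t ∈ Set.Icc (0:ℝ) ε, t ^ ((3:ℝ)/2) * v' t ^ 2 ≤ M ^ 2 * t ^ ((3:ℝ)/2) := by
      intro t ht
      have hmem : t ∈ Set.Icc (0:ℝ) b := Set.Icc_subset_Icc le_rfl hεb ht
      have h1 : v' t ^ 2 ≤ M ^ 2 := by
        have := hM t hmem
        nlinarith [abs_nonneg (v' t), sq_abs (v' t)]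
      have h2 : 0 ≤ t ^ ((3:ℝ)/2) := Real.rpow_nonneg ht.1 _
      nlinarith
    have hq1 : IntervalIntegrable (fun t => t ^ ((3:ℝ)/2) * v' t ^ 2) volume 0 ε :=
      (hqcont.mono (Set.Icc_subset_Icc le_rfl hεb)).intervalIntegrable_of_Icc hε0.le
    have hq2 : IntervalIntegrable (fun t => M ^ 2 * t ^ ((3:ℝ)/2)) volume 0 ε :=
      (continuousOn_const.mul
        (hq32.mono (Set.Icc_subset_Icc le_rfl hεb))).intervalIntegrable_of_Icc hε0.le
    have hmono2 := intervalIntegral.integral_mono_on hε0.le hq1 hq2 hle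
    have hcomp : (∫ t in (0:ℝ)..ε, M ^ 2 * t ^ ((3:ℝ)/2))
        = M ^ 2 * ((2/5) * ε ^ ((5:ℝ)/2)) := by
      rw [intervalIntegral.integral_const_mul, integral_rpow (Or.inl (by norm_num))]
      have h32 : (3:ℝ)/2 + 1 = 5/2 := by norm_num
      rw [h32, Real.zero_rpow (by norm_num)]
      ring
    calc G ε ≤ ∫ t in (0:ℝ)..ε, M ^ 2 * t ^ ((3:ℝ)/2) := hmono2
      _ = M ^ 2 * ((2/5) * ε ^ ((5:ℝ)/2)) := hcomp
  have hεpow : ε ^ (-(3:ℝ)/2) * ε ^ ((5:ℝ)/2) = ε := by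
    rw [← Real.rpow_add hε0]
    norm_num
  have hεpow_nonneg : 0 ≤ ε ^ (-(3:ℝ)/2) := Real.rpow_nonneg hε0.le _
  have hεG : ε ^ (-(3:ℝ)/2) * G ε ≤ (2/5) * M ^ 2 * ε := by
    calc ε ^ (-(3:ℝ)/2) * G ε
        ≤ ε ^ (-(3:ℝ)/2) * (M ^ 2 * ((2/5) * ε ^ ((5:ℝ)/2))) :=
          mul_le_mul_of_nonneg_left hGε hεpow_nonneg
      _ = (2/5) * M ^ 2 * (ε ^ (-(3:ℝ)/2) * ε ^ ((5:ℝ)/2)) := by ring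
      _ = (2/5) * M ^ 2 * ε := by rw [hεpow]
  -- combine
  have hS : (∫ r in ε..b, r ^ (-(5:ℝ)/2) * G r)
      ≤ (2/3) * J + (2/3) * ((2/5) * M ^ 2 * ε) := by
    have hmul : 0 ≤ b ^ (-(3:ℝ)/2) * G b := mul_nonneg hbpow hGb
    nlinarith [hFTC, hadj, h0ε, hεG]
  calc (∫ r in ε..b, (K r / r ^ 2) ^ 2)
      ≤ ∫ r in ε..b, (2/3) * (r ^ (-(5:ℝ)/2) * G r) := hmono
    _ = (2/3) * ∫ r in ε..b, r ^ (-(5:ℝ)/2) * G r := intervalIntegral.integral_const_mul _ _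
    _ ≤ (2/3) * ((2/3) * J + (2/3) * ((2/5) * M ^ 2 * ε)) := by
        apply mul_le_mul_of_nonneg_left hS (by norm_num)
    _ ≤ (4/9) * J + (4/15) * M ^ 2 * ε := by nlinarith [sq_nonneg M, hε0.le]

/-- L² bound on the derivative of the radial average:
`∫_0^b (ṽ'(r))² dr ≤ (4/9) ∫_0^b (v'(s))² ds` for `v ∈ C¹([0,b])`,
where `ṽ(r) = (1/r)∫_0^r v`. -/
theorem stmt4 (b : ℝ) (hb : 0 < b) (v v' : ℝ → ℝ)
    (hv : ∀ x ∈ Set.Icc 0 b, HasDerivWithinAt v (v' x) (Set.Icc 0 b) x)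
    (hv' : ContinuousOn v' (Set.Icc 0 b)) :
    ∫ r in (0:ℝ)..b, (deriv (fun x => (1 / x) * ∫ s in (0:ℝ)..x, v s) r) ^ 2
      ≤ (4 / 9) * ∫ s in (0:ℝ)..b, (v' s) ^ 2 := by
  obtain ⟨M, hM⟩ : ∃ M, ∀ x ∈ Set.Icc (0:ℝ) b, |v' x| ≤ M := by
    obtain ⟨C, hC⟩ := isCompact_Icc.exists_bound_of_continuousOn hv'
    exact ⟨C, fun x hx => by simpa [Real.norm_eq_abs] using hC x hx⟩
  have hM0 : 0 ≤ M := le_trans (abs_nonneg _) (hM 0 ⟨le_rfl, hb.le⟩)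
  set D : ℝ → ℝ := fun r => (deriv (fun x => (1 / x) * ∫ s in (0:ℝ)..x, v s) r) ^ 2
    with hDdef
  set J : ℝ := ∫ s in (0:ℝ)..b, v' s ^ 2 with hJdef
  have hne : ∀ c : ℝ, ∀ᵐ x : ℝ, x ≠ c := by
    intro c
    rw [ae_iff]
    convert measure_singleton c using 2
    · ext x; simp
    · infer_instance
  have hae : ∀ᵐ x ∂(volume.restrict (Set.Icc (0:ℝ) b)), x ∈ Set.Ioo (0:ℝ) b := by
    filter_upwards [ae_restrict_mem measurableSet_Icc,
      ae_mono Measure.restrict_le_self (hne 0),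
      ae_mono Measure.restrict_le_self (hne b)] with x hx h0 hbne
    exact ⟨hx.1.lt_of_ne (Ne.symm h0), hx.2.lt_of_ne hbne⟩
  -- bound on D
  have hKbd : ∀ x ∈ Set.Ioo (0:ℝ) b, |(∫ t in (0:ℝ)..x, t * v' t) / x ^ 2| ≤ M / 2 := by
    intro x hx
    have hx0 : 0 < x := hx.1
    have hsub : Set.Icc (0:ℝ) x ⊆ Set.Icc 0 b := Set.Icc_subset_Icc le_rfl hx.2.le
    have hint_abs : IntervalIntegrable (fun t => |t * v' t|) volume 0 x :=
      ((continuousOn_id.mul (hv'.mono hsub)).abs).intervalIntegrable_of_Icc hx0.le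
    have hint_Mt : IntervalIntegrable (fun t => M * t) volume 0 x :=
      (continuousOn_const.mul continuousOn_id).intervalIntegrable_of_Icc hx0.le
    have h1 : |∫ t in (0:ℝ)..x, t * v' t| ≤ ∫ t in (0:ℝ)..x, |t * v' t| :=
      intervalIntegral.abs_integral_le_integral_abs hx0.le
    have h2 : (∫ t in (0:ℝ)..x, |t * v' t|) ≤ ∫ t in (0:ℝ)..x, M * t := by
      apply intervalIntegral.integral_mono_on hx0.le hint_abs hint_Mt
      intro t ht
      have he : |t * v' t| = t * |v' t| := by rw [abs_mul, abs_of_nonneg ht.1]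
      rw [he]
      have hMt := hM t (hsub ht)
      nlinarith [ht.1, abs_nonneg (v' t)]
    have h3 : (∫ t in (0:ℝ)..x, M * t) = M * x ^ 2 / 2 := by
      rw [intervalIntegral.integral_const_mul, integral_id]
      ring
    rw [abs_div, abs_of_nonneg (sq_nonneg x), div_le_iff₀ (by positivity)]
    calc |∫ t in (0:ℝ)..x, t * v' t| ≤ M * x ^ 2 / 2 := by linarith
      _ = M / 2 * x ^ 2 := by ring
  have hmeasD : AEStronglyMeasurable D volume :=
    ((measurable_deriv _).pow_const 2).aestronglyMeasurable
  have hbdd : ∀ᵐ x ∂(volume.restrict (Set.Icc (0:ℝ) b)), ‖D x‖ ≤ (M / 2) ^ 2 := by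
    filter_upwards [hae] with x hx
    have hd : D x = ((∫ t in (0:ℝ)..x, t * v' t) / x ^ 2) ^ 2 := by
      rw [hDdef]
      simp only []
      rw [aux_deriv b hb v v' hv hv' hx]
    rw [hd, Real.norm_eq_abs, abs_pow]
    exact pow_le_pow_left₀ (abs_nonneg _) (hKbd x hx) 2
  have hintD : IntegrableOn D (Set.Icc 0 b) volume :=
    Measure.integrableOn_of_bounded (measure_Icc_lt_top).ne hmeasD hbdd
  have hIID : ∀ x y, Set.Icc x y ⊆ Set.Icc (0:ℝ) b → x ≤ y →
      IntervalIntegrable D volume x y := by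
    intro x y hs hxy
    apply MeasureTheory.IntegrableOn.intervalIntegrable
    rw [Set.uIcc_of_le hxy]
    exact hintD.mono_set hs
  -- limit argument
  set l := nhdsWithin (0:ℝ) (Set.Ioc 0 b) with hl
  haveI hlne : l.NeBot := by
    apply mem_closure_iff_nhdsWithin_neBot.mp
    rw [closure_Ioc hb.ne]
    exact ⟨le_rfl, hb.le⟩
  have hprim : Tendsto (fun ε => ∫ r in (0:ℝ)..ε, D r) l (nhds 0) := by
    have hcont := intervalIntegral.continuousOn_primitive_interval
      (a := (0:ℝ)) (b := b) (f := D) (μ := volume)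
      (by rw [Set.uIcc_of_le hb.le]; exact hintD)
    rw [Set.uIcc_of_le hb.le] at hcont
    have h0 := (hcont 0 ⟨le_rfl, hb.le⟩).tendsto
    rw [intervalIntegral.integral_same] at h0
    exact h0.mono_left (nhdsWithin_mono _ Set.Ioc_subset_Icc_self)
  have hT1 : Tendsto (fun ε => ∫ r in ε..b, D r) l (nhds (∫ r in (0:ℝ)..b, D r)) := by
    have h1 : Tendsto (fun ε => (∫ r in (0:ℝ)..b, D r) - ∫ r in (0:ℝ)..ε, D r) l
        (nhds ((∫ r in (0:ℝ)..b, D r) - 0)) := tendsto_const_nhds.sub hprim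
    rw [sub_zero] at h1
    apply h1.congr'
    filter_upwards [eventually_mem_nhdsWithin] with ε hε
    have hadd := intervalIntegral.integral_add_adjacent_intervals
      (hIID 0 ε (Set.Icc_subset_Icc le_rfl hε.2) hε.1.le)
      (hIID ε b (Set.Icc_subset_Icc hε.1.le le_rfl) hε.2)
    linarith [hadd]
  have hT2 : Tendsto (fun ε : ℝ => (4/9) * J + (4/15) * M ^ 2 * ε) l
      (nhds ((4/9) * J)) := by
    have hc : Continuous fun ε : ℝ => (4/9) * J + (4/15) * M ^ 2 * ε := by continuity
    have h2 : Tendsto (fun ε : ℝ => (4/9) * J + (4/15) * M ^ 2 * ε) l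
        (nhds ((4/9) * J + (4/15) * M ^ 2 * 0)) :=
      (hc.tendsto 0).mono_left (nhdsWithin_le_nhds (s := Set.Ioc 0 b))
    simpa using h2
  have hineq : (fun ε => ∫ r in ε..b, D r) ≤ᶠ[l]
      fun ε => (4/9) * J + (4/15) * M ^ 2 * ε := by
    filter_upwards [eventually_mem_nhdsWithin] with ε hε
    exact aux_eps b hb v v' hv hv' M hM hε
  exact le_of_tendsto_of_tendsto hT1 hT2 hineq
end

section
/- Let b > 0, L ≥ 0, and let α, β : (0,b] → ℝ be continuous with |α(r)| ≤ L·r and |β(r)| ≤ L·r for all r ∈ (0,b]. Define G_α(r) := exp(−∫_r^b α(s)²/s ds) and G_β(r) := exp(−∫_r^b β(s)²/s ds). Then for every r ∈ (0,b]: |G_α(r) − G_β(r)| ≤ 2L·∫_0^b |α(s) − β(s)| ds. -/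
open MeasureTheory intervalIntegral

lemma exp_neg_lipschitz (x y : ℝ) (hx : 0 ≤ x) (hy : 0 ≤ y) :
    |Real.exp (-x) - Real.exp (-y)| ≤ |x - y| := by
  have key : ∀ u v : ℝ, 0 ≤ u → u ≤ v → Real.exp (-u) - Real.exp (-v) ≤ v - u := by
    intro u v hu huv
    have h1 := Real.add_one_le_exp (u - v)
    have h2 : Real.exp (-u) ≤ 1 := Real.exp_le_one_iff.mpr (by linarith)
    have h3 : Real.exp (-u) * Real.exp (u - v) = Real.exp (-v) := by
      rw [← Real.exp_add]; ring_nf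
    have h4 := Real.exp_nonneg (-u)
    nlinarith
  rcases le_total x y with h | h
  · rw [abs_of_nonpos (by linarith : x - y ≤ 0),
      abs_of_nonneg (sub_nonneg.mpr (Real.exp_le_exp.mpr (by linarith : -y ≤ -x)))]
    have := key x y hx h; linarith
  · rw [abs_of_nonneg (by linarith : 0 ≤ x - y),
      abs_of_nonpos (sub_nonpos.mpr (Real.exp_le_exp.mpr (by linarith : -x ≤ -y)))]
    have := key y x hy h; linarith

/-- Lipschitz stability of the exponential metric reconstruction:
for `|α(r)|, |β(r)| ≤ L r` on `(0,b]` and `G_α(r) = exp(-∫_r^b α²/s ds)`,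
`|G_α(r) - G_β(r)| ≤ 2L ∫_0^b |α - β|`. -/
theorem stmt10 (b L : ℝ) (hb : 0 < b) (hL : 0 ≤ L) (α β : ℝ → ℝ)
    (hαc : ContinuousOn α (Set.Ioc 0 b)) (hβc : ContinuousOn β (Set.Ioc 0 b))
    (hαb : ∀ r ∈ Set.Ioc 0 b, |α r| ≤ L * r)
    (hβb : ∀ r ∈ Set.Ioc 0 b, |β r| ≤ L * r) :
    ∀ r ∈ Set.Ioc 0 b,
      |Real.exp (-(∫ s in r..b, (α s) ^ 2 / s)) -
        Real.exp (-(∫ s in r..b, (β s) ^ 2 / s))|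
        ≤ 2 * L * ∫ s in (0:ℝ)..b, |α s - β s| := by
  intro r hr
  obtain ⟨hr0, hrb⟩ := hr
  have hsub : Set.Icc r b ⊆ Set.Ioc 0 b := fun s hs => ⟨lt_of_lt_of_le hr0 hs.1, hs.2⟩
  have huIcc : Set.uIcc r b = Set.Icc r b := Set.uIcc_of_le hrb
  have hcα : ContinuousOn (fun s => (α s) ^ 2 / s) (Set.Icc r b) := by
    apply ((hαc.mono hsub).pow 2).div continuousOn_id
    intro s hs; exact ne_of_gt (lt_of_lt_of_le hr0 hs.1)
  have hcβ : ContinuousOn (fun s => (β s) ^ 2 / s) (Set.Icc r b) := by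
    apply ((hβc.mono hsub).pow 2).div continuousOn_id
    intro s hs; exact ne_of_gt (lt_of_lt_of_le hr0 hs.1)
  have hiα : IntervalIntegrable (fun s => (α s) ^ 2 / s) volume r b :=
    (huIcc ▸ hcα).intervalIntegrable
  have hiβ : IntervalIntegrable (fun s => (β s) ^ 2 / s) volume r b :=
    (huIcc ▸ hcβ).intervalIntegrable
  have hIα : 0 ≤ ∫ s in r..b, (α s) ^ 2 / s := by
    apply intervalIntegral.integral_nonneg hrb
    intro s hs
    exact div_nonneg (sq_nonneg _) (le_of_lt (lt_of_lt_of_le hr0 hs.1))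
  have hIβ : 0 ≤ ∫ s in r..b, (β s) ^ 2 / s := by
    apply intervalIntegral.integral_nonneg hrb
    intro s hs
    exact div_nonneg (sq_nonneg _) (le_of_lt (lt_of_lt_of_le hr0 hs.1))
  have step1 := exp_neg_lipschitz _ _ hIα hIβ
  -- integrability of |α - β| on Ioc 0 b
  have hmeas : AEStronglyMeasurable (fun s => |α s - β s|) (volume.restrict (Set.Ioc 0 b)) :=
    ((hαc.sub hβc).abs).aestronglyMeasurable measurableSet_Ioc
  have hbound : ∀ᵐ s ∂(volume.restrict (Set.Ioc 0 b)), ‖|α s - β s|‖ ≤ 2 * L * b := by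
    filter_upwards [ae_restrict_mem measurableSet_Ioc] with s hs
    have h1 := hαb s hs
    have h2 := hβb s hs
    have hsb : s ≤ b := hs.2
    rw [Real.norm_eq_abs, abs_abs]
    calc |α s - β s| ≤ |α s| + |β s| := abs_sub _ _
      _ ≤ L * s + L * s := add_le_add h1 h2
      _ ≤ 2 * L * b := by nlinarith
  have hint : IntegrableOn (fun s => |α s - β s|) (Set.Ioc 0 b) volume := by
    apply Integrable.mono' (g := fun _ => 2 * L * b)
      ((integrableOn_const_iff enorm_ne_top).mpr (Or.inr measure_Ioc_lt_top)) hmeas hbound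
  have hii0b : IntervalIntegrable (fun s => |α s - β s|) volume 0 b :=
    (intervalIntegrable_iff_integrableOn_Ioc_of_le hb.le).mpr hint
  have hii0r : IntervalIntegrable (fun s => |α s - β s|) volume 0 r :=
    (intervalIntegrable_iff_integrableOn_Ioc_of_le hr0.le).mpr
      (hint.mono_set (Set.Ioc_subset_Ioc_right hrb))
  have hiirb : IntervalIntegrable (fun s => |α s - β s|) volume r b :=
    (intervalIntegrable_iff_integrableOn_Ioc_of_le hrb).mpr
      (hint.mono_set (Set.Ioc_subset_Ioc_left hr0.le))
  -- estimate the difference of integrals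
  have step2 : |(∫ s in r..b, (α s) ^ 2 / s) - ∫ s in r..b, (β s) ^ 2 / s|
      ≤ ∫ s in r..b, 2 * L * |α s - β s| := by
    rw [← intervalIntegral.integral_sub hiα hiβ]
    calc |∫ s in r..b, ((α s) ^ 2 / s - (β s) ^ 2 / s)|
        ≤ ∫ s in r..b, |(α s) ^ 2 / s - (β s) ^ 2 / s| :=
          intervalIntegral.abs_integral_le_integral_abs hrb
      _ ≤ ∫ s in r..b, 2 * L * |α s - β s| := by
          apply intervalIntegral.integral_mono_on hrb (hiα.sub hiβ).abs
            (hiirb.const_mul (2 * L))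
          intro s hs
          have hs0 : 0 < s := lt_of_lt_of_le hr0 hs.1
          have h1 := hαb s (hsub hs)
          have h2 := hβb s (hsub hs)
          have key : |(α s) ^ 2 - (β s) ^ 2| ≤ 2 * L * s * |α s - β s| := by
            have : (α s) ^ 2 - (β s) ^ 2 = (α s + β s) * (α s - β s) := by ring
            rw [this, abs_mul]
            have : |α s + β s| ≤ 2 * L * s := by
              calc |α s + β s| ≤ |α s| + |β s| := abs_add_le _ _
                _ ≤ 2 * L * s := by linarith
            exact mul_le_mul_of_nonneg_right this (abs_nonneg _)
          have heq : |(α s) ^ 2 / s - (β s) ^ 2 / s| = |(α s) ^ 2 - (β s) ^ 2| / s := by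
            rw [div_sub_div_same, abs_div, abs_of_pos hs0]
          rw [heq]
          rw [div_le_iff₀ hs0]
          calc |(α s) ^ 2 - (β s) ^ 2| ≤ 2 * L * s * |α s - β s| := key
            _ = 2 * L * |α s - β s| * s := by ring
  have step3 : (∫ s in r..b, 2 * L * |α s - β s|) ≤ 2 * L * ∫ s in (0:ℝ)..b, |α s - β s| := by
    rw [intervalIntegral.integral_const_mul]
    apply mul_le_mul_of_nonneg_left _ (by linarith : (0:ℝ) ≤ 2 * L)
    rw [← intervalIntegral.integral_add_adjacent_intervals hii0r hiirb]
    have : 0 ≤ ∫ s in (0:ℝ)..r, |α s - β s| :=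
      intervalIntegral.integral_nonneg hr0.le (fun s _ => abs_nonneg _)
    linarith
  calc |Real.exp (-(∫ s in r..b, (α s) ^ 2 / s)) - Real.exp (-(∫ s in r..b, (β s) ^ 2 / s))|
      ≤ |(∫ s in r..b, (α s) ^ 2 / s) - ∫ s in r..b, (β s) ^ 2 / s| := step1
    _ ≤ ∫ s in r..b, 2 * L * |α s - β s| := step2
    _ ≤ 2 * L * ∫ s in (0:ℝ)..b, |α s - β s| := step3
end

section
/- Let b > 0, L ≥ 0, and let u, v : [0,b] → ℝ be continuous with radial averages ũ, ṽ satisfying |u(r) − ũ(r)| ≤ L·r and |v(r) − ṽ(r)| ≤ L·r for all r ∈ (0,b]. Define g_u(r) := exp(−∫_r^b (1/s)(u(s) − ũ(s))² ds) and g_v(r) := exp(−∫_r^b (1/s)(v(s) − ṽ(s))² ds). Then sup_{r ∈ (0,b]} |g_u(r) − g_v(r)| ≤ 6·L·√b·(∫_0^b (u(s) − v(s))² ds)^{1/2}. -/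
open MeasureTheory intervalIntegral

lemma my_CS (s : ℝ) (hs : 0 ≤ s) (f : ℝ → ℝ) (hf : ContinuousOn f (Set.Icc 0 s)) :
    (∫ t in (0:ℝ)..s, |f t|) ≤ Real.sqrt s * Real.sqrt (∫ t in (0:ℝ)..s, f t ^ 2) := by
  set μ := volume.restrict (Set.Ioc (0:ℝ) s) with hμ
  haveI : IsFiniteMeasure μ := by
    constructor
    rw [hμ, Measure.restrict_apply_univ, Real.volume_Ioc]
    exact ENNReal.ofReal_lt_top
  obtain ⟨C, hC⟩ : ∃ C, ∀ x ∈ Set.Icc (0:ℝ) s, |f x| ≤ C := by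
    obtain ⟨C, hC⟩ := (isCompact_Icc).exists_bound_of_continuousOn hf
    exact ⟨C, fun x hx => by simpa using hC x hx⟩
  have hmeas : AEStronglyMeasurable f μ :=
    (hf.mono Set.Ioc_subset_Icc_self).aestronglyMeasurable measurableSet_Ioc
  have hmem : MemLp (fun t => |f t|) (ENNReal.ofReal 2) μ := by
    have : MemLp (fun t => |f t|) ⊤ μ := by
      apply memLp_top_of_bound (hmeas.norm.congr (Filter.Eventually.of_forall fun x => (Real.norm_eq_abs (f x)))) C
      refine (ae_restrict_iff' measurableSet_Ioc).2 (Filter.Eventually.of_forall fun x hx => ?_)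
      simpa [abs_abs] using hC x (Set.Ioc_subset_Icc_self hx)
    exact this.mono_exponent le_top
  have hone : MemLp (fun _ : ℝ => (1:ℝ)) (ENNReal.ofReal 2) μ := memLp_const 1
  have hpq : Real.HolderConjugate 2 2 := by constructor <;> norm_num
  have H := integral_mul_le_Lp_mul_Lq_of_nonneg (μ := μ) hpq
    (Filter.Eventually.of_forall fun x => abs_nonneg (f x))
    (Filter.Eventually.of_forall fun _ => zero_le_one) hmem hone
  simp only [mul_one, Real.rpow_two] at H
  have e1 : (∫ t in (0:ℝ)..s, |f t|) = ∫ t, |f t| ∂μ := by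
    rw [intervalIntegral.integral_of_le hs]
  have e2 : (∫ t in (0:ℝ)..s, f t ^ 2) = ∫ t, |f t| ^ 2 ∂μ := by
    rw [intervalIntegral.integral_of_le hs]
    refine setIntegral_congr_fun measurableSet_Ioc fun x _ => ?_
    rw [sq_abs]
  have e3 : (∫ _ : ℝ, (1:ℝ) ^ 2 ∂μ) = s := by
    simp [hμ, Real.volume_Ioc, ENNReal.toReal_ofReal hs, hs]
  rw [e1, e2]
  calc ∫ t, |f t| ∂μ ≤ (∫ t, |f t| ^ 2 ∂μ) ^ (1/(2:ℝ)) * (∫ _, (1:ℝ) ^ 2 ∂μ) ^ (1/(2:ℝ)) := H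
    _ = Real.sqrt s * Real.sqrt (∫ t, |f t| ^ 2 ∂μ) := by
        rw [e3, mul_comm, Real.sqrt_eq_rpow, Real.sqrt_eq_rpow]

lemma my_exp_lip {x y : ℝ} (hx : 0 ≤ x) (hy : 0 ≤ y) :
    |Real.exp (-x) - Real.exp (-y)| ≤ |x - y| := by
  have key : ∀ a c : ℝ, 0 ≤ a → a ≤ c → Real.exp (-a) - Real.exp (-c) ≤ c - a := by
    intro a c ha hac
    have h1 : Real.exp (-c) = Real.exp (-a) * Real.exp (a - c) := by
      rw [← Real.exp_add]; ring_nf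
    have h2 : Real.exp (-a) ≤ 1 := Real.exp_le_one_iff.mpr (by linarith)
    have h3 : (a - c) + 1 ≤ Real.exp (a - c) := Real.add_one_le_exp _
    have h4 : 0 ≤ Real.exp (-a) := (Real.exp_pos _).le
    nlinarith
  rcases le_total x y with h | h
  · rw [abs_of_nonneg (sub_nonneg.2 (Real.exp_le_exp.2 (by linarith))),
      abs_of_nonpos (by linarith)]
    have := key x y hx h; linarith
  · rw [abs_of_nonpos (sub_nonpos.2 (Real.exp_le_exp.2 (by linarith))),
      abs_of_nonneg (by linarith)]
    have := key y x hy h; linarith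

/-- Metric reconstruction error estimate (Lemma 4.1(d)):
`sup_{(0,b]} |g_u - g_v| ≤ 6 L √b ‖u - v‖_{L²(0,b)}`, where
`g_u(r) = exp(-∫_r^b (1/s)(u - ũ)² ds)` and similarly for `v`. -/
theorem stmt11 (b L : ℝ) (hb : 0 < b) (hL : 0 ≤ L)
    (u v ut vt : ℝ → ℝ)
    (hu : ContinuousOn u (Set.Icc 0 b)) (hv : ContinuousOn v (Set.Icc 0 b))
    (hut : ∀ r ∈ Set.Ioc 0 b, ut r = (1 / r) * ∫ s in (0:ℝ)..r, u s)
    (hvt : ∀ r ∈ Set.Ioc 0 b, vt r = (1 / r) * ∫ s in (0:ℝ)..r, v s)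
    (hub : ∀ r ∈ Set.Ioc 0 b, |u r - ut r| ≤ L * r)
    (hvb : ∀ r ∈ Set.Ioc 0 b, |v r - vt r| ≤ L * r) :
    ∀ r ∈ Set.Ioc 0 b,
      |Real.exp (-(∫ s in r..b, (1 / s) * (u s - ut s) ^ 2)) -
        Real.exp (-(∫ s in r..b, (1 / s) * (v s - vt s) ^ 2))|
        ≤ 6 * L * Real.sqrt b * Real.sqrt (∫ s in (0:ℝ)..b, (u s - v s) ^ 2) := by
  intro r hr
  obtain ⟨hr0, hrb⟩ := hr
  set W := Real.sqrt (∫ s in (0:ℝ)..b, (u s - v s) ^ 2) with hWdef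
  have hWnn : 0 ≤ W := Real.sqrt_nonneg _
  have hwc : ContinuousOn (fun s => u s - v s) (Set.Icc 0 b) := hu.sub hv
  have hsub : Set.Icc r b ⊆ Set.Ioc 0 b := fun x hx => ⟨lt_of_lt_of_le hr0 hx.1, hx.2⟩
  have hsub' : Set.Icc r b ⊆ Set.Icc 0 b := Set.Icc_subset_Icc hr0.le le_rfl
  have huIcc : Set.uIcc r b = Set.Icc r b := Set.uIcc_of_le hrb
  have huIcc0 : Set.uIcc (0:ℝ) b = Set.Icc 0 b := Set.uIcc_of_le hb.le
  -- interval integrability of u, v on [0, s] for s ≤ b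
  have hcInt : ∀ f : ℝ → ℝ, ContinuousOn f (Set.Icc 0 b) →
      ∀ s t, 0 ≤ s → s ≤ t → t ≤ b → IntervalIntegrable f volume s t := by
    intro f hf s t hs hst htb
    apply ContinuousOn.intervalIntegrable
    rw [Set.uIcc_of_le hst]
    exact hf.mono (Set.Icc_subset_Icc hs htb)
  -- |∫_0^s (u - v)| ≤ √s * W
  have hwint : ∀ s, 0 < s → s ≤ b → |∫ t in (0:ℝ)..s, (u t - v t)| ≤ Real.sqrt s * W := by
    intro s hs hsb
    have h1 : |∫ t in (0:ℝ)..s, (u t - v t)| ≤ ∫ t in (0:ℝ)..s, |u t - v t| :=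
      intervalIntegral.abs_integral_le_integral_abs hs.le
    have h2 := my_CS s hs.le _ (hwc.mono (Set.Icc_subset_Icc le_rfl hsb))
    have h3 : (∫ t in (0:ℝ)..s, (u t - v t) ^ 2) ≤ ∫ t in (0:ℝ)..b, (u t - v t) ^ 2 := by
      apply intervalIntegral.integral_mono_interval le_rfl hs.le hsb
      · exact Filter.Eventually.of_forall fun t => sq_nonneg _
      · exact hcInt _ (hwc.pow 2) 0 b le_rfl hb.le le_rfl
    have h4 : Real.sqrt (∫ t in (0:ℝ)..s, (u t - v t) ^ 2) ≤ W := Real.sqrt_le_sqrt h3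
    calc |∫ t in (0:ℝ)..s, (u t - v t)| ≤ ∫ t in (0:ℝ)..s, |u t - v t| := h1
      _ ≤ Real.sqrt s * Real.sqrt (∫ t in (0:ℝ)..s, (u t - v t) ^ 2) := h2
      _ ≤ Real.sqrt s * W := mul_le_mul_of_nonneg_left h4 (Real.sqrt_nonneg s)
  -- pointwise bound on the integrand difference
  have hpt : ∀ s ∈ Set.Icc r b,
      |(1/s) * (u s - ut s) ^ 2 - (1/s) * (v s - vt s) ^ 2|
        ≤ 2*L*|u s - v s| + 2*L*W*(Real.sqrt s)⁻¹ := by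
    intro s hs
    have hs0 : 0 < s := lt_of_lt_of_le hr0 hs.1
    have hsIoc : s ∈ Set.Ioc 0 b := hsub hs
    have hA := hub s hsIoc
    have hB := hvb s hsIoc
    have hdiff : ut s - vt s = (1/s) * ∫ t in (0:ℝ)..s, (u t - v t) := by
      rw [hut s hsIoc, hvt s hsIoc, ← mul_sub,
        ← intervalIntegral.integral_sub (hcInt u hu 0 s le_rfl hs0.le hs.2)
          (hcInt v hv 0 s le_rfl hs0.le hs.2)]
    have hsq : Real.sqrt s * Real.sqrt s = s := Real.mul_self_sqrt hs0.le
    have hsqpos : 0 < Real.sqrt s := Real.sqrt_pos.2 hs0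
    have hItd : |ut s - vt s| ≤ W * (Real.sqrt s)⁻¹ := by
      rw [hdiff, abs_mul, abs_of_nonneg (by positivity : (0:ℝ) ≤ 1/s)]
      have h5 := hwint s hs0 hs.2
      have : (1/s) * (Real.sqrt s * W) = W * (Real.sqrt s)⁻¹ := by
        field_simp
        nlinarith [hsq]
      calc (1/s) * |∫ t in (0:ℝ)..s, (u t - v t)|
          ≤ (1/s) * (Real.sqrt s * W) := mul_le_mul_of_nonneg_left h5 (by positivity)
        _ = W * (Real.sqrt s)⁻¹ := this
    have e : (1/s) * (u s - ut s) ^ 2 - (1/s) * (v s - vt s) ^ 2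
        = (1/s) * (((u s - ut s) + (v s - vt s)) * ((u s - ut s) - (v s - vt s))) := by ring
    have hApB : |(u s - ut s) + (v s - vt s)| ≤ 2 * L * s := by
      calc |(u s - ut s) + (v s - vt s)| ≤ |u s - ut s| + |v s - vt s| := abs_add_le _ _
        _ ≤ 2 * L * s := by linarith
    have hAmB : |(u s - ut s) - (v s - vt s)| ≤ |u s - v s| + W * (Real.sqrt s)⁻¹ := by
      have : (u s - ut s) - (v s - vt s) = (u s - v s) - (ut s - vt s) := by ring
      rw [this]
      calc |(u s - v s) - (ut s - vt s)| ≤ |u s - v s| + |ut s - vt s| := abs_sub _ _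
        _ ≤ |u s - v s| + W * (Real.sqrt s)⁻¹ := by linarith
    rw [e, abs_mul, abs_mul, abs_of_nonneg (by positivity : (0:ℝ) ≤ 1/s)]
    calc (1/s) * (|(u s - ut s) + (v s - vt s)| * |(u s - ut s) - (v s - vt s)|)
        ≤ (1/s) * ((2 * L * s) * (|u s - v s| + W * (Real.sqrt s)⁻¹)) := by
          apply mul_le_mul_of_nonneg_left _ (by positivity : (0:ℝ) ≤ 1/s)
          exact mul_le_mul hApB hAmB (abs_nonneg _) (by positivity)
      _ = 2*L*|u s - v s| + 2*L*W*(Real.sqrt s)⁻¹ := by field_simp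
  -- continuity of ut, vt on Icc r b
  have hPu : ContinuousOn (fun x => ∫ t in (0:ℝ)..x, u t) (Set.Icc 0 b) := by
    have h := intervalIntegral.continuousOn_primitive_interval (a := 0) (b := b) (μ := volume)
      (f := u) (by rw [huIcc0]; exact hu.integrableOn_Icc)
    rwa [huIcc0] at h
  have hPv : ContinuousOn (fun x => ∫ t in (0:ℝ)..x, v t) (Set.Icc 0 b) := by
    have h := intervalIntegral.continuousOn_primitive_interval (a := 0) (b := b) (μ := volume)
      (f := v) (by rw [huIcc0]; exact hv.integrableOn_Icc)
    rwa [huIcc0] at h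
  have hinv : ∀ x ∈ Set.Icc r b, x ≠ 0 := fun x hx => (lt_of_lt_of_le hr0 hx.1).ne'
  have hUt : ContinuousOn ut (Set.Icc r b) := by
    refine ContinuousOn.congr (f := fun x => (1/x) * ∫ t in (0:ℝ)..x, u t) ?_ ?_
    · exact (continuousOn_const.div continuousOn_id hinv).mul (hPu.mono hsub')
    · exact fun x hx => hut x (hsub hx)
  have hVt : ContinuousOn vt (Set.Icc r b) := by
    refine ContinuousOn.congr (f := fun x => (1/x) * ∫ t in (0:ℝ)..x, v t) ?_ ?_
    · exact (continuousOn_const.div continuousOn_id hinv).mul (hPv.mono hsub')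
    · exact fun x hx => hvt x (hsub hx)
  have hfu : ContinuousOn (fun s => (1/s) * (u s - ut s)^2) (Set.Icc r b) :=
    (continuousOn_const.div continuousOn_id hinv).mul (((hu.mono hsub').sub hUt).pow 2)
  have hfv : ContinuousOn (fun s => (1/s) * (v s - vt s)^2) (Set.Icc r b) :=
    (continuousOn_const.div continuousOn_id hinv).mul (((hv.mono hsub').sub hVt).pow 2)
  have hfuI : IntervalIntegrable (fun s => (1/s) * (u s - ut s)^2) volume r b :=
    ContinuousOn.intervalIntegrable (by rw [huIcc]; exact hfu)
  have hfvI : IntervalIntegrable (fun s => (1/s) * (v s - vt s)^2) volume r b :=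
    ContinuousOn.intervalIntegrable (by rw [huIcc]; exact hfv)
  have hX : 0 ≤ ∫ s in r..b, (1/s) * (u s - ut s)^2 :=
    intervalIntegral.integral_nonneg hrb fun x hx => by
      have : 0 < x := lt_of_lt_of_le hr0 hx.1
      positivity
  have hY : 0 ≤ ∫ s in r..b, (1/s) * (v s - vt s)^2 :=
    intervalIntegral.integral_nonneg hrb fun x hx => by
      have : 0 < x := lt_of_lt_of_le hr0 hx.1
      positivity
  have hinvsqrt_cont : ContinuousOn (fun s : ℝ => (Real.sqrt s)⁻¹) (Set.Icc r b) :=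
    Real.continuous_sqrt.continuousOn.inv₀ fun x hx =>
      (Real.sqrt_pos.2 (lt_of_lt_of_le hr0 hx.1)).ne'
  have hIsqrt : (∫ s in r..b, (Real.sqrt s)⁻¹) = 2*Real.sqrt b - 2*Real.sqrt r := by
    have hd : ∀ x ∈ Set.uIcc r b, HasDerivAt (fun y => 2 * Real.sqrt y) (Real.sqrt x)⁻¹ x := by
      intro x hx
      rw [huIcc] at hx
      have hx0 : 0 < x := lt_of_lt_of_le hr0 hx.1
      have hsqpos : 0 < Real.sqrt x := Real.sqrt_pos.2 hx0
      have h := (Real.hasDerivAt_sqrt hx0.ne').const_mul (2:ℝ)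
      convert h using 1
      · rfl
      · rfl
      · ring
    have h2 := intervalIntegral.integral_eq_sub_of_hasDerivAt hd
      (ContinuousOn.intervalIntegrable (by rw [huIcc]; exact hinvsqrt_cont))
    simpa using h2
  have hI1 : IntervalIntegrable (fun s => 2*L*|u s - v s|) volume r b :=
    ContinuousOn.intervalIntegrable (by
      rw [huIcc]; exact continuousOn_const.mul ((hwc.mono hsub').abs))
  have hI2 : IntervalIntegrable (fun s => 2*L*W*(Real.sqrt s)⁻¹) volume r b :=
    ContinuousOn.intervalIntegrable (by
      rw [huIcc]; exact continuousOn_const.mul hinvsqrt_cont)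
  have step4 : (∫ s in r..b, |u s - v s|) ≤ Real.sqrt b * W := by
    have m : (∫ s in r..b, |u s - v s|) ≤ ∫ s in (0:ℝ)..b, |u s - v s| :=
      intervalIntegral.integral_mono_interval hr0.le hrb le_rfl
        (Filter.Eventually.of_forall fun t => abs_nonneg _)
        (hcInt _ hwc.abs 0 b le_rfl hb.le le_rfl)
    exact m.trans (my_CS b hb.le _ hwc)
  have hXY : |(∫ s in r..b, (1/s) * (u s - ut s)^2) - (∫ s in r..b, (1/s) * (v s - vt s)^2)|
      ≤ 6 * L * Real.sqrt b * W := by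
    rw [← intervalIntegral.integral_sub hfuI hfvI]
    have step1 : |∫ s in r..b, ((1/s) * (u s - ut s)^2 - (1/s) * (v s - vt s)^2)|
        ≤ ∫ s in r..b, |(1/s) * (u s - ut s)^2 - (1/s) * (v s - vt s)^2| :=
      intervalIntegral.abs_integral_le_integral_abs hrb
    have step2 : (∫ s in r..b, |(1/s) * (u s - ut s)^2 - (1/s) * (v s - vt s)^2|)
        ≤ ∫ s in r..b, (2*L*|u s - v s| + 2*L*W*(Real.sqrt s)⁻¹) :=
      intervalIntegral.integral_mono_on hrb (hfuI.sub hfvI).abs (hI1.add hI2) hpt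
    have step3 : (∫ s in r..b, (2*L*|u s - v s| + 2*L*W*(Real.sqrt s)⁻¹))
        = 2*L*(∫ s in r..b, |u s - v s|) + 2*L*W*(2*Real.sqrt b - 2*Real.sqrt r) := by
      rw [intervalIntegral.integral_add hI1 hI2, intervalIntegral.integral_const_mul,
        intervalIntegral.integral_const_mul, hIsqrt]
    calc |∫ s in r..b, ((1/s) * (u s - ut s)^2 - (1/s) * (v s - vt s)^2)|
        ≤ ∫ s in r..b, |(1/s) * (u s - ut s)^2 - (1/s) * (v s - vt s)^2| := step1
      _ ≤ ∫ s in r..b, (2*L*|u s - v s| + 2*L*W*(Real.sqrt s)⁻¹) := step2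
      _ = 2*L*(∫ s in r..b, |u s - v s|) + 2*L*W*(2*Real.sqrt b - 2*Real.sqrt r) := step3
      _ ≤ 6 * L * Real.sqrt b * W := by
          nlinarith [Real.sqrt_nonneg r, Real.sqrt_nonneg b,
            mul_nonneg (mul_nonneg hL hWnn) (Real.sqrt_nonneg r),
            mul_le_mul_of_nonneg_left step4 (by positivity : (0:ℝ) ≤ 2*L)]
  calc |Real.exp (-(∫ s in r..b, (1 / s) * (u s - ut s) ^ 2)) -
        Real.exp (-(∫ s in r..b, (1 / s) * (v s - vt s) ^ 2))|
      ≤ |(∫ s in r..b, (1/s) * (u s - ut s)^2) - (∫ s in r..b, (1/s) * (v s - vt s)^2)| :=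
        my_exp_lip hX hY
    _ ≤ 6 * L * Real.sqrt b * W := hXY
end

section
/- Let b > 0 and let u : [0,b] → ℝ be continuous with radial average ũ satisfying |u(r) − ũ(r)| ≤ L·r for all r ∈ (0,b] and some L ≥ 0. Define g(r) := exp(−∫_r^b (1/s)(u(s) − ũ(s))² ds) on [0,b] and let g̃ be the radial average of g. Then ∫_0^b g̃'(r)·(u(r)² − 2·u(r)·ũ(r)) dr ≤ 1 − g(0). -/
open MeasureTheory intervalIntegral

/-- Auxiliary: a function a.e. bounded and a.e. strongly measurable on `Ioc a b`
is interval integrable on `[a,b]`. -/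
lemma aux_intervalIntegrable {a b : ℝ} (hab : a ≤ b) {f : ℝ → ℝ}
    (hm : AEStronglyMeasurable f (volume.restrict (Set.Ioc a b))) {K : ℝ}
    (hbd : ∀ᵐ x ∂(volume.restrict (Set.Ioc a b)), ‖f x‖ ≤ K) :
    IntervalIntegrable f volume a b := by
  rw [intervalIntegrable_iff_integrableOn_Ioc_of_le hab]
  exact Integrable.mono' ((integrableOn_const measure_Ioc_lt_top.ne)) hm hbd

/-- Auxiliary: `exp` is 1-Lipschitz on the nonpositive reals. -/
lemma aux_exp_lipschitz {x y : ℝ} (hx : 0 ≤ x) (hxy : x ≤ y) :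
    Real.exp (-x) - Real.exp (-y) ≤ y - x := by
  have h1 : Real.exp (-x) ≤ 1 := Real.exp_le_one_iff.2 (by linarith)
  have h2 : (x - y) + 1 ≤ Real.exp (x - y) := Real.add_one_le_exp _
  have h3 : Real.exp (-x) * Real.exp (x - y) = Real.exp (-y) := by
    rw [← Real.exp_add]; ring_nf
  nlinarith [Real.exp_pos (-x), Real.exp_pos (x - y)]

/-- Volume-term bound in the L²-stability proof (Theorem 3.1):
`∫_0^b g̃'(r) (u² - 2 u ũ) dr ≤ 1 - g(0)`, where
`g(r) = exp(-∫_r^b (1/s)(u - ũ)² ds)` and `g̃` is the radial average of `g`. -/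
theorem stmt12 (b L : ℝ) (hb : 0 < b) (hL : 0 ≤ L)
    (u ut g gt : ℝ → ℝ)
    (hu : ContinuousOn u (Set.Icc 0 b))
    (hut : ∀ r ∈ Set.Ioc 0 b, ut r = (1 / r) * ∫ s in (0:ℝ)..r, u s)
    (hbound : ∀ r ∈ Set.Ioc 0 b, |u r - ut r| ≤ L * r)
    (hg : ∀ r ∈ Set.Icc 0 b,
      g r = Real.exp (-(∫ s in r..b, (1 / s) * (u s - ut s) ^ 2)))
    (hgt : ∀ r ∈ Set.Ioc 0 b, gt r = (1 / r) * ∫ s in (0:ℝ)..r, g s) :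
    ∫ r in (0:ℝ)..b, deriv gt r * ((u r) ^ 2 - 2 * u r * ut r) ≤ 1 - g 0 := by
  have hIcc : Set.Ioc (0:ℝ) b ⊆ Set.Icc 0 b := Set.Ioc_subset_Icc_self
  have hIoo : Set.Ioo (0:ℝ) b ⊆ Set.Ioc 0 b := Set.Ioo_subset_Ioc_self
  -- the explicit radial average of u
  set utf : ℝ → ℝ := fun r => (1 / r) * ∫ s in (0:ℝ)..r, u s with hutf_def
  have hut_eq : ∀ r ∈ Set.Ioc 0 b, ut r = utf r := fun r hr => hut r hr
  -- continuity of utf on Ioc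
  have huint : IntegrableOn u (Set.Icc 0 b) := hu.integrableOn_Icc
  have hUcont : ContinuousOn (fun r => ∫ s in (0:ℝ)..r, u s) (Set.Icc 0 b) := by
    have := intervalIntegral.continuousOn_primitive_interval
      (f := u) (a := (0:ℝ)) (b := b) (μ := volume)
      (by rwa [Set.uIcc_of_le hb.le])
    rwa [Set.uIcc_of_le hb.le] at this
  have hutf_cont : ContinuousOn utf (Set.Ioc 0 b) := by
    apply ContinuousOn.mul
    · exact continuousOn_const.div continuousOn_id (fun x hx => ne_of_gt hx.1)
    · exact hUcont.mono hIcc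
  -- the integrand h
  set h : ℝ → ℝ := fun s => (1 / s) * (u s - utf s) ^ 2 with hh_def
  have hh0 : h 0 = 0 := by simp [hh_def]
  have hh_nonneg : ∀ s, 0 ≤ s → 0 ≤ h s := fun s hs =>
    mul_nonneg (by positivity) (sq_nonneg _)
  have hh_le : ∀ s ∈ Set.Ioc 0 b, h s ≤ L ^ 2 * s := by
    intro s hs
    have hb' := hbound s hs
    rw [hut_eq s hs] at hb'
    have h1 : (u s - utf s) ^ 2 ≤ (L * s) ^ 2 := by
      rw [← sq_abs]
      exact pow_le_pow_left₀ (abs_nonneg _) hb' 2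
    have hs0 : 0 < s := hs.1
    calc h s ≤ (1 / s) * (L * s) ^ 2 := by
          exact mul_le_mul_of_nonneg_left h1 (by positivity)
      _ = L ^ 2 * s := by field_simp
  have hh_le' : ∀ s, s ∈ Set.Icc 0 b → ∀ r, s ≤ r → 0 ≤ r → h s ≤ L ^ 2 * r := by
    intro s hs r hsr hr0
    rcases eq_or_lt_of_le hs.1 with h0 | h0
    · rw [← h0, hh0]; positivity
    · exact (hh_le s ⟨h0, hs.2⟩).trans
        (mul_le_mul_of_nonneg_left hsr (by positivity))
  have hh_cont : ContinuousOn h (Set.Ioc 0 b) := by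
    apply ContinuousOn.mul
    · exact continuousOn_const.div continuousOn_id (fun x hx => ne_of_gt hx.1)
    · exact (((hu.mono hIcc).sub hutf_cont).pow 2)
  -- integrability of h
  have hh_meas : AEStronglyMeasurable h (volume.restrict (Set.Ioc 0 b)) :=
    hh_cont.aestronglyMeasurable measurableSet_Ioc
  have hh_II : IntervalIntegrable h volume 0 b := by
    apply aux_intervalIntegrable hb.le hh_meas (K := L ^ 2 * b)
    filter_upwards [ae_restrict_mem measurableSet_Ioc] with s hs
    rw [Real.norm_eq_abs, abs_of_nonneg (hh_nonneg s hs.1.le)]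
    exact hh_le' s (hIcc hs) b hs.2 hb.le
  have hh_II' : ∀ x y, x ∈ Set.Icc 0 b → y ∈ Set.Icc 0 b →
      IntervalIntegrable h volume x y := by
    intro x y hx hy
    apply hh_II.mono_set
    rw [Set.uIcc_of_le hb.le]
    exact Set.uIcc_subset_Icc hx hy
  -- the function F
  set F : ℝ → ℝ := fun r => ∫ s in r..b, h s with hF_def
  have hF_split : ∀ x y, x ∈ Set.Icc 0 b → y ∈ Set.Icc 0 b → x ≤ y →
      F x - F y = ∫ s in x..y, h s := by
    intro x y hx hy hxy
    have := intervalIntegral.integral_add_adjacent_intervals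
      (hh_II' x y hx hy) (hh_II' y b hy (Set.right_mem_Icc.2 hb.le))
    simp only [hF_def]
    linarith [this]
  have hF_nonneg : ∀ r ∈ Set.Icc 0 b, 0 ≤ F r := by
    intro r hr
    exact intervalIntegral.integral_nonneg hr.2 (fun s hs => hh_nonneg s (hr.1.trans hs.1))
  have hF_mono : ∀ x y, x ∈ Set.Icc 0 b → y ∈ Set.Icc 0 b → x ≤ y → F y ≤ F x := by
    intro x y hx hy hxy
    have h1 := hF_split x y hx hy hxy
    have h2 : 0 ≤ ∫ s in x..y, h s :=
      intervalIntegral.integral_nonneg hxy (fun s hs => hh_nonneg s (hx.1.trans hs.1))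
    linarith
  have hF_lip : ∀ x y, x ∈ Set.Icc 0 b → y ∈ Set.Icc 0 b → x ≤ y →
      F x - F y ≤ L ^ 2 * y * (y - x) := by
    intro x y hx hy hxy
    rw [hF_split x y hx hy hxy]
    calc (∫ s in x..y, h s) ≤ ∫ _s in x..y, L ^ 2 * y := by
          apply intervalIntegral.integral_mono_on hxy (hh_II' x y hx hy)
            intervalIntegrable_const
          intro s hs
          exact hh_le' s ⟨hx.1.trans hs.1, hs.2.trans hy.2⟩ y hs.2 (hx.1.trans hxy)
      _ = L ^ 2 * y * (y - x) := by simp; ring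
  have hF_cont : ContinuousOn F (Set.Icc 0 b) := by
    have hc : ContinuousOn (fun x => ∫ s in b..x, h s) (Set.Icc 0 b) := by
      have := intervalIntegral.continuousOn_primitive_interval'
        (f := h) (μ := volume) (b₁ := (0:ℝ)) (b₂ := b) (a := b) hh_II
        (by rw [Set.uIcc_of_le hb.le]; exact Set.right_mem_Icc.2 hb.le)
      rwa [Set.uIcc_of_le hb.le] at this
    have : ContinuousOn (fun x => -∫ s in b..x, h s) (Set.Icc 0 b) := hc.neg
    apply this.congr
    intro x _
    simp [hF_def, intervalIntegral.integral_symm b x]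
  -- rewrite g via F
  have hg_eq : ∀ r ∈ Set.Icc 0 b, g r = Real.exp (-F r) := by
    intro r hr
    rw [hg r hr]
    congr 1
    rw [neg_inj]
    apply intervalIntegral.integral_congr
    intro s hs
    rw [Set.uIcc_of_le hr.2] at hs
    rcases eq_or_lt_of_le (hr.1.trans hs.1) with h0 | h0
    · simp [hh_def, ← h0]
    · simp only [hh_def]
      rw [hut_eq s ⟨h0, hs.2⟩]
  -- g properties
  have hg_pos : ∀ r ∈ Set.Icc 0 b, 0 < g r := by
    intro r hr; rw [hg_eq r hr]; exact Real.exp_pos _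
  have hg_le_one : ∀ r ∈ Set.Icc 0 b, g r ≤ 1 := by
    intro r hr; rw [hg_eq r hr]
    exact Real.exp_le_one_iff.2 (by linarith [hF_nonneg r hr])
  have hg_mono : ∀ x y, x ∈ Set.Icc 0 b → y ∈ Set.Icc 0 b → x ≤ y → g x ≤ g y := by
    intro x y hx hy hxy
    rw [hg_eq x hx, hg_eq y hy]
    exact Real.exp_le_exp.2 (by linarith [hF_mono x y hx hy hxy])
  have hg_lip : ∀ x y, x ∈ Set.Icc 0 b → y ∈ Set.Icc 0 b → x ≤ y →
      g y - g x ≤ L ^ 2 * y * (y - x) := by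
    intro x y hx hy hxy
    rw [hg_eq x hx, hg_eq y hy]
    calc Real.exp (-F y) - Real.exp (-F x) ≤ F x - F y :=
          aux_exp_lipschitz (hF_nonneg y hy) (by linarith [hF_mono x y hx hy hxy])
      _ ≤ L ^ 2 * y * (y - x) := hF_lip x y hx hy hxy
  have hg_cont : ContinuousOn g (Set.Icc 0 b) := by
    apply ContinuousOn.congr (Real.continuous_exp.comp_continuousOn hF_cont.neg)
    intro r hr
    exact hg_eq r hr
  have hg_II : ∀ x y, x ∈ Set.Icc 0 b → y ∈ Set.Icc 0 b →
      IntervalIntegrable g volume x y := by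
    intro x y hx hy
    apply ContinuousOn.intervalIntegrable
    exact hg_cont.mono (Set.uIcc_subset_Icc hx hy)
  -- derivative of g
  have hg_deriv : ∀ r ∈ Set.Ioo 0 b, HasDerivAt g (g r * h r) r := by
    intro r hr
    have hrI : r ∈ Set.Icc 0 b := Set.Ioo_subset_Icc_self hr
    have hmeas : StronglyMeasurableAtFilter h (nhds r) volume :=
      (hh_cont.mono hIoo).stronglyMeasurableAtFilter isOpen_Ioo r hr
    have hcontat : ContinuousAt h r :=
      (hh_cont.mono hIoo).continuousAt (isOpen_Ioo.mem_nhds hr)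
    have hF' : HasDerivAt F (-(h r)) r :=
      intervalIntegral.integral_hasDerivAt_left
        (hh_II' r b hrI (Set.right_mem_Icc.2 hb.le)) hmeas hcontat
    have hexp : HasDerivAt (fun x => Real.exp (-F x)) (Real.exp (-F r) * h r) r := by
      have := (hF'.neg).exp
      simpa using this
    have heq : g =ᶠ[nhds r] fun x => Real.exp (-F x) :=
      Filter.eventuallyEq_of_mem (isOpen_Ioo.mem_nhds hr)
        (fun x hx => hg_eq x (Set.Ioo_subset_Icc_self hx))
    rw [hg_eq r hrI]
    exact hexp.congr_of_eventuallyEq heq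
  -- derivative of gt
  have hgt_deriv : ∀ r ∈ Set.Ioo 0 b, HasDerivAt gt ((g r - gt r) / r) r := by
    intro r hr
    have hrI : r ∈ Set.Icc 0 b := Set.Ioo_subset_Icc_self hr
    have hG' : HasDerivAt (fun x => ∫ s in (0:ℝ)..x, g s) (g r) r := by
      apply intervalIntegral.integral_hasDerivAt_right
        (hg_II 0 r (Set.left_mem_Icc.2 hb.le) hrI)
      · exact (hg_cont.mono (Set.Ioo_subset_Icc_self)).stronglyMeasurableAtFilter
          isOpen_Ioo r hr
      · exact (hg_cont.mono (Set.Ioo_subset_Icc_self)).continuousAt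
          (isOpen_Ioo.mem_nhds hr)
    have hdiv : HasDerivAt (fun x => (∫ s in (0:ℝ)..x, g s) / x)
        ((g r * r - (∫ s in (0:ℝ)..r, g s) * 1) / r ^ 2) r :=
      hG'.div (hasDerivAt_id r) (ne_of_gt hr.1)
    have heq : gt =ᶠ[nhds r] fun x => (∫ s in (0:ℝ)..x, g s) / x := by
      apply Filter.eventuallyEq_of_mem (isOpen_Ioo.mem_nhds hr)
      intro x hx
      rw [hgt x (hIoo hx), one_div, inv_mul_eq_div]
    have hval : (g r * r - (∫ s in (0:ℝ)..r, g s) * 1) / r ^ 2 = (g r - gt r) / r := by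
      rw [hgt r (hIoo hr)]
      have hr0 : r ≠ 0 := ne_of_gt hr.1
      rw [mul_one, div_eq_div_iff (pow_ne_zero 2 hr0) hr0]
      field_simp
    rw [← hval]
    exact hdiv.congr_of_eventuallyEq heq
  -- bounds on gt
  have hgt_nonneg : ∀ r ∈ Set.Ioo 0 b, 0 ≤ gt r := by
    intro r hr
    rw [hgt r (hIoo hr)]
    apply mul_nonneg (one_div_nonneg.2 hr.1.le)
    exact intervalIntegral.integral_nonneg hr.1.le
      (fun s hs => (hg_pos s ⟨hs.1, hs.2.trans hr.2.le⟩).le)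
  have hgt_le : ∀ r ∈ Set.Ioo 0 b, gt r ≤ g r := by
    intro r hr
    rw [hgt r (hIoo hr)]
    have h1 : (∫ s in (0:ℝ)..r, g s) ≤ r * g r := by
      have h1' : (∫ s in (0:ℝ)..r, g s) ≤ ∫ _s in (0:ℝ)..r, g r := by
        apply intervalIntegral.integral_mono_on hr.1.le
          (hg_II 0 r (Set.left_mem_Icc.2 hb.le) (Set.Ioo_subset_Icc_self hr))
          intervalIntegrable_const
        intro s hs
        exact hg_mono s r ⟨hs.1, hs.2.trans hr.2.le⟩ (Set.Ioo_subset_Icc_self hr) hs.2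
      simpa using h1'
    calc (1 / r) * ∫ s in (0:ℝ)..r, g s ≤ (1 / r) * (r * g r) :=
          mul_le_mul_of_nonneg_left h1 (one_div_nonneg.2 hr.1.le)
      _ = g r := by
          have hr0 : r ≠ 0 := hr.1.ne'
          field_simp
  have hgt_lower : ∀ r ∈ Set.Ioo 0 b, g r - L ^ 2 * r ^ 2 ≤ gt r := by
    intro r hr
    have hrI : r ∈ Set.Icc 0 b := Set.Ioo_subset_Icc_self hr
    rw [hgt r (hIoo hr)]
    have h1 : (∫ _s in (0:ℝ)..r, (g r - L ^ 2 * r ^ 2)) ≤ ∫ s in (0:ℝ)..r, g s := by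
      apply intervalIntegral.integral_mono_on hr.1.le intervalIntegrable_const
        (hg_II 0 r (Set.left_mem_Icc.2 hb.le) hrI)
      intro s hs
      have hsI : s ∈ Set.Icc 0 b := ⟨hs.1, hs.2.trans hr.2.le⟩
      have h5 := hg_lip s r hsI hrI hs.2
      nlinarith [h5, mul_nonneg (mul_nonneg (sq_nonneg L) hr.1.le) hs.1]
    have h2 : (∫ _s in (0:ℝ)..r, (g r - L ^ 2 * r ^ 2)) = (g r - L ^ 2 * r ^ 2) * r := by
      simp; ring
    rw [h2] at h1
    rw [one_div, inv_mul_eq_div, le_div_iff₀ hr.1]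
    exact h1
  -- the derivative bound
  have hderiv_bound : ∀ r ∈ Set.Ioo 0 b,
      0 ≤ deriv gt r ∧ deriv gt r ≤ L ^ 2 * r ∧ deriv gt r ≤ g r / r := by
    intro r hr
    have hd := (hgt_deriv r hr).deriv
    refine ⟨?_, ?_, ?_⟩
    · rw [hd]
      exact div_nonneg (by linarith [hgt_le r hr]) hr.1.le
    · rw [hd, div_le_iff₀ hr.1]
      nlinarith [hgt_lower r hr]
    · rw [hd]
      exact (div_le_div_iff_of_pos_right hr.1).2 (by linarith [hgt_nonneg r hr])
  -- global bounds on u and ut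
  obtain ⟨M, hM⟩ := (isCompact_Icc (a := (0:ℝ)) (b := b)).exists_bound_of_continuousOn hu
  have hM0 : 0 ≤ M := le_trans (norm_nonneg _) (hM 0 (Set.left_mem_Icc.2 hb.le))
  have hMu : ∀ r ∈ Set.Icc 0 b, |u r| ≤ M := by
    intro r hr; rw [← Real.norm_eq_abs]; exact hM r hr
  have hMut : ∀ r ∈ Set.Ioc 0 b, |ut r| ≤ M + L * b := by
    intro r hr
    have h1 := hbound r hr
    have h2 := hMu r (hIcc hr)
    have h3 : L * r ≤ L * b := mul_le_mul_of_nonneg_left hr.2 hL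
    calc |ut r| = |u r - (u r - ut r)| := by ring_nf
      _ ≤ |u r| + |u r - ut r| := abs_sub _ _
      _ ≤ M + L * b := by linarith
  -- integrability of the LHS integrand
  set ψ : ℝ → ℝ := fun r => deriv gt r * ((u r) ^ 2 - 2 * u r * ut r) with hψ_def
  set φ : ℝ → ℝ := fun r => g r * h r with hφ_def
  have hrestr : volume.restrict (Set.Ioo 0 b) = volume.restrict (Set.Ioc (0:ℝ) b) :=
    Measure.restrict_congr_set Ioo_ae_eq_Ioc
  have hae_Ioo : ∀ᵐ r ∂(volume.restrict (Set.Ioc (0:ℝ) b)), r ∈ Set.Ioo 0 b := by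
    rw [← hrestr]
    exact ae_restrict_mem measurableSet_Ioo
  have hψ_meas : AEStronglyMeasurable ψ (volume.restrict (Set.Ioc (0:ℝ) b)) := by
    have hdm : AEMeasurable (deriv gt) (volume.restrict (Set.Ioc (0:ℝ) b)) :=
      (measurable_deriv gt).aemeasurable
    have hum : AEMeasurable u (volume.restrict (Set.Ioc (0:ℝ) b)) :=
      (hu.mono hIcc).aemeasurable measurableSet_Ioc
    have hutm : AEMeasurable ut (volume.restrict (Set.Ioc (0:ℝ) b)) := by
      apply AEMeasurable.congr (hutf_cont.aemeasurable measurableSet_Ioc)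
      filter_upwards [ae_restrict_mem measurableSet_Ioc] with r hr
      exact (hut_eq r hr).symm
    exact (hdm.mul (((hum.pow_const 2)).sub
      ((aemeasurable_const.mul hum).mul hutm))).aestronglyMeasurable
  have hψ_II : IntervalIntegrable ψ volume 0 b := by
    apply aux_intervalIntegrable hb.le hψ_meas
      (K := (L ^ 2 * b) * (M ^ 2 + 2 * M * (M + L * b)))
    filter_upwards [ae_restrict_mem measurableSet_Ioc, hae_Ioo] with r hr hr'
    obtain ⟨hd0, hd1, _⟩ := hderiv_bound r hr'
    have h1 := hMu r (hIcc hr)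
    have h2 := hMut r hr
    have h3 : |deriv gt r| ≤ L ^ 2 * b := by
      rw [abs_of_nonneg hd0]
      calc deriv gt r ≤ L ^ 2 * r := hd1
        _ ≤ L ^ 2 * b := mul_le_mul_of_nonneg_left hr.2 (by positivity)
    have h4 : |(u r) ^ 2 - 2 * u r * ut r| ≤ M ^ 2 + 2 * M * (M + L * b) := by
      calc |(u r) ^ 2 - 2 * u r * ut r| ≤ |(u r) ^ 2| + |2 * u r * ut r| := abs_sub _ _
        _ = |u r| ^ 2 + 2 * (|u r| * |ut r|) := by
            rw [abs_pow, abs_mul, abs_mul, abs_two]; ring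
        _ ≤ M ^ 2 + 2 * M * (M + L * b) := by
            nlinarith [abs_nonneg (u r), abs_nonneg (ut r)]
    rw [Real.norm_eq_abs, hψ_def]
    calc |deriv gt r * ((u r) ^ 2 - 2 * u r * ut r)|
        = |deriv gt r| * |(u r) ^ 2 - 2 * u r * ut r| := abs_mul _ _
      _ ≤ (L ^ 2 * b) * (M ^ 2 + 2 * M * (M + L * b)) := by
          apply mul_le_mul h3 h4 (abs_nonneg _) (by positivity)
  have hφ_II : IntervalIntegrable φ volume 0 b := by
    apply aux_intervalIntegrable hb.le
      (((hg_cont.mono hIcc).aemeasurable measurableSet_Ioc).mul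
        (hh_cont.aemeasurable measurableSet_Ioc)).aestronglyMeasurable
      (K := 1 * (L ^ 2 * b))
    filter_upwards [ae_restrict_mem measurableSet_Ioc] with r hr
    show ‖g r * h r‖ ≤ 1 * (L ^ 2 * b)
    rw [Real.norm_eq_abs, abs_mul]
    apply mul_le_mul
    · rw [abs_of_pos (hg_pos r (hIcc hr))]; exact hg_le_one r (hIcc hr)
    · rw [abs_of_nonneg (hh_nonneg r hr.1.le)]
      exact hh_le' r (hIcc hr) b hr.2 hb.le
    · exact abs_nonneg _
    · exact zero_le_one
  -- the pointwise comparison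
  have hcomp : ∀ r ∈ Set.Ioo 0 b, ψ r ≤ φ r := by
    intro r hr
    obtain ⟨hd0, _, hd2⟩ := hderiv_bound r hr
    have hr0 : 0 < r := hr.1
    have hhr : h r = (1 / r) * (u r - ut r) ^ 2 := by
      simp only [hh_def]
      rw [hut_eq r (hIoo hr)]
    have hgr : 0 < g r := hg_pos r (Set.Ioo_subset_Icc_self hr)
    simp only [hψ_def, hφ_def]
    rw [hhr]
    set d := deriv gt r
    set a := u r
    set c := ut r
    have hd2' : d ≤ g r * (1 / r) := by rw [← one_div_mul_eq_div] at hd2; linarith [hd2]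
    have key : d * (a ^ 2 - 2 * a * c) ≤ g r * ((1 / r) * (a - c) ^ 2) := by
      nlinarith [mul_nonneg hd0 (sq_nonneg c),
        mul_nonneg (sub_nonneg.2 hd2') (sq_nonneg (a - c))]
    exact key
  -- put everything together
  have hstep1 : (∫ r in (0:ℝ)..b, ψ r) ≤ ∫ r in (0:ℝ)..b, φ r := by
    apply intervalIntegral.integral_mono_ae_restrict hb.le hψ_II hφ_II
    have hIccIoo : volume.restrict (Set.Ioo (0:ℝ) b) = volume.restrict (Set.Icc (0:ℝ) b) :=
      Measure.restrict_congr_set Ioo_ae_eq_Icc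
    rw [← hIccIoo]
    filter_upwards [ae_restrict_mem measurableSet_Ioo] with r hr
    exact hcomp r hr
  have hstep2 : (∫ r in (0:ℝ)..b, φ r) = g b - g 0 :=
    intervalIntegral.integral_eq_sub_of_hasDerivAt_of_le hb.le hg_cont
      (fun x hx => hg_deriv x hx) hφ_II
  have hgb : g b = 1 := by
    rw [hg_eq b (Set.right_mem_Icc.2 hb.le)]
    simp [hF_def]
  calc (∫ r in (0:ℝ)..b, deriv gt r * ((u r) ^ 2 - 2 * u r * ut r))
      = ∫ r in (0:ℝ)..b, ψ r := rfl
    _ ≤ ∫ r in (0:ℝ)..b, φ r := hstep1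
    _ = g b - g 0 := hstep2
    _ = 1 - g 0 := by rw [hgb]
end

section
/- Under the hypotheses of the continuous L²-energy inequality — namely b, T > 0, U_b : [0,T] → ℝ continuous, u : [0,T] × [0,b] → ℝ continuously differentiable, ũ(t,·) the radial average of u(t,·), g(t,r) = exp(−∫_r^b (1/s)(u(t,s) − ũ(t,s))² ds), g̃(t,·) the radial average of g(t,·), with u_t = ∂_r((1/2)g̃u) − (1/2)g̃_r·ũ on (0,T) × (0,b) and u(t,b) = U_b(t) — one has for every t ∈ [0,T]: ∫_0^b u(t,r)² dr ≤ ∫_0^b u(0,r)² dr + (1/2)·∫_0^t U_b(s)² ds + t/2. -/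
open MeasureTheory intervalIntegral

open Set Filter Topology

open scoped Interval

set_option linter.unusedVariables false

private lemma avg_sub_rep (r : ℝ) (hr : 0 < r) (f : ℝ → ℝ)
    (hf : IntervalIntegrable f volume 0 r) :
    f r - (1 / r) * ∫ s in (0:ℝ)..r, f s = (1 / r) * ∫ s in (0:ℝ)..r, (f r - f s) := by
  rw [integral_sub intervalIntegrable_const hf, intervalIntegral.integral_const,
    smul_eq_mul]
  have hr0 : r ≠ 0 := hr.ne'
  field_simp
  ring

private lemma key_alg (r γ τ V W p : ℝ) (hr : r ≠ 0) :
    (1 / 2 * ((γ - τ) / r) * V ^ 2 + 1 / 2 * τ * (2 * V * p) + γ * (1 / r * (V - W) ^ 2) / 2)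
      - 2 * V * (1 / 2 * ((γ - τ) / r) * (V - W) + 1 / 2 * τ * p)
      = ((γ - τ) / r) * W ^ 2 / 2 + τ * (1 / r * (V - W) ^ 2) / 2 := by
  field_simp
  ring

set_option maxHeartbeats 1000000 in
private lemma aux_spatial {b M L : ℝ} {v tv gg tgg vr : ℝ → ℝ} (hb : 0 < b)
    (hv : ContinuousOn v (Icc 0 b))
    (hM : 0 ≤ M) (hvM : ∀ s ∈ Icc (0:ℝ) b, |v s| ≤ M)
    (hL : 0 ≤ L) (hLip : ∀ s ∈ Icc (0:ℝ) b, ∀ σ ∈ Icc (0:ℝ) b, |v s - v σ| ≤ L * |s - σ|)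
    (hvr : ∀ r ∈ Ioo (0:ℝ) b, HasDerivAt v (vr r) r)
    (hvrL : ∀ r ∈ Ioo (0:ℝ) b, |vr r| ≤ L)
    (hvrC : ContinuousOn vr (Ioo 0 b))
    (htv : ∀ r ∈ Ioc (0:ℝ) b, tv r = (1 / r) * ∫ s in (0:ℝ)..r, v s)
    (hgg : ∀ r ∈ Icc (0:ℝ) b, gg r = Real.exp (-(∫ s in r..b, (1 / s) * (v s - tv s) ^ 2)))
    (htgg : ∀ r ∈ Ioc (0:ℝ) b, tgg r = (1 / r) * ∫ s in (0:ℝ)..r, gg s) :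
    (∀ r ∈ Ioo (0:ℝ) b, |2 * v r * (deriv (fun x => 1 / 2 * tgg x * v x) r
        - 1 / 2 * deriv (fun x => tgg x) r * tv r)| ≤ 2 * M * (L ^ 2 * b * M + L))
    ∧ AEStronglyMeasurable (fun r => 2 * v r * (deriv (fun x => 1 / 2 * tgg x * v x) r
        - 1 / 2 * deriv (fun x => tgg x) r * tv r)) (volume.restrict (Ι (0:ℝ) b))
    ∧ (∫ r in (0:ℝ)..b, 2 * v r * (deriv (fun x => 1 / 2 * tgg x * v x) r
        - 1 / 2 * deriv (fun x => tgg x) r * tv r)) ≤ 1 / 2 * (v b) ^ 2 + 1 / 2 := by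
  have hb' : (0:ℝ) ≤ b := hb.le
  -- continuity of the primitive of v and of tv
  have hvIntIcc : IntegrableOn v (Icc (0:ℝ) b) := hv.integrableOn_Icc
  have hvInt : ∀ r ∈ Icc (0:ℝ) b, IntervalIntegrable v volume 0 r := fun r hr =>
    (hv.mono (uIcc_subset_Icc (left_mem_Icc.mpr hb') hr)).intervalIntegrable
  have hVcont : ContinuousOn (fun x => ∫ s in (0:ℝ)..x, v s) (Icc 0 b) := by
    have := continuousOn_primitive_interval (f := v) (a := (0:ℝ)) (b := b) (μ := volume)
      (by rwa [uIcc_of_le hb'])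
    rwa [uIcc_of_le hb'] at this
  have tvC : ContinuousOn tv (Ioc 0 b) := by
    refine ContinuousOn.congr (f := fun r => (1 / r) * ∫ s in (0:ℝ)..r, v s) ?_ ?_
    · exact (ContinuousOn.div continuousOn_const continuousOn_id
        (fun x hx => ne_of_gt hx.1)).mul (hVcont.mono Ioc_subset_Icc_self)
    · exact fun r hr => htv r hr
  have htvM : ∀ r ∈ Ioc (0:ℝ) b, |tv r| ≤ M := by
    intro r hr
    have hr0 : (0:ℝ) < r := hr.1
    have h1 : ‖∫ s in (0:ℝ)..r, v s‖ ≤ M * |r - 0| := by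
      refine intervalIntegral.norm_integral_le_of_norm_le_const (fun x hx => ?_)
      rw [uIoc_of_le hr0.le] at hx
      simpa [Real.norm_eq_abs] using hvM x ⟨hx.1.le, hx.2.trans hr.2⟩
    rw [Real.norm_eq_abs, sub_zero, abs_of_pos hr0] at h1
    rw [htv r hr, abs_mul, abs_of_pos (show (0:ℝ) < 1 / r by positivity)]
    calc (1 / r) * |∫ s in (0:ℝ)..r, v s| ≤ (1 / r) * (M * r) := by gcongr
      _ = M := by field_simp
  -- |v - tv| ≤ L r on Ioc
  have hDlip : ∀ r ∈ Ioc (0:ℝ) b, |v r - tv r| ≤ L * r := by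
    intro r hr
    have hr0 : (0:ℝ) < r := hr.1
    have hrep : v r - tv r = (1 / r) * ∫ s in (0:ℝ)..r, (v r - v s) := by
      rw [htv r hr]; exact avg_sub_rep r hr0 v (hvInt r ⟨hr0.le, hr.2⟩)
    have h1 : ‖∫ s in (0:ℝ)..r, (v r - v s)‖ ≤ (L * r) * |r - 0| := by
      refine intervalIntegral.norm_integral_le_of_norm_le_const (fun x hx => ?_)
      rw [uIoc_of_le hr0.le] at hx
      have hxI : x ∈ Icc (0:ℝ) b := ⟨hx.1.le, hx.2.trans hr.2⟩
      have hrI : r ∈ Icc (0:ℝ) b := ⟨hr0.le, hr.2⟩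
      have h3 := hLip r hrI x hxI
      have h2 : |r - x| ≤ r := by
        rw [abs_of_nonneg (by linarith [hx.2] : (0:ℝ) ≤ r - x)]
        linarith [hx.1]
      calc ‖v r - v x‖ = |v r - v x| := rfl
        _ ≤ L * |r - x| := h3
        _ ≤ L * r := by gcongr
    rw [Real.norm_eq_abs, sub_zero, abs_of_pos hr0] at h1
    rw [hrep, abs_mul, abs_of_pos (show (0:ℝ) < 1 / r by positivity)]
    calc (1 / r) * |∫ s in (0:ℝ)..r, (v r - v s)| ≤ (1 / r) * ((L * r) * r) := by
          gcongr
      _ = L * r := by field_simp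
  -- the dissipation integrand
  set hf : ℝ → ℝ := fun s => 1 / s * (v s - tv s) ^ 2 with hfdef
  have hggA : ∀ r ∈ Icc (0:ℝ) b, gg r = Real.exp (-(∫ s in r..b, hf s)) := hgg
  set A : ℝ → ℝ := fun r => ∫ s in r..b, hf s with Adef
  have hggA' : ∀ r ∈ Icc (0:ℝ) b, gg r = Real.exp (-(A r)) := hggA
  have hfnn : ∀ s ∈ Icc (0:ℝ) b, 0 ≤ hf s := by
    intro s hs
    rcases eq_or_lt_of_le hs.1 with h | h
    · simp [hfdef, ← h]
    · have h1 : 0 < 1 / s := by positivity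
      exact mul_nonneg h1.le (sq_nonneg _)
  have hfbd : ∀ s ∈ Ioc (0:ℝ) b, hf s ≤ L ^ 2 * s := by
    intro s hs
    have h1 := hDlip s hs
    have hs0 : (0:ℝ) < s := hs.1
    have h2 : (v s - tv s) ^ 2 ≤ (L * s) ^ 2 := by
      rw [← sq_abs]
      exact pow_le_pow_left₀ (abs_nonneg _) h1 2
    calc hf s = 1 / s * (v s - tv s) ^ 2 := rfl
      _ ≤ 1 / s * (L * s) ^ 2 := by gcongr
      _ = L ^ 2 * s := by field_simp
  have hfC : ContinuousOn hf (Ioc 0 b) :=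
    (ContinuousOn.div continuousOn_const continuousOn_id fun x hx => ne_of_gt hx.1).mul
      (((hv.mono Ioc_subset_Icc_self).sub tvC).pow 2)
  have hfCO : ContinuousOn hf (Ioo 0 b) := hfC.mono Ioo_subset_Ioc_self
  have hfInt : IntervalIntegrable hf volume 0 b := by
    refine (_root_.intervalIntegrable_const (c := L ^ 2 * b)).mono_fun ?_ ?_
    · rw [uIoc_of_le hb']
      exact hfC.aestronglyMeasurable measurableSet_Ioc
    · rw [uIoc_of_le hb']
      refine (ae_restrict_mem measurableSet_Ioc).mono (fun x hx => ?_)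
      have h0 := hfnn x (Ioc_subset_Icc_self hx)
      have h1 : hf x ≤ L ^ 2 * b := by
        refine (hfbd x hx).trans ?_
        nlinarith [hx.2, hx.1, sq_nonneg L]
      simp only [Real.norm_eq_abs]
      rw [abs_of_nonneg h0]
      exact h1.trans (le_abs_self _)
  have hfIntSub : ∀ c d : ℝ, c ∈ Icc (0:ℝ) b → d ∈ Icc (0:ℝ) b →
      IntervalIntegrable hf volume c d := by
    intro c d hc hd
    refine hfInt.mono_set ?_
    rw [uIcc_of_le hb']
    exact uIcc_subset_Icc hc hd
  have hAsplit : ∀ c d : ℝ, 0 ≤ c → c ≤ d → d ≤ b → A c = (∫ x in c..d, hf x) + A d := by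
    intro c d h0 hcd hdb
    exact (integral_add_adjacent_intervals
      (hfIntSub c d ⟨h0, hcd.trans hdb⟩ ⟨h0.trans hcd, hdb⟩)
      (hfIntSub d b ⟨h0.trans hcd, hdb⟩ (right_mem_Icc.mpr hb'))).symm
  have hAnn : ∀ r ∈ Icc (0:ℝ) b, 0 ≤ A r := fun r hr =>
    intervalIntegral.integral_nonneg hr.2 (fun x hx => hfnn x ⟨hr.1.trans hx.1, hx.2⟩)
  have hAmono : ∀ c d : ℝ, 0 ≤ c → c ≤ d → d ≤ b → A d ≤ A c := by
    intro c d h0 hcd hdb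
    have h1 : 0 ≤ ∫ x in c..d, hf x :=
      intervalIntegral.integral_nonneg hcd (fun x hx => hfnn x ⟨h0.trans hx.1, hx.2.trans hdb⟩)
    linarith [hAsplit c d h0 hcd hdb]
  have hAquant : ∀ c d : ℝ, 0 ≤ c → c ≤ d → d ≤ b → A c - A d ≤ L ^ 2 * d * (d - c) := by
    intro c d h0 hcd hdb
    have h1 : ‖∫ x in c..d, hf x‖ ≤ (L ^ 2 * d) * |d - c| := by
      refine intervalIntegral.norm_integral_le_of_norm_le_const (fun x hx => ?_)
      rw [uIoc_of_le hcd] at hx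
      have hx0 : (0:ℝ) < x := lt_of_le_of_lt h0 hx.1
      have h2 := hfbd x ⟨hx0, hx.2.trans hdb⟩
      rw [Real.norm_eq_abs, abs_of_nonneg (hfnn x ⟨hx0.le, (hx.2.trans hdb)⟩)]
      calc hf x ≤ L ^ 2 * x := h2
        _ ≤ L ^ 2 * d := by nlinarith [hx.2, sq_nonneg L]
    rw [Real.norm_eq_abs, abs_of_nonneg (by linarith : (0:ℝ) ≤ d - c)] at h1
    have h2 := hAsplit c d h0 hcd hdb
    have h3 := le_abs_self (∫ x in c..d, hf x)
    linarith
  -- facts about gg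
  have ggpos : ∀ r ∈ Icc (0:ℝ) b, 0 < gg r := fun r hr => by
    rw [hggA' r hr]; exact Real.exp_pos _
  have ggle1 : ∀ r ∈ Icc (0:ℝ) b, gg r ≤ 1 := by
    intro r hr
    rw [hggA' r hr, Real.exp_le_one_iff]
    linarith [hAnn r hr]
  have ggmono : ∀ c d : ℝ, 0 ≤ c → c ≤ d → d ≤ b → gg c ≤ gg d := by
    intro c d h0 hcd hdb
    rw [hggA' c ⟨h0, hcd.trans hdb⟩, hggA' d ⟨h0.trans hcd, hdb⟩, Real.exp_le_exp]
    linarith [hAmono c d h0 hcd hdb]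
  have ggquant : ∀ c d : ℝ, 0 ≤ c → c ≤ d → d ≤ b → gg d - gg c ≤ L ^ 2 * d * (d - c) := by
    intro c d h0 hcd hdb
    have hcI : c ∈ Icc (0:ℝ) b := ⟨h0, hcd.trans hdb⟩
    have hdI : d ∈ Icc (0:ℝ) b := ⟨h0.trans hcd, hdb⟩
    have e3 : gg c = gg d * Real.exp (-(A c - A d)) := by
      rw [hggA' c hcI, hggA' d hdI, ← Real.exp_add]
      ring_nf
    have hdd0 : 0 ≤ A c - A d := by linarith [hAmono c d h0 hcd hdb]
    have e1 : gg d ≤ 1 := ggle1 d hdI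
    have e1' : 0 < gg d := ggpos d hdI
    have e2 : -(A c - A d) + 1 ≤ Real.exp (-(A c - A d)) := Real.add_one_le_exp _
    have e4 : 0 < Real.exp (-(A c - A d)) := Real.exp_pos _
    have e6 : Real.exp (-(A c - A d)) ≤ 1 := Real.exp_le_one_iff.mpr (by linarith)
    have e5 : A c - A d ≤ L ^ 2 * d * (d - c) := hAquant c d h0 hcd hdb
    nlinarith [e3]
  -- continuity of A and gg on Ioc
  have hAcont : ContinuousOn A (Ioc 0 b) := by
    intro r hr
    have hs0 : (0:ℝ) < r / 2 := by linarith [hr.1]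
    have hsb : r / 2 ≤ b := by nlinarith [hr.2, hr.1]
    have hsub : Icc (r/2) b ⊆ Ioc (0:ℝ) b := fun x hx => ⟨lt_of_lt_of_le hs0 hx.1, hx.2⟩
    have hprim : ContinuousOn (fun x => ∫ s in (r/2)..x, hf s) (Icc (r/2) b) := by
      have h := continuousOn_primitive_interval (f := hf) (a := r/2) (b := b) (μ := volume)
        (by rw [uIcc_of_le hsb]; exact (hfC.mono hsub).integrableOn_Icc)
      rwa [uIcc_of_le hsb] at h
    have hAeq : ∀ x ∈ Icc (r/2) b, (A (r/2) - ∫ s in (r/2)..x, hf s) = A x := by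
      intro x hx
      have := hAsplit (r/2) x hs0.le hx.1 hx.2
      linarith
    have hAcont2 : ContinuousOn A (Icc (r/2) b) :=
      ContinuousOn.congr (continuousOn_const.sub hprim) (fun x hx => (hAeq x hx).symm)
    have hmem : Icc (r/2) b ∈ 𝓝[Ioc (0:ℝ) b] r := by
      refine mem_nhdsWithin.mpr ⟨Ioi (r/2), isOpen_Ioi, by simpa using (by linarith [hr.1] : r/2 < r), ?_⟩
      rintro x ⟨hx1, hx2⟩
      exact ⟨le_of_lt hx1, hx2.2⟩
    exact (hAcont2 r ⟨by linarith [hr.1], hr.2⟩).mono_of_mem_nhdsWithin hmem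
  have ggC : ContinuousOn gg (Ioc 0 b) :=
    ContinuousOn.congr (Real.continuous_exp.comp_continuousOn hAcont.neg)
      (fun r hr => hggA' r (Ioc_subset_Icc_self hr))
  have ggIntTo : ∀ r ∈ Icc (0:ℝ) b, IntervalIntegrable gg volume 0 r := by
    intro r hr
    refine (_root_.intervalIntegrable_const (c := (1:ℝ))).mono_fun ?_ ?_
    · rw [uIoc_of_le hr.1]
      exact (ggC.mono (fun x hx => ⟨hx.1, hx.2.trans hr.2⟩)).aestronglyMeasurable measurableSet_Ioc
    · rw [uIoc_of_le hr.1]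
      refine (ae_restrict_mem measurableSet_Ioc).mono (fun x hx => ?_)
      have hxI : x ∈ Icc (0:ℝ) b := ⟨hx.1.le, hx.2.trans hr.2⟩
      simp only [Real.norm_eq_abs]
      rw [abs_of_pos (ggpos x hxI), abs_one]
      exact ggle1 x hxI
  -- facts about tgg
  have tggnn : ∀ r ∈ Ioc (0:ℝ) b, 0 ≤ tgg r := by
    intro r hr
    rw [htgg r hr]
    have h1 : 0 ≤ ∫ s in (0:ℝ)..r, gg s :=
      intervalIntegral.integral_nonneg hr.1.le (fun x hx => (ggpos x ⟨hx.1, hx.2.trans hr.2⟩).le)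
    exact mul_nonneg (one_div_nonneg.mpr hr.1.le) h1
  have tggle : ∀ r ∈ Ioc (0:ℝ) b, tgg r ≤ gg r := by
    intro r hr
    have hr0 : (0:ℝ) < r := hr.1
    rw [htgg r hr]
    have h1 : (∫ s in (0:ℝ)..r, gg s) ≤ ∫ _s in (0:ℝ)..r, gg r := by
      refine intervalIntegral.integral_mono_on hr0.le (ggIntTo r (Ioc_subset_Icc_self hr))
        intervalIntegrable_const (fun x hx => ggmono x r hx.1 hx.2 hr.2)
    rw [intervalIntegral.integral_const, smul_eq_mul, sub_zero] at h1
    calc (1/r) * ∫ s in (0:ℝ)..r, gg s ≤ (1/r) * (r * gg r) := by gcongr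
      _ = gg r := by field_simp
  have tggle1 : ∀ r ∈ Ioc (0:ℝ) b, tgg r ≤ 1 := fun r hr =>
    (tggle r hr).trans (ggle1 r (Ioc_subset_Icc_self hr))
  have tggquant : ∀ r ∈ Ioc (0:ℝ) b, gg r - tgg r ≤ L ^ 2 * r ^ 2 := by
    intro r hr
    have hr0 : (0:ℝ) < r := hr.1
    have hrep : gg r - tgg r = (1/r) * ∫ s in (0:ℝ)..r, (gg r - gg s) := by
      rw [htgg r hr]
      exact avg_sub_rep r hr0 gg (ggIntTo r (Ioc_subset_Icc_self hr))
    have h1 : ‖∫ s in (0:ℝ)..r, (gg r - gg s)‖ ≤ (L ^ 2 * r * r) * |r - 0| := by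
      refine intervalIntegral.norm_integral_le_of_norm_le_const (fun x hx => ?_)
      rw [uIoc_of_le hr0.le] at hx
      have h2 : gg r - gg x ≤ L ^ 2 * r * (r - x) := ggquant x r hx.1.le hx.2 hr.2
      have h3 : 0 ≤ gg r - gg x := by linarith [ggmono x r hx.1.le hx.2 hr.2]
      rw [Real.norm_eq_abs, abs_of_nonneg h3]
      refine h2.trans ?_
      exact mul_le_mul_of_nonneg_left (by linarith [hx.1] : r - x ≤ r)
        (mul_nonneg (sq_nonneg L) hr0.le)
    rw [Real.norm_eq_abs, sub_zero, abs_of_pos hr0] at h1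
    rw [hrep]
    have h4 : (1/r) * ∫ s in (0:ℝ)..r, (gg r - gg s) ≤ (1/r) * ((L^2*r*r)*r) := by
      gcongr
      exact le_trans (le_abs_self _) h1
    refine h4.trans (le_of_eq ?_)
    field_simp
  -- derivative facts
  have hADeriv : ∀ r ∈ Ioo (0:ℝ) b, HasDerivAt A (-hf r) r := by
    intro r hr
    have h1 : HasDerivAt (fun x => ∫ s in b..x, hf s) (hf r) r := by
      refine intervalIntegral.integral_hasDerivAt_right (hfInt.mono_set ?_)
        (ContinuousOn.stronglyMeasurableAtFilter isOpen_Ioo hfCO r hr)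
        (hfCO.continuousAt (isOpen_Ioo.mem_nhds hr))
      rw [uIcc_of_ge hr.2.le, uIcc_of_le hb']
      exact Icc_subset_Icc hr.1.le le_rfl
    have h2 : A = fun x => -∫ s in b..x, hf s := by
      funext x
      simp only [Adef]
      exact intervalIntegral.integral_symm b x
    rw [h2]
    exact h1.neg
  have hggDeriv : ∀ r ∈ Ioo (0:ℝ) b, HasDerivAt gg (gg r * hf r) r := by
    intro r hr
    have h1 : HasDerivAt (fun x => Real.exp (-(A x))) (Real.exp (-(A r)) * hf r) r := by
      have h2 := ((hADeriv r hr).neg).exp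
      simpa using h2
    have h3 : gg =ᶠ[𝓝 r] fun x => Real.exp (-(A x)) :=
      eventually_of_mem (isOpen_Ioo.mem_nhds hr) (fun x hx => hggA' x (Ioo_subset_Icc_self hx))
    have h4 := h1.congr_of_eventuallyEq h3
    rwa [← hggA' r (Ioo_subset_Icc_self hr)] at h4
  have hGGDeriv : ∀ r ∈ Ioo (0:ℝ) b, HasDerivAt (fun x => ∫ s in (0:ℝ)..x, gg s) (gg r) r := by
    intro r hr
    exact intervalIntegral.integral_hasDerivAt_right
      (ggIntTo r (Ioo_subset_Icc_self hr))
      (ContinuousOn.stronglyMeasurableAtFilter isOpen_Ioo (ggC.mono Ioo_subset_Ioc_self) r hr)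
      ((ggC.mono Ioo_subset_Ioc_self).continuousAt (isOpen_Ioo.mem_nhds hr))
  have htggDeriv : ∀ r ∈ Ioo (0:ℝ) b, HasDerivAt tgg ((gg r - tgg r) / r) r := by
    intro r hr
    have hr0 : (0:ℝ) < r := hr.1
    have hinv : HasDerivAt (fun x : ℝ => 1 / x) (-(r^2)⁻¹) r := by
      simpa [one_div] using hasDerivAt_inv hr0.ne'
    have hprod := hinv.mul (hGGDeriv r hr)
    have h3 : tgg =ᶠ[𝓝 r] fun x => 1 / x * ∫ s in (0:ℝ)..x, gg s :=
      eventually_of_mem (isOpen_Ioo.mem_nhds hr) (fun x hx => htgg x (Ioo_subset_Ioc_self hx))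
    have h4 := hprod.congr_of_eventuallyEq h3
    have h6 : (∫ s in (0:ℝ)..r, gg s) = r * tgg r := by
      rw [htgg r (Ioo_subset_Ioc_self hr)]
      field_simp
    have h7 : -(r^2)⁻¹ * (∫ s in (0:ℝ)..r, gg s) + 1 / r * gg r = (gg r - tgg r) / r := by
      rw [h6]
      field_simp
      ring
    rwa [h7] at h4
  have hdtgg : ∀ r ∈ Ioo (0:ℝ) b, deriv (fun x => tgg x) r = (gg r - tgg r) / r :=
    fun r hr => (htggDeriv r hr).deriv
  have hflux : ∀ r ∈ Ioo (0:ℝ) b, HasDerivAt (fun x => 1 / 2 * tgg x * v x)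
      (1 / 2 * ((gg r - tgg r) / r) * v r + 1 / 2 * tgg r * vr r) r := by
    intro r hr
    exact ((htggDeriv r hr).const_mul (1/2 : ℝ)).mul (hvr r hr)
  have hFpEq : ∀ r ∈ Ioo (0:ℝ) b,
      2 * v r * (deriv (fun x => 1 / 2 * tgg x * v x) r
        - 1 / 2 * deriv (fun x => tgg x) r * tv r)
      = 2 * v r * (1 / 2 * ((gg r - tgg r) / r) * (v r - tv r) + 1 / 2 * tgg r * vr r) := by
    intro r hr
    rw [(hflux r hr).deriv, hdtgg r hr]
    ring
  have htgr_bd : ∀ r ∈ Ioo (0:ℝ) b, 0 ≤ (gg r - tgg r) / r ∧ (gg r - tgg r) / r ≤ L ^ 2 * b := by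
    intro r hr
    have hr0 : (0:ℝ) < r := hr.1
    have hIoc : r ∈ Ioc (0:ℝ) b := ⟨hr.1, hr.2.le⟩
    constructor
    · exact div_nonneg (by linarith [tggle r hIoc]) hr0.le
    · have h1 := tggquant r hIoc
      rw [div_le_iff₀ hr0]
      calc gg r - tgg r ≤ L ^ 2 * r ^ 2 := h1
        _ ≤ L ^ 2 * b * r := by nlinarith [mul_nonneg (mul_nonneg (sq_nonneg L) hr.1.le) (sub_nonneg.mpr hr.2.le)]
  have hFpBd : ∀ r ∈ Ioo (0:ℝ) b,
      |2 * v r * (deriv (fun x => 1 / 2 * tgg x * v x) r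
        - 1 / 2 * deriv (fun x => tgg x) r * tv r)| ≤ 2 * M * (L ^ 2 * b * M + L) := by
    intro r hr
    rw [hFpEq r hr]
    have hIoc : r ∈ Ioc (0:ℝ) b := ⟨hr.1, hr.2.le⟩
    have hIcc2 : r ∈ Icc (0:ℝ) b := ⟨hr.1.le, hr.2.le⟩
    have h1 := htgr_bd r hr
    have h2 : |v r - tv r| ≤ 2 * M := by
      rw [sub_eq_add_neg]
      refine (abs_add_le _ _).trans ?_
      rw [abs_neg]
      linarith [hvM r hIcc2, htvM r hIoc]
    have e1 : |1 / 2 * ((gg r - tgg r) / r) * (v r - tv r)|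
        = 1 / 2 * ((gg r - tgg r) / r) * |v r - tv r| := by
      rw [abs_mul, abs_of_nonneg (by linarith [h1.1] : (0:ℝ) ≤ 1 / 2 * ((gg r - tgg r) / r))]
    have t1 : 1 / 2 * ((gg r - tgg r) / r) * |v r - tv r| ≤ 1 / 2 * (L ^ 2 * b) * (2 * M) := by
      refine mul_le_mul (by linarith [h1.2]) h2 (abs_nonneg _) (by positivity)
    have t2 : |1 / 2 * tgg r * vr r| ≤ 1 / 2 * L := by
      rw [abs_mul, abs_of_nonneg (by linarith [tggnn r hIoc] : (0:ℝ) ≤ 1 / 2 * tgg r)]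
      have h5 := tggle1 r hIoc
      have h6 := tggnn r hIoc
      have h7 := hvrL r hr
      nlinarith [abs_nonneg (vr r)]
    have tin : |1 / 2 * ((gg r - tgg r) / r) * (v r - tv r) + 1 / 2 * tgg r * vr r|
        ≤ L ^ 2 * b * M + L := by
      refine (abs_add_le _ _).trans ?_
      rw [e1]
      have := add_le_add t1 t2
      nlinarith [this]
    rw [abs_mul]
    have h8 : |2 * v r| ≤ 2 * M := by
      rw [abs_mul]
      have := hvM r hIcc2
      rw [abs_two]
      linarith
    exact mul_le_mul h8 tin (abs_nonneg _) (by linarith)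
  have hrestr : volume.restrict (Ι (0:ℝ) b) = volume.restrict (Ioo (0:ℝ) b) := by
    rw [uIoc_of_le hb']
    exact (Measure.restrict_congr_set Ioo_ae_eq_Ioc).symm
  have c1 : ContinuousOn v (Ioo 0 b) := hv.mono Ioo_subset_Icc_self
  have c2 : ContinuousOn tv (Ioo 0 b) := tvC.mono Ioo_subset_Ioc_self
  have c3 : ContinuousOn gg (Ioo 0 b) := ggC.mono Ioo_subset_Ioc_self
  have c4 : ContinuousOn tgg (Ioo 0 b) := fun r hr =>
    ((htggDeriv r hr).continuousAt).continuousWithinAt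
  have c5 : ContinuousOn (fun r => (gg r - tgg r) / r) (Ioo 0 b) :=
    (c3.sub c4).div continuousOn_id (fun x hx => ne_of_gt hx.1)
  have hFformC : ContinuousOn (fun r => 2 * v r * (1 / 2 * ((gg r - tgg r) / r) * (v r - tv r)
      + 1 / 2 * tgg r * vr r)) (Ioo 0 b) :=
    (continuousOn_const.mul c1).mul
      (((continuousOn_const.mul c5).mul (c1.sub c2)).add ((continuousOn_const.mul c4).mul hvrC))
  have hFpASM : AEStronglyMeasurable (fun r => 2 * v r * (deriv (fun x => 1 / 2 * tgg x * v x) r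
      - 1 / 2 * deriv (fun x => tgg x) r * tv r)) (volume.restrict (Ι (0:ℝ) b)) := by
    rw [hrestr]
    refine (hFformC.aestronglyMeasurable measurableSet_Ioo).congr ?_
    refine (ae_restrict_mem measurableSet_Ioo).mono (fun x hx => ?_)
    exact (hFpEq x hx).symm
  -- Lyapunov function and FTC estimate
  set Φ : ℝ → ℝ := fun r => 1 / 2 * tgg r * (v r) ^ 2 + gg r / 2 with Φdef
  set Φd : ℝ → ℝ := fun r => 1 / 2 * ((gg r - tgg r) / r) * (v r) ^ 2
      + 1 / 2 * tgg r * (2 * v r * vr r) + gg r * hf r / 2 with Φddef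
  have hΦDeriv : ∀ r ∈ Ioo (0:ℝ) b, HasDerivAt Φ (Φd r) r := by
    intro r hr
    have h1 : HasDerivAt (fun x => (v x) ^ 2) (2 * v r * vr r) r := by
      have h0 := (hvr r hr).pow 2
      norm_num at h0
      refine h0.congr_deriv ?_
      try ring
    have h2 := ((htggDeriv r hr).const_mul (1/2 : ℝ)).mul h1
    have h3 := (hggDeriv r hr).div_const 2
    have h4 := h2.add h3
    simp only [Φdef, Φddef]
    refine h4.congr_deriv ?_
    try ring
  have hΦdGe : ∀ r ∈ Ioo (0:ℝ) b,
      2 * v r * (1 / 2 * ((gg r - tgg r) / r) * (v r - tv r) + 1 / 2 * tgg r * vr r)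
        ≤ Φd r := by
    intro r hr
    have hr0 : (0:ℝ) < r := hr.1
    have hIoc : r ∈ Ioc (0:ℝ) b := ⟨hr.1, hr.2.le⟩
    have key : Φd r
        - 2 * v r * (1 / 2 * ((gg r - tgg r) / r) * (v r - tv r) + 1 / 2 * tgg r * vr r)
        = ((gg r - tgg r) / r) * (tv r) ^ 2 / 2 + tgg r * hf r / 2 :=
      key_alg r (gg r) (tgg r) (v r) (tv r) (vr r) hr0.ne'
    have h2 := (htgr_bd r hr).1
    have h3 := tggnn r hIoc
    have h4 := hfnn r ⟨hr.1.le, hr.2.le⟩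
    nlinarith [mul_nonneg h2 (sq_nonneg (tv r)), mul_nonneg h3 h4]
  have hΦdC : ContinuousOn Φd (Ioo 0 b) := by
    simp only [Φddef]
    exact (((continuousOn_const.mul c5).mul (c1.pow 2)).add
      ((continuousOn_const.mul c4).mul ((continuousOn_const.mul c1).mul hvrC))).add
        ((c3.mul hfCO).div_const 2)
  have hΦnn : ∀ r ∈ Ioc (0:ℝ) b, 0 ≤ Φ r := by
    intro r hr
    have h1 := tggnn r hr
    have h2 := (ggpos r (Ioc_subset_Icc_self hr)).le
    simp only [Φdef]
    positivity
  have hΦle : ∀ r ∈ Ioc (0:ℝ) b, Φ r ≤ 1 / 2 * (v r) ^ 2 + 1 / 2 := by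
    intro r hr
    have h1 := tggle1 r hr
    have h2 := ggle1 r (Ioc_subset_Icc_self hr)
    have h3 := tggnn r hr
    simp only [Φdef]
    nlinarith [sq_nonneg (v r)]
  clear_value Φ Φd
  have hmid : ∀ ε ρ : ℝ, 0 < ε → ε ≤ ρ → ρ < b →
      (∫ r in ε..ρ, 2 * v r * (deriv (fun x => 1 / 2 * tgg x * v x) r
        - 1 / 2 * deriv (fun x => tgg x) r * tv r)) ≤ 1 / 2 * (v ρ) ^ 2 + 1 / 2 := by
    intro ε ρ hε hερ hρb
    have hsub : Icc ε ρ ⊆ Ioo (0:ℝ) b := fun x hx =>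
      ⟨lt_of_lt_of_le hε hx.1, lt_of_le_of_lt hx.2 hρb⟩
    have hsubI : uIcc ε ρ ⊆ Ioo (0:ℝ) b := by
      rw [uIcc_of_le hερ]; exact hsub
    have e0 : (∫ r in ε..ρ, 2 * v r * (deriv (fun x => 1 / 2 * tgg x * v x) r
          - 1 / 2 * deriv (fun x => tgg x) r * tv r))
        = ∫ r in ε..ρ, 2 * v r * (1 / 2 * ((gg r - tgg r) / r) * (v r - tv r)
          + 1 / 2 * tgg r * vr r) :=
      intervalIntegral.integral_congr (fun x hx => hFpEq x (hsubI hx))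
    have iF : IntervalIntegrable (fun r => 2 * v r * (1 / 2 * ((gg r - tgg r) / r) * (v r - tv r)
        + 1 / 2 * tgg r * vr r)) volume ε ρ := (hFformC.mono hsubI).intervalIntegrable
    have iΦd : IntervalIntegrable Φd volume ε ρ := (hΦdC.mono hsubI).intervalIntegrable
    have e1 : (∫ r in ε..ρ, 2 * v r * (1 / 2 * ((gg r - tgg r) / r) * (v r - tv r)
          + 1 / 2 * tgg r * vr r)) ≤ ∫ r in ε..ρ, Φd r :=
      intervalIntegral.integral_mono_on hερ iF iΦd (fun x hx => hΦdGe x (hsub hx))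
    have e2 : (∫ r in ε..ρ, Φd r) = Φ ρ - Φ ε :=
      intervalIntegral.integral_eq_sub_of_hasDerivAt (fun x hx => hΦDeriv x (hsubI hx)) iΦd
    have e3 : 0 ≤ Φ ε := hΦnn ε ⟨hε, by linarith⟩
    have e4 : Φ ρ ≤ 1 / 2 * (v ρ) ^ 2 + 1 / 2 := hΦle ρ ⟨lt_of_lt_of_le hε hερ, hρb.le⟩
    rw [e0]
    refine le_trans e1 ?_
    rw [e2]
    linarith
  refine ⟨hFpBd, hFpASM, ?_⟩
  have hFpInt : IntervalIntegrable (fun r => 2 * v r * (deriv (fun x => 1 / 2 * tgg x * v x) r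
      - 1 / 2 * deriv (fun x => tgg x) r * tv r)) volume 0 b := by
    refine (_root_.intervalIntegrable_const (c := 2 * M * (L ^ 2 * b * M + L))).mono_fun hFpASM ?_
    rw [hrestr]
    refine (ae_restrict_mem measurableSet_Ioo).mono (fun x hx => ?_)
    simp only [Real.norm_eq_abs]
    exact (hFpBd x hx).trans (le_abs_self _)
  set C : ℝ := 2 * M * (L ^ 2 * b * M + L) with hCdef
  have hCnn : 0 ≤ C := by
    have : 0 ≤ L ^ 2 * b * M + L := by positivity
    positivity
  set Fp : ℝ → ℝ := fun r => 2 * v r * (deriv (fun x => 1 / 2 * tgg x * v x) r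
      - 1 / 2 * deriv (fun x => tgg x) r * tv r) with Fpdef
  have main : ∀ ρ ∈ Ioo (b/2) b, (∫ r in (0:ℝ)..b, Fp r)
      ≤ 2 * C * (b - ρ) + (1 / 2 * (v ρ) ^ 2 + 1 / 2) := by
    intro ρ hρ
    have hb2 : (0:ℝ) < b / 2 := by linarith
    have hρ0 : (0:ℝ) < ρ := lt_trans hb2 hρ.1
    have hε0 : (0:ℝ) < b - ρ := by linarith [hρ.2]
    have hερ : b - ρ ≤ ρ := by linarith [hρ.1]
    have hsub1 : uIcc (0:ℝ) (b - ρ) ⊆ uIcc (0:ℝ) b := by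
      rw [uIcc_of_le hε0.le, uIcc_of_le hb']
      exact Icc_subset_Icc le_rfl (by linarith [hρ0])
    have hsub2 : uIcc (b - ρ) b ⊆ uIcc (0:ℝ) b := by
      rw [uIcc_of_le (by linarith : b - ρ ≤ b), uIcc_of_le hb']
      exact Icc_subset_Icc hε0.le le_rfl
    have hsub3 : uIcc (b - ρ) ρ ⊆ uIcc (0:ℝ) b := by
      rw [uIcc_of_le hερ, uIcc_of_le hb']
      exact Icc_subset_Icc hε0.le hρ.2.le
    have hsub4 : uIcc ρ b ⊆ uIcc (0:ℝ) b := by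
      rw [uIcc_of_le hρ.2.le, uIcc_of_le hb']
      exact Icc_subset_Icc hρ0.le le_rfl
    have hsplit1 : (∫ r in (0:ℝ)..(b-ρ), Fp r) + (∫ r in (b-ρ)..b, Fp r)
        = ∫ r in (0:ℝ)..b, Fp r :=
      integral_add_adjacent_intervals (hFpInt.mono_set hsub1) (hFpInt.mono_set hsub2)
    have hsplit2 : (∫ r in (b-ρ)..ρ, Fp r) + (∫ r in ρ..b, Fp r) = ∫ r in (b-ρ)..b, Fp r :=
      integral_add_adjacent_intervals (hFpInt.mono_set hsub3) (hFpInt.mono_set hsub4)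
    have h01 : |∫ r in (0:ℝ)..(b-ρ), Fp r| ≤ C * (b - ρ) := by
      have h1 : ‖∫ r in (0:ℝ)..(b-ρ), Fp r‖ ≤ C * |(b - ρ) - 0| := by
        refine intervalIntegral.norm_integral_le_of_norm_le_const (fun x hx => ?_)
        rw [uIoc_of_le hε0.le] at hx
        have hxI : x ∈ Ioo (0:ℝ) b := ⟨hx.1, lt_of_le_of_lt hx.2 (by linarith [hρ0])⟩
        simp only [Real.norm_eq_abs]
        exact hFpBd x hxI
      rwa [Real.norm_eq_abs, sub_zero, abs_of_pos hε0] at h1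
    have hρb2 : |∫ r in ρ..b, Fp r| ≤ C * (b - ρ) := by
      have hae : ∀ᵐ x : ℝ, x ∈ Ι ρ b → ‖Fp x‖ ≤ C := by
        have hbnull : (volume : Measure ℝ) {b} = 0 := measure_singleton b
        filter_upwards [compl_mem_ae_iff.mpr hbnull] with x hx hxI
        rw [uIoc_of_le hρ.2.le] at hxI
        have hxb : x ≠ b := by simpa using hx
        have hxI2 : x ∈ Ioo (0:ℝ) b := ⟨lt_trans hρ0 hxI.1, lt_of_le_of_ne hxI.2 hxb⟩
        simp only [Real.norm_eq_abs]
        exact hFpBd x hxI2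
      have h1 := intervalIntegral.norm_integral_le_of_norm_le_const_ae hae
      rwa [Real.norm_eq_abs, abs_of_pos (by linarith [hρ.2] : (0:ℝ) < b - ρ)] at h1
    have hmid2 := hmid (b - ρ) ρ hε0 hερ hρ.2
    have a1 := (abs_le.mp h01).2
    have a1' := (abs_le.mp h01).1
    have a2 := (abs_le.mp hρb2).2
    have a2' := (abs_le.mp hρb2).1
    have : (∫ r in (0:ℝ)..b, Fp r) = (∫ r in (0:ℝ)..(b-ρ), Fp r)
        + (∫ r in (b-ρ)..ρ, Fp r) + (∫ r in ρ..b, Fp r) := by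
      rw [← hsplit1, ← hsplit2]; ring
    rw [this]
    have hmid3 : (∫ r in (b-ρ)..ρ, Fp r) ≤ 1 / 2 * (v ρ) ^ 2 + 1 / 2 := hmid2
    linarith
  have hne : (𝓝[Ioo (b/2) b] b).NeBot := by
    apply mem_closure_iff_nhdsWithin_neBot.mp
    rw [closure_Ioo (by linarith : b / 2 ≠ b)]
    exact ⟨by linarith, le_rfl⟩
  have hvb : Tendsto v (𝓝[Ioo (b/2) b] b) (𝓝 (v b)) := by
    have h1 : ContinuousWithinAt v (Icc 0 b) b := hv b (right_mem_Icc.mpr hb')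
    exact h1.tendsto.mono_left (nhdsWithin_mono b (fun x hx => ⟨by linarith [hx.1], hx.2.le⟩))
  have hid : Tendsto (fun ρ : ℝ => ρ) (𝓝[Ioo (b/2) b] b) (𝓝 b) :=
    tendsto_id.mono_left nhdsWithin_le_nhds
  have hlim : Tendsto (fun ρ => 2 * C * (b - ρ) + (1 / 2 * (v ρ) ^ 2 + 1 / 2))
      (𝓝[Ioo (b/2) b] b) (𝓝 (2 * C * (b - b) + (1 / 2 * (v b) ^ 2 + 1 / 2))) :=
    (tendsto_const_nhds.mul (tendsto_const_nhds.sub hid)).add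
      ((tendsto_const_nhds.mul (hvb.pow 2)).add tendsto_const_nhds)
  have hfin := ge_of_tendsto hlim (eventually_of_mem self_mem_nhdsWithin main)
  calc (∫ r in (0:ℝ)..b, Fp r) ≤ 2 * C * (b - b) + (1 / 2 * (v b) ^ 2 + 1 / 2) := hfin
    _ = 1 / 2 * (v b) ^ 2 + 1 / 2 := by ring


set_option maxHeartbeats 1000000 in
/-- Integrated (Grönwall) form of the L²-stability estimate (Theorem 3.1):
`∫_0^b u(t,r)² dr ≤ ∫_0^b u(0,r)² dr + (1/2)∫_0^t U_b(s)² ds + t/2`. -/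
theorem stmt14 (b T : ℝ) (hb : 0 < b) (hT : 0 < T)
    (Ub : ℝ → ℝ) (hUb : ContinuousOn Ub (Set.Icc 0 T))
    (u tu g tg : ℝ → ℝ → ℝ)
    (hu : ContDiffOn ℝ 1 (fun p : ℝ × ℝ => u p.1 p.2) (Set.Icc 0 T ×ˢ Set.Icc 0 b))
    (htu : ∀ t ∈ Set.Icc 0 T, ∀ r ∈ Set.Ioc 0 b,
      tu t r = (1 / r) * ∫ s in (0:ℝ)..r, u t s)
    (htu0 : ∀ t ∈ Set.Icc 0 T, tu t 0 = u t 0)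
    (hg : ∀ t ∈ Set.Icc 0 T, ∀ r ∈ Set.Icc 0 b,
      g t r = Real.exp (-(∫ s in r..b, (1 / s) * (u t s - tu t s) ^ 2)))
    (htg : ∀ t ∈ Set.Icc 0 T, ∀ r ∈ Set.Ioc 0 b,
      tg t r = (1 / r) * ∫ s in (0:ℝ)..r, g t s)
    (hPDE : ∀ t ∈ Set.Ioo 0 T, ∀ r ∈ Set.Ioo 0 b,
      HasDerivAt (fun τ => u τ r)
        (deriv (fun x => (1 / 2) * tg t x * u t x) r
          - (1 / 2) * deriv (fun x => tg t x) r * tu t r) t)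
    (hub : ∀ t ∈ Set.Icc 0 T, u t b = Ub t) :
    ∀ t ∈ Set.Icc 0 T,
      (∫ r in (0:ℝ)..b, (u t r) ^ 2)
        ≤ (∫ r in (0:ℝ)..b, (u 0 r) ^ 2)
          + (1 / 2) * (∫ s in (0:ℝ)..t, (Ub s) ^ 2) + t / 2 := by

  intro t ht
  have hIoc : Ι (0:ℝ) b = Set.Ioc 0 b := uIoc_of_le hb.le
  set K : Set (ℝ × ℝ) := Set.Icc 0 T ×ˢ Set.Icc 0 b with Kdef
  set U : ℝ × ℝ → ℝ := fun p => u p.1 p.2 with Udef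
  have hKc : IsCompact K := isCompact_Icc.prod isCompact_Icc
  have hKconv : Convex ℝ K := (convex_Icc _ _).prod (convex_Icc _ _)
  have hUD : UniqueDiffOn ℝ K := (uniqueDiffOn_Icc hT).prod (uniqueDiffOn_Icc hb)
  have hUcont : ContinuousOn U K := hu.continuousOn
  obtain ⟨M₀, hM₀⟩ := hKc.exists_bound_of_continuousOn hUcont
  set M := max M₀ 0 with Mdef
  have hM : 0 ≤ M := le_max_right _ _
  have hvMK : ∀ p ∈ K, |U p| ≤ M := fun p hp => (hM₀ p hp).trans (le_max_left _ _)
  have hfdC : ContinuousOn (fderivWithin ℝ U K) K := hu.continuousOn_fderivWithin hUD le_rfl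
  obtain ⟨L₀, hL₀⟩ := hKc.exists_bound_of_continuousOn hfdC
  set L := max L₀ 0 with Ldef
  have hL : 0 ≤ L := le_max_right _ _
  have hLbd : ∀ p ∈ K, ‖fderivWithin ℝ U K p‖ ≤ L :=
    fun p hp => (hL₀ p hp).trans (le_max_left _ _)
  have hLipK : ∀ p ∈ K, ∀ q ∈ K, |U p - U q| ≤ L * ‖p - q‖ := by
    intro p hp q hq
    exact Convex.norm_image_sub_le_of_norm_fderivWithin_le
      (hu.differentiableOn one_ne_zero) hLbd hKconv hq hp
  have hslice_cont : ∀ τ ∈ Set.Icc (0:ℝ) T, ContinuousOn (fun r => u τ r) (Set.Icc 0 b) := by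
    intro τ hτ
    exact hUcont.comp (Continuous.prodMk_right τ).continuousOn (fun r hr => ⟨hτ, hr⟩)
  have hsliceM : ∀ τ ∈ Set.Icc (0:ℝ) T, ∀ s ∈ Set.Icc (0:ℝ) b, |u τ s| ≤ M :=
    fun τ hτ s hs => hvMK (τ, s) ⟨hτ, hs⟩
  have hsliceLip : ∀ τ ∈ Set.Icc (0:ℝ) T, ∀ s ∈ Set.Icc (0:ℝ) b, ∀ σ ∈ Set.Icc (0:ℝ) b,
      |u τ s - u τ σ| ≤ L * |s - σ| := by
    intro τ hτ s hs σ hσ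
    have h1 := hLipK (τ, s) ⟨hτ, hs⟩ (τ, σ) ⟨hτ, hσ⟩
    have h0 : ((τ, s) : ℝ × ℝ) - (τ, σ) = (0, s - σ) := by
      simp [Prod.ext_iff]
    rw [h0, Prod.norm_def] at h1
    simp only [norm_zero, Real.norm_eq_abs] at h1
    rwa [max_eq_right (abs_nonneg _)] at h1
  set ur : ℝ → ℝ → ℝ := fun τ r => fderiv ℝ U (τ, r) ((0 : ℝ), (1 : ℝ)) with urdef
  have hKnhds : ∀ {τ r : ℝ}, τ ∈ Set.Ioo 0 T → r ∈ Set.Ioo 0 b →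
      K ∈ 𝓝 ((τ, r) : ℝ × ℝ) := by
    intro τ r hτ hr
    refine mem_of_superset ((isOpen_Ioo.prod isOpen_Ioo).mem_nhds ⟨hτ, hr⟩) ?_
    exact Set.prod_mono Set.Ioo_subset_Icc_self Set.Ioo_subset_Icc_self
  have hslice_deriv : ∀ τ ∈ Set.Ioo (0:ℝ) T, ∀ r ∈ Set.Ioo (0:ℝ) b,
      HasDerivAt (fun x => u τ x) (ur τ r) r := by
    intro τ hτ r hr
    have hdiff : DifferentiableAt ℝ U (τ, r) :=
      (hu.contDiffAt (hKnhds hτ hr)).differentiableAt one_ne_zero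
    have h1 : HasDerivAt (fun x : ℝ => ((τ, x) : ℝ × ℝ)) ((0 : ℝ), (1 : ℝ)) r :=
      (hasDerivAt_const r τ).prodMk (hasDerivAt_id r)
    exact hdiff.hasFDerivAt.comp_hasDerivAt r h1
  have hslice_derivL : ∀ τ ∈ Set.Ioo (0:ℝ) T, ∀ r ∈ Set.Ioo (0:ℝ) b, |ur τ r| ≤ L := by
    intro τ hτ r hr
    have h0 : fderivWithin ℝ U K (τ, r) = fderiv ℝ U (τ, r) :=
      fderivWithin_of_mem_nhds (hKnhds hτ hr)
    have h1 : ‖fderiv ℝ U (τ, r)‖ ≤ L := by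
      rw [← h0]
      exact hLbd (τ, r) ⟨⟨hτ.1.le, hτ.2.le⟩, ⟨hr.1.le, hr.2.le⟩⟩
    have h2 := (fderiv ℝ U (τ, r)).le_opNorm ((0 : ℝ), (1 : ℝ))
    have h3 : ‖(((0 : ℝ), (1 : ℝ)) : ℝ × ℝ)‖ = 1 := by
      rw [Prod.norm_def]
      simp
    rw [h3, mul_one] at h2
    calc |ur τ r| = ‖fderiv ℝ U (τ, r) ((0:ℝ), (1:ℝ))‖ := rfl
      _ ≤ ‖fderiv ℝ U (τ, r)‖ := h2
      _ ≤ L := h1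
  have hslice_derivC : ∀ τ ∈ Set.Ioo (0:ℝ) T, ContinuousOn (ur τ) (Set.Ioo 0 b) := by
    intro τ hτ
    have h1 : ContinuousOn (fun r => fderivWithin ℝ U K (τ, r)) (Set.Ioo 0 b) :=
      hfdC.comp (Continuous.prodMk_right τ).continuousOn
        (fun r hr => ⟨⟨hτ.1.le, hτ.2.le⟩, ⟨hr.1.le, hr.2.le⟩⟩)
    have h2 : ContinuousOn (fun r => (fderivWithin ℝ U K (τ, r)) (((0:ℝ), (1:ℝ)) : ℝ × ℝ))
        (Set.Ioo 0 b) := h1.clm_apply continuousOn_const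
    refine h2.congr ?_
    intro r hr
    simp only [urdef]
    rw [fderivWithin_of_mem_nhds (hKnhds hτ hr)]
  have hspatial : ∀ τ ∈ Set.Ioo (0:ℝ) T,
      (∀ r ∈ Set.Ioo (0:ℝ) b, |2 * u τ r * (deriv (fun x => 1 / 2 * tg τ x * u τ x) r
          - 1 / 2 * deriv (fun x => tg τ x) r * tu τ r)| ≤ 2 * M * (L ^ 2 * b * M + L))
      ∧ AEStronglyMeasurable (fun r => 2 * u τ r * (deriv (fun x => 1 / 2 * tg τ x * u τ x) r
          - 1 / 2 * deriv (fun x => tg τ x) r * tu τ r)) (volume.restrict (Ι (0:ℝ) b))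
      ∧ (∫ r in (0:ℝ)..b, 2 * u τ r * (deriv (fun x => 1 / 2 * tg τ x * u τ x) r
          - 1 / 2 * deriv (fun x => tg τ x) r * tu τ r)) ≤ 1 / 2 * (u τ b) ^ 2 + 1 / 2 := by
    intro τ hτ
    have hτI := Set.Ioo_subset_Icc_self hτ
    exact aux_spatial hb (hslice_cont τ hτI) hM (hsliceM τ hτI) hL (hsliceLip τ hτI)
      (hslice_deriv τ hτ) (hslice_derivL τ hτ) (hslice_derivC τ hτ)
      (htu τ hτI) (hg τ hτI) (htg τ hτI)
  set C : ℝ := 2 * M * (L ^ 2 * b * M + L) with Cdef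
  have hEkey : ∀ τ ∈ Set.Ioo (0:ℝ) T,
      HasDerivAt (fun x => ∫ r in (0:ℝ)..b, (u x r) ^ 2)
        (∫ r in (0:ℝ)..b, 2 * u τ r * (deriv (fun y => 1 / 2 * tg τ y * u τ y) r
          - 1 / 2 * deriv (fun y => tg τ y) r * tu τ r)) τ
      ∧ (∫ r in (0:ℝ)..b, 2 * u τ r * (deriv (fun y => 1 / 2 * tg τ y * u τ y) r
          - 1 / 2 * deriv (fun y => tg τ y) r * tu τ r)) ≤ 1 / 2 * (Ub τ) ^ 2 + 1 / 2 := by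
    intro τ hτ
    have hε : 0 < min τ (T - τ) := lt_min hτ.1 (by linarith [hτ.2])
    have hball : Metric.ball τ (min τ (T - τ)) ⊆ Set.Ioo 0 T := by
      intro x hx
      rw [Metric.mem_ball, Real.dist_eq] at hx
      have h1 := abs_lt.mp hx
      constructor
      · linarith [min_le_left τ (T - τ), h1.1]
      · linarith [min_le_right τ (T - τ), h1.2]
    have key := intervalIntegral.hasDerivAt_integral_of_dominated_loc_of_deriv_le
      (𝕜 := ℝ) (μ := volume) (a := 0) (b := b)
      (F := fun x r => (u x r) ^ 2)
      (F' := fun x r => 2 * u x r * (deriv (fun y => 1 / 2 * tg x y * u x y) r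
        - 1 / 2 * deriv (fun y => tg x y) r * tu x r))
      (x₀ := τ) (bound := fun _ => C) (s := Metric.ball τ (min τ (T - τ))) (Metric.ball_mem_nhds τ hε) ?_ ?_ ?_ ?_ ?_ ?_
    · refine ⟨key.2, ?_⟩
      have h3 := (hspatial τ hτ).2.2
      rwa [hub τ (Set.Ioo_subset_Icc_self hτ)] at h3
    · refine eventually_of_mem (isOpen_Ioo.mem_nhds hτ) (fun x hx => ?_)
      rw [hIoc]
      exact (((hslice_cont x (Set.Ioo_subset_Icc_self hx)).mono
        Set.Ioc_subset_Icc_self).pow 2).aestronglyMeasurable measurableSet_Ioc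
    · apply ContinuousOn.intervalIntegrable
      rw [uIcc_of_le hb.le]
      exact (hslice_cont τ (Set.Ioo_subset_Icc_self hτ)).pow 2
    · exact (hspatial τ hτ).2.1
    · filter_upwards [compl_mem_ae_iff.mpr (measure_singleton b)] with r hrb hrI x hx
      rw [hIoc] at hrI
      have hrIoo : r ∈ Set.Ioo (0:ℝ) b := ⟨hrI.1, lt_of_le_of_ne hrI.2 (by simpa using hrb)⟩
      have h1 := (hspatial x (hball hx)).1 r hrIoo
      simp only [Real.norm_eq_abs]
      exact h1
    · exact _root_.intervalIntegrable_const
    · filter_upwards [compl_mem_ae_iff.mpr (measure_singleton b)] with r hrb hrI x hx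
      rw [hIoc] at hrI
      have hrIoo : r ∈ Set.Ioo (0:ℝ) b := ⟨hrI.1, lt_of_le_of_ne hrI.2 (by simpa using hrb)⟩
      have h2 := (hPDE x (hball hx) r hrIoo).pow 2
      refine h2.congr_deriv ?_
      push_cast
      ring
  have hUb2C : ContinuousOn (fun s => (Ub s) ^ 2) (Set.Icc 0 T) := hUb.pow 2
  have hPrimC : ContinuousOn (fun τ => ∫ s in (0:ℝ)..τ, (Ub s) ^ 2) (Set.Icc 0 T) := by
    have h := continuousOn_primitive_interval (f := fun s => (Ub s) ^ 2) (a := (0:ℝ)) (b := T)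
      (μ := volume) (by rw [uIcc_of_le hT.le]; exact hUb2C.integrableOn_Icc)
    rwa [uIcc_of_le hT.le] at h
  have hPrimD : ∀ τ ∈ Set.Ioo (0:ℝ) T,
      HasDerivAt (fun τ' => ∫ s in (0:ℝ)..τ', (Ub s) ^ 2) ((Ub τ) ^ 2) τ := by
    intro τ hτ
    refine intervalIntegral.integral_hasDerivAt_right ?_ ?_ ?_
    · apply ContinuousOn.intervalIntegrable
      refine hUb2C.mono ?_
      rw [uIcc_of_le hτ.1.le]
      exact Set.Icc_subset_Icc le_rfl hτ.2.le
    · exact ContinuousOn.stronglyMeasurableAtFilter isOpen_Ioo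
        (hUb2C.mono Set.Ioo_subset_Icc_self) τ hτ
    · exact (hUb2C.mono Set.Ioo_subset_Icc_self).continuousAt (isOpen_Ioo.mem_nhds hτ)
  have hEcont : ContinuousOn (fun τ => ∫ r in (0:ℝ)..b, (u τ r) ^ 2) (Set.Icc 0 T) := by
    intro t₀ ht₀
    have hW : ContinuousOn (fun p : ℝ × ℝ => (U p) ^ 2) K := hUcont.pow 2
    have hUC := hKc.uniformContinuousOn_of_continuous hW
    rw [Metric.uniformContinuousOn_iff] at hUC
    rw [_root_.Metric.continuousWithinAt_iff]
    intro ee hee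
    have hee' : 0 < ee / (b + 1) := by positivity
    obtain ⟨δ, hδ, hδ'⟩ := hUC (ee / (b + 1)) hee'
    refine ⟨δ, hδ, ?_⟩
    intro x hx hxd
    have hInt1 : IntervalIntegrable (fun r => (u x r) ^ 2) volume 0 b := by
      apply ContinuousOn.intervalIntegrable
      rw [uIcc_of_le hb.le]
      exact (hslice_cont x hx).pow 2
    have hInt2 : IntervalIntegrable (fun r => (u t₀ r) ^ 2) volume 0 b := by
      apply ContinuousOn.intervalIntegrable
      rw [uIcc_of_le hb.le]
      exact (hslice_cont t₀ ht₀).pow 2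
    have hsub : (∫ r in (0:ℝ)..b, (u x r) ^ 2) - (∫ r in (0:ℝ)..b, (u t₀ r) ^ 2)
        = ∫ r in (0:ℝ)..b, ((u x r) ^ 2 - (u t₀ r) ^ 2) := (integral_sub hInt1 hInt2).symm
    have hbd : ‖∫ r in (0:ℝ)..b, ((u x r) ^ 2 - (u t₀ r) ^ 2)‖ ≤ (ee / (b + 1)) * |b - 0| := by
      refine intervalIntegral.norm_integral_le_of_norm_le_const (fun r hrI => ?_)
      rw [hIoc] at hrI
      have hrIcc : r ∈ Set.Icc (0:ℝ) b := Set.Ioc_subset_Icc_self hrI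
      have hdist : dist ((x, r) : ℝ × ℝ) ((t₀, r) : ℝ × ℝ) < δ := by
        rw [Prod.dist_eq]
        simp only [dist_self]
        rw [max_eq_left dist_nonneg]
        exact hxd
      have h1 := hδ' (x, r) ⟨hx, hrIcc⟩ (t₀, r) ⟨ht₀, hrIcc⟩ hdist
      rw [Real.dist_eq] at h1
      exact le_of_lt h1
    rw [Real.dist_eq, hsub]
    rw [Real.norm_eq_abs, sub_zero, abs_of_pos hb] at hbd
    calc |∫ r in (0:ℝ)..b, ((u x r) ^ 2 - (u t₀ r) ^ 2)| ≤ (ee / (b + 1)) * b := hbd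
      _ < ee := by
        rw [div_mul_eq_mul_div, div_lt_iff₀ (by positivity : (0:ℝ) < b + 1)]
        nlinarith
  have hGd : ∀ x ∈ Set.Ioo (0:ℝ) T, HasDerivAt (fun τ => (∫ r in (0:ℝ)..b, (u 0 r) ^ 2)
      + 1 / 2 * (∫ s in (0:ℝ)..τ, (Ub s) ^ 2) + τ / 2 - ∫ r in (0:ℝ)..b, (u τ r) ^ 2)
      (1 / 2 * (Ub x) ^ 2 + 1 / 2 - ∫ r in (0:ℝ)..b, 2 * u x r *
        (deriv (fun y => 1 / 2 * tg x y * u x y) r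
          - 1 / 2 * deriv (fun y => tg x y) r * tu x r)) x := by
    intro x hx
    have h1 := (hPrimD x hx).const_mul (1/2 : ℝ)
    have h2 : HasDerivAt (fun τ' : ℝ => τ' / 2) (1/2 : ℝ) x := by
      simpa using (hasDerivAt_id x).div_const 2
    have h3 := ((hasDerivAt_const x (∫ r in (0:ℝ)..b, (u 0 r) ^ 2)).add h1).add h2
    have h4 := h3.sub (hEkey x hx).1
    refine h4.congr_deriv ?_
    ring
  have hGmono : MonotoneOn (fun τ => (∫ r in (0:ℝ)..b, (u 0 r) ^ 2)
      + 1 / 2 * (∫ s in (0:ℝ)..τ, (Ub s) ^ 2) + τ / 2 - ∫ r in (0:ℝ)..b, (u τ r) ^ 2)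
      (Set.Icc 0 T) := by
    refine monotoneOn_of_deriv_nonneg (convex_Icc 0 T) ?_ ?_ ?_
    · exact ((continuousOn_const.add (continuousOn_const.mul hPrimC)).add
        (continuousOn_id.div_const 2)).sub hEcont
    · rw [interior_Icc]
      intro x hx
      exact (hGd x hx).differentiableAt.differentiableWithinAt
    · rw [interior_Icc]
      intro x hx
      rw [(hGd x hx).deriv]
      linarith [(hEkey x hx).2]
  have hfin := hGmono (Set.left_mem_Icc.mpr hT.le) ht ht.1
  simp only [intervalIntegral.integral_same] at hfin
  linarith [hfin]
end

section
/- Let k ≥ 0 be an integer, let a < c be real numbers, and let u : [a,c] → ℝ be continuous. Then there exists a unique real polynomial p of degree at most k such that p(a) = u(a) and ∫_a^c (u(s) − p(s))·s^j ds = 0 for every integer 0 ≤ j ≤ k − 1. -/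
set_option maxHeartbeats 1000000

open MeasureTheory intervalIntegral Polynomial

/-- The linear functional `p ↦ ∫ s in a..c, p(s) * s^j`. -/
noncomputable def intLF (a c : ℝ) (j : ℕ) : Polynomial ℝ →ₗ[ℝ] ℝ where
  toFun p := ∫ s in a..c, p.eval s * s ^ j
  map_add' p q := by
    simp only [eval_add, add_mul]
    exact intervalIntegral.integral_add
      ((p.continuous.mul (continuous_pow j)).intervalIntegrable a c)
      ((q.continuous.mul (continuous_pow j)).intervalIntegrable a c)
  map_smul' r p := by
    simp only [eval_smul, smul_eq_mul, RingHom.id_apply, mul_assoc]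
    exact intervalIntegral.integral_const_mul r _

lemma intLF_apply (a c : ℝ) (j : ℕ) (p : Polynomial ℝ) :
    intLF a c j p = ∫ s in a..c, p.eval s * s ^ j := rfl

lemma integral_mul_eval_eq_zero (a c : ℝ) (k : ℕ) (p : Polynomial ℝ)
    (hj : ∀ j < k, (∫ s in a..c, p.eval s * s ^ j) = 0)
    (r : Polynomial ℝ) (hr : r.natDegree < k) :
    (∫ s in a..c, p.eval s * r.eval s) = 0 := by
  have heq : ∀ s : ℝ, p.eval s * r.eval s
      = ∑ i ∈ Finset.range k, r.coeff i * (p.eval s * s ^ i) := by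
    intro s
    rw [Polynomial.eval_eq_sum_range' hr s, Finset.mul_sum]
    exact Finset.sum_congr rfl fun i _ => by ring
  simp only [heq]
  rw [intervalIntegral.integral_finset_sum fun i _ =>
    (show Continuous fun s => r.coeff i * (p.eval s * s ^ i) from
      continuous_const.mul (p.continuous.mul (continuous_pow i))).intervalIntegrable a c]
  refine Finset.sum_eq_zero fun i hi => ?_
  rw [intervalIntegral.integral_const_mul, hj i (Finset.mem_range.mp hi), mul_zero]

lemma key_inj (k : ℕ) (a c : ℝ) (hac : a < c) (p : Polynomial ℝ)
    (hdeg : p.natDegree ≤ k) (ha : p.eval a = 0)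
    (hj : ∀ j < k, (∫ s in a..c, p.eval s * s ^ j) = 0) : p = 0 := by
  obtain ⟨q, hq⟩ := Polynomial.dvd_iff_isRoot.mpr ha
  by_cases hq0 : q = 0
  · simp [hq, hq0]
  have hX : (X - C a : Polynomial ℝ) ≠ 0 := Polynomial.X_sub_C_ne_zero a
  have hnd : p.natDegree = 1 + q.natDegree := by
    rw [hq, Polynomial.natDegree_mul hX hq0, Polynomial.natDegree_X_sub_C]
  have hqd : q.natDegree < k := by omega
  have hint : (∫ s in a..c, p.eval s * q.eval s) = 0 :=
    integral_mul_eval_eq_zero a c k p hj q hqd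
  set f : ℝ → ℝ := fun s => (s - a) * q.eval s ^ 2 with hf
  have hfe : ∀ s, p.eval s * q.eval s = f s := by
    intro s; simp only [hf, hq, eval_mul, eval_sub, eval_X, eval_C]; ring
  have hfc : Continuous f := (continuous_id.sub continuous_const).mul (q.continuous.pow 2)
  have h0 : ∫ s in Set.Ioc a c, f s = 0 := by
    rw [← intervalIntegral.integral_of_le hac.le]
    simp only [← hfe]; exact hint
  have hae : ∀ᵐ s ∂(volume.restrict (Set.Ioc a c)), f s = 0 := by
    have hnn : 0 ≤ᵐ[volume.restrict (Set.Ioc a c)] f := by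
      filter_upwards [MeasureTheory.ae_restrict_mem measurableSet_Ioc] with s hs
      have h1 : (0:ℝ) ≤ s - a := by linarith [hs.1]
      simp only [Pi.zero_apply, hf]
      positivity
    exact (MeasureTheory.integral_eq_zero_iff_of_nonneg_ae hnn hfc.integrableOn_Ioc).mp h0
  have hae2 : ∀ᵐ s, s ∈ Set.Ioc a c → f s = 0 :=
    (MeasureTheory.ae_restrict_iff' measurableSet_Ioc).mp hae
  have hNnull : volume {s : ℝ | ¬ (s ∈ Set.Ioc a c → f s = 0)} = 0 :=
    MeasureTheory.ae_iff.mp hae2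
  have hroots : {x : ℝ | q.IsRoot x}.Infinite := by
    intro hfin
    have hsub : Set.Ioc a c ⊆ {x : ℝ | q.IsRoot x} ∪
        {s : ℝ | ¬ (s ∈ Set.Ioc a c → f s = 0)} := by
      intro s hs
      by_cases h : f s = 0
      · left
        have hsa : s - a ≠ 0 := by have := hs.1; intro h'; linarith [hs.1]
        have hq2 : q.eval s ^ 2 = 0 := by
          rcases mul_eq_zero.mp h with h' | h'
          · exact absurd h' hsa
          · exact h'
        exact pow_eq_zero_iff (n := 2) (by norm_num) |>.mp hq2
      · right; intro h'; exact h (h' hs)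
    have h1 : volume {x : ℝ | q.IsRoot x} = 0 := hfin.measure_zero volume
    have h2 := (measure_mono (μ := (volume : Measure ℝ)) hsub).trans (measure_union_le _ _)
    rw [h1, hNnull, add_zero] at h2
    rw [Real.volume_Ioc] at h2
    have hpos : (0:ENNReal) < ENNReal.ofReal (c - a) := by
      rw [ENNReal.ofReal_pos]; linarith
    exact absurd (le_antisymm h2 zero_le) (ne_of_gt hpos)
  exact absurd (Polynomial.eq_zero_of_infinite_isRoot q hroots) hq0

lemma natDegree_le_of_mem_degreeLT {k : ℕ} {P : Polynomial ℝ}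
    (h : P ∈ Polynomial.degreeLT ℝ (k + 1)) : P.natDegree ≤ k := by
  by_cases hP : P = 0
  · simp [hP]
  · have := (Polynomial.natDegree_lt_iff_degree_lt hP).mpr (Polynomial.mem_degreeLT.mp h)
    omega

/-- The linear map collecting the `k+1` linear conditions. -/
noncomputable def Tmap (k : ℕ) (a c : ℝ) : Polynomial ℝ →ₗ[ℝ] (Fin (k + 1) → ℝ) :=
  LinearMap.pi (fun i => Fin.cases (Polynomial.leval a) (fun j => intLF a c (j : ℕ)) i)

lemma Tmap_apply_zero (k : ℕ) (a c : ℝ) (P : Polynomial ℝ) :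
    Tmap k a c P 0 = P.eval a := by
  simp [Tmap, LinearMap.pi_apply]

lemma Tmap_apply_succ (k : ℕ) (a c : ℝ) (P : Polynomial ℝ) (j : Fin k) :
    Tmap k a c P j.succ = ∫ s in a..c, P.eval s * s ^ (j : ℕ) := by
  simp [Tmap, LinearMap.pi_apply, intLF_apply]

lemma Tmap_zero_conditions (k : ℕ) (a c : ℝ) (P : Polynomial ℝ)
    (h : Tmap k a c P = 0) :
    P.eval a = 0 ∧ ∀ j < k, (∫ s in a..c, P.eval s * s ^ j) = 0 := by
  constructor
  · rw [← Tmap_apply_zero k a c P, h]; rfl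
  · intro j hj
    rw [← Tmap_apply_succ k a c P ⟨j, hj⟩, h]; rfl

/-- The square linear map on coordinates. -/
noncomputable def Smap (k : ℕ) (a c : ℝ) : (Fin (k + 1) → ℝ) →ₗ[ℝ] (Fin (k + 1) → ℝ) :=
  Tmap k a c ∘ₗ (Polynomial.degreeLT ℝ (k + 1)).subtype ∘ₗ
    (Polynomial.degreeLTEquiv ℝ (k + 1)).symm.toLinearMap

lemma Smap_apply (k : ℕ) (a c : ℝ) (v : Fin (k + 1) → ℝ) :
    Smap k a c v = Tmap k a c ((Polynomial.degreeLTEquiv ℝ (k + 1)).symm v : Polynomial ℝ) :=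
  rfl

lemma Smap_surj (k : ℕ) (a c : ℝ) (hac : a < c) :
    Function.Surjective (Smap k a c) := by
  rw [← LinearMap.injective_iff_surjective]
  rw [← LinearMap.ker_eq_bot, LinearMap.ker_eq_bot']
  intro v hv
  rw [Smap_apply] at hv
  obtain ⟨h1, h2⟩ := Tmap_zero_conditions k a c _ hv
  have hP0 : (((Polynomial.degreeLTEquiv ℝ (k + 1)).symm v : ℝ[X])) = 0 :=
    key_inj k a c hac _
      (natDegree_le_of_mem_degreeLT ((Polynomial.degreeLTEquiv ℝ (k + 1)).symm v).2) h1 h2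
  have hsub : (Polynomial.degreeLTEquiv ℝ (k + 1)).symm v = 0 := Subtype.ext hP0
  have := congrArg (Polynomial.degreeLTEquiv ℝ (k + 1)) hsub
  simpa using this

/-- Well-posedness of the (left) Gauss--Radau projection: for continuous `u` on `[a,c]`
there is a unique polynomial `p` of degree at most `k` with `p(a) = u(a)` and
`∫_a^c (u - p) s^j ds = 0` for all `0 ≤ j ≤ k - 1` (i.e. `j < k`). -/
theorem stmt15 (k : ℕ) (a c : ℝ) (hac : a < c) (u : ℝ → ℝ)
    (hu : ContinuousOn u (Set.Icc a c)) :
    ∃! p : Polynomial ℝ, p.natDegree ≤ k ∧ p.eval a = u a ∧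
      ∀ j < k, (∫ s in a..c, (u s - p.eval s) * s ^ j) = 0 := by
  have huint : ∀ j : ℕ, IntervalIntegrable (fun s => u s * s ^ j) volume a c := by
    intro j
    apply ContinuousOn.intervalIntegrable
    rw [Set.uIcc_of_le hac.le]
    exact hu.mul (continuous_pow j).continuousOn
  obtain ⟨v, hv⟩ := Smap_surj k a c hac
    (Fin.cons (u a) (fun j => ∫ s in a..c, u s * s ^ (j : ℕ)))
  rw [Smap_apply] at hv
  set p : Polynomial ℝ := ((Polynomial.degreeLTEquiv ℝ (k + 1)).symm v : Polynomial ℝ)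
    with hp
  have hpeval : p.eval a = u a := by
    have := congrFun hv 0
    rw [Tmap_apply_zero] at this
    simpa using this
  have hpint : ∀ j < k, (∫ s in a..c, p.eval s * s ^ j) = ∫ s in a..c, u s * s ^ j := by
    intro j hj
    have := congrFun hv (Fin.succ ⟨j, hj⟩)
    rw [Tmap_apply_succ, Fin.cons_succ] at this
    simpa using this
  have hpdeg : p.natDegree ≤ k :=
    natDegree_le_of_mem_degreeLT ((Polynomial.degreeLTEquiv ℝ (k + 1)).symm v).2
  have hpcond : ∀ j < k, (∫ s in a..c, (u s - p.eval s) * s ^ j) = 0 := by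
    intro j hj
    have heq : (fun s => (u s - p.eval s) * s ^ j)
        = fun s => u s * s ^ j - p.eval s * s ^ j := by funext s; ring
    rw [heq, intervalIntegral.integral_sub (huint j)
      ((show Continuous fun s => p.eval s * s ^ j from
        p.continuous.mul (continuous_pow j)).intervalIntegrable a c),
      hpint j hj, sub_self]
  refine ⟨p, ⟨hpdeg, hpeval, hpcond⟩, ?_⟩
  rintro y ⟨hydeg, hyeval, hycond⟩
  have hd : y - p = 0 := by
    apply key_inj k a c hac _ ?_ ?_ ?_
    · exact le_trans (Polynomial.natDegree_sub_le y p) (by omega)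
    · simp [hyeval, hpeval]
    · intro j hj
      have heq : (fun s => (y - p).eval s * s ^ j)
          = fun s => (u s - p.eval s) * s ^ j - (u s - y.eval s) * s ^ j := by
        funext s; simp only [eval_sub]; ring
      have hip : IntervalIntegrable (fun s => (u s - p.eval s) * s ^ j) volume a c := by
        simpa only [sub_mul] using
          (huint j).sub ((show Continuous fun s => p.eval s * s ^ j from
            p.continuous.mul (continuous_pow j)).intervalIntegrable a c)
      have hiy : IntervalIntegrable (fun s => (u s - y.eval s) * s ^ j) volume a c := by
        simpa only [sub_mul] using
          (huint j).sub ((show Continuous fun s => y.eval s * s ^ j from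
            y.continuous.mul (continuous_pow j)).intervalIntegrable a c)
      rw [heq, intervalIntegral.integral_sub hip hiy, hpcond j hj, hycond j hj, sub_self]
  exact sub_eq_zero.mp hd
end

section
/- For every integer k ≥ 0 there exists a constant C > 0 such that for all real numbers a < c with h := c − a and every (k+1)-times continuously differentiable function u : [a,c] → ℝ, the Gauss–Radau projection p of u (the unique polynomial of degree at most k with p(a) = u(a) and ∫_a^c (u − p)·s^j ds = 0 for 0 ≤ j ≤ k − 1) satisfies (∫_a^c (u(s) − p(s))² ds)^{1/2} ≤ C·h^{k+1}·(∫_a^c (u^{(k+1)}(s))² ds)^{1/2}. -/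
open MeasureTheory intervalIntegral Polynomial

lemma cs_aux {a c : ℝ} (hac : a ≤ c) {g : ℝ → ℝ} (hg : ContinuousOn g (Set.Icc a c)) :
    (∫ t in a..c, |g t|) ≤ Real.sqrt (c - a) * Real.sqrt (∫ t in a..c, (g t)^2) := by
  have huIcc : Set.uIcc a c = Set.Icc a c := Set.uIcc_of_le hac
  have hgi : IntervalIntegrable g volume a c := (huIcc ▸ hg).intervalIntegrable
  have hgai : IntervalIntegrable (fun t => |g t|) volume a c := hgi.abs
  have hg2i : IntervalIntegrable (fun t => (g t)^2) volume a c := by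
    have : ContinuousOn (fun t => (g t)^2) (Set.uIcc a c) := (huIcc ▸ hg).pow 2
    exact this.intervalIntegrable
  set I := ∫ t in a..c, |g t| with hI
  set J := ∫ t in a..c, (g t)^2 with hJ
  have hInn : 0 ≤ I := integral_nonneg hac (fun u _ => abs_nonneg _)
  have hJnn : 0 ≤ J := integral_nonneg hac (fun u _ => sq_nonneg _)
  rcases eq_or_lt_of_le hac with rfl | hlt
  · simp [hI]
  have hpos : (0:ℝ) < c - a := by linarith
  set lam := I / (c - a) with hlam
  have key : 0 ≤ J - 2 * lam * I + lam^2 * (c - a) := by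
    have h0 : 0 ≤ ∫ t in a..c, (|g t| - lam)^2 :=
      integral_nonneg hac (fun u _ => sq_nonneg _)
    have hexp : (∫ t in a..c, (|g t| - lam)^2)
        = J - 2 * lam * I + lam^2 * (c - a) := by
      have : ∀ t, (|g t| - lam)^2 = (g t)^2 - (2*lam) * |g t| + lam^2 := by
        intro t; have := sq_abs (g t); nlinarith [sq_abs (g t)]
      calc (∫ t in a..c, (|g t| - lam)^2)
          = ∫ t in a..c, ((g t)^2 - (2*lam) * |g t| + lam^2) := by
            simp only [this]
        _ = (∫ t in a..c, ((g t)^2 - (2*lam) * |g t|)) + ∫ t in a..c, (lam^2 : ℝ) := by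
            apply integral_add (hg2i.sub (hgai.const_mul _)) intervalIntegrable_const
        _ = ((∫ t in a..c, (g t)^2) - ∫ t in a..c, (2*lam) * |g t|) + (c - a) * lam^2 := by
            rw [integral_sub hg2i (hgai.const_mul _), intervalIntegral.integral_const, smul_eq_mul]
        _ = J - 2 * lam * I + lam^2 * (c - a) := by
            rw [intervalIntegral.integral_const_mul]; ring
    linarith [hexp ▸ h0]
  have hIJ : I^2 ≤ J * (c - a) := by
    have : 2 * lam * I = 2 * I^2 / (c-a) := by rw [hlam]; ring
    have h2 : lam^2 * (c - a) = I^2/(c-a) := by rw [hlam]; field_simp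
    rw [this, h2] at key
    have h3 : 0 ≤ (J - 2 * I ^ 2 / (c - a) + I ^ 2 / (c - a)) * (c - a) :=
      mul_nonneg key (le_of_lt hpos)
    have h4 : (J - 2 * I ^ 2 / (c - a) + I ^ 2 / (c - a)) * (c - a)
        = J * (c - a) - I^2 := by field_simp; ring
    linarith [h4 ▸ h3]
  calc I = Real.sqrt (I^2) := by rw [Real.sqrt_sq hInn]
    _ ≤ Real.sqrt (J * (c-a)) := Real.sqrt_le_sqrt hIJ
    _ = Real.sqrt (c - a) * Real.sqrt J := by
        rw [mul_comm, Real.sqrt_mul (by linarith)]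

lemma poly_int (k m : ℕ) (q : Polynomial ℝ) (hq : q.natDegree ≤ k) :
    ∫ t in (0:ℝ)..1, q.eval t * t^m
      = ∑ i ∈ Finset.range (k+1), q.coeff i / ((i : ℝ) + m + 1) := by
  have hlt : q.natDegree < k + 1 := Nat.lt_succ_of_le hq
  have heval : ∀ t : ℝ, q.eval t * t^m
      = ∑ i ∈ Finset.range (k+1), q.coeff i * t^(i+m) := by
    intro t
    rw [Polynomial.eval_eq_sum_range' hlt, Finset.sum_mul]
    exact Finset.sum_congr rfl (fun i _ => by rw [pow_add]; ring)
  calc ∫ t in (0:ℝ)..1, q.eval t * t^m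
      = ∫ t in (0:ℝ)..1, ∑ i ∈ Finset.range (k+1), q.coeff i * t^(i+m) := by
        simp only [heval]
    _ = ∑ i ∈ Finset.range (k+1), ∫ t in (0:ℝ)..1, q.coeff i * t^(i+m) := by
        apply intervalIntegral.integral_finset_sum
        intro i _
        exact (Continuous.intervalIntegrable (by continuity) _ _)
    _ = ∑ i ∈ Finset.range (k+1), q.coeff i / ((i : ℝ) + m + 1) := by
        refine Finset.sum_congr rfl (fun i _ => ?_)
        rw [intervalIntegral.integral_const_mul, integral_pow]
        push_cast
        ring

noncomputable def Lmap (k : ℕ) : (Fin (k+1) → ℝ) →ₗ[ℝ] (Fin (k+1) → ℝ) where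
  toFun v j := if (j:ℕ) = 0 then v 0
    else ∑ i : Fin (k+1), v i / ((i:ℕ) + (j:ℕ) : ℝ)
  map_add' v w := by
    funext j
    by_cases h : j = 0 <;>
      simp [h, add_div, Finset.sum_add_distrib]
  map_smul' r v := by
    funext j
    by_cases h : j = 0 <;>
      simp [h, Finset.mul_sum, div_eq_mul_inv, mul_assoc]

lemma Lmap_apply (k : ℕ) (v : Fin (k+1) → ℝ) (j : Fin (k+1)) :
    Lmap k v j = if (j:ℕ) = 0 then v 0
      else ∑ i : Fin (k+1), v i / ((i:ℕ) + (j:ℕ) : ℝ) := rfl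

noncomputable def Pv (k : ℕ) (v : Fin (k+1) → ℝ) : Polynomial ℝ :=
  ∑ i : Fin (k+1), Polynomial.C (v i) * Polynomial.X ^ (i:ℕ)

lemma Pv_eq (k : ℕ) (q : Polynomial ℝ) (hq : q.natDegree ≤ k) :
    Pv k (fun i => q.coeff i) = q := by
  rw [Pv, Fin.sum_univ_eq_sum_range (fun i => Polynomial.C (q.coeff i) * Polynomial.X ^ i)]
  conv_rhs => rw [Polynomial.as_sum_range' q (k+1) (Nat.lt_succ_of_le hq)]
  exact Finset.sum_congr rfl (fun i _ => Polynomial.C_mul_X_pow_eq_monomial)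

lemma Pv_coeff (k : ℕ) (v : Fin (k+1) → ℝ) (i0 : Fin (k+1)) :
    (Pv k v).coeff (i0 : ℕ) = v i0 := by
  rw [Pv, Polynomial.finset_sum_coeff]
  rw [Finset.sum_eq_single i0]
  · simp
  · intro i _ hne
    rw [Polynomial.coeff_C_mul, Polynomial.coeff_X_pow,
      if_neg (fun hc : (i0:ℕ) = (i:ℕ) => hne (Fin.ext hc.symm)), mul_zero]
  · intro h; exact absurd (Finset.mem_univ i0) h

lemma Pv_natDegree (k : ℕ) (v : Fin (k+1) → ℝ) : (Pv k v).natDegree ≤ k := by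
  apply Polynomial.natDegree_sum_le_of_forall_le
  intro i _
  exact (Polynomial.natDegree_C_mul_X_pow_le (v i) (i:ℕ)).trans (Nat.le_of_lt_succ i.isLt)

lemma Lmap_integral (k : ℕ) (v : Fin (k+1) → ℝ) (j : Fin (k+1)) (m : ℕ) (hj : (j:ℕ) = m + 1) :
    Lmap k v j = ∫ t in (0:ℝ)..1, (Pv k v).eval t * t^m := by
  rw [poly_int k m _ (Pv_natDegree k v)]
  have h0 : (j:ℕ) ≠ 0 := by omega
  rw [Lmap_apply, if_neg h0,
    ← Fin.sum_univ_eq_sum_range (fun i => (Pv k v).coeff i / ((i:ℝ) + m + 1))]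
  refine Finset.sum_congr rfl (fun i _ => ?_)
  rw [Pv_coeff, hj]
  push_cast
  ring

lemma Lmap_inj (k : ℕ) : Function.Injective (Lmap k) := by
  suffices h : ∀ v, Lmap k v = 0 → v = 0 by
    intro v w hvw
    have := h (v - w) (by rw [map_sub, hvw, sub_self])
    exact sub_eq_zero.mp this
  intro v hv
  set q := Pv k v with hqdef
  have hcoeff0 : q.coeff 0 = v 0 := Pv_coeff k v 0
  have hv0 : v 0 = 0 := by
    have h := congrFun hv 0
    rw [Lmap_apply] at h
    simpa using h
  have hints : ∀ m < k, (∫ t in (0:ℝ)..1, q.eval t * t^m) = 0 := by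
    intro m hm
    have hj : ((⟨m+1, by omega⟩ : Fin (k+1)):ℕ) = m + 1 := rfl
    rw [← Lmap_integral k v ⟨m+1, by omega⟩ m hj]
    exact congrFun hv _
  have hq0 : q = 0 := by
    by_contra hqne
    have hXdvd : Polynomial.X ∣ q := Polynomial.X_dvd_iff.mpr (by rw [hcoeff0]; exact hv0)
    obtain ⟨Q, hQ⟩ := hXdvd
    have hQne : Q ≠ 0 := by rintro rfl; simp at hQ; exact hqne hQ
    have hdeg : q.natDegree = 1 + Q.natDegree := by
      rw [hQ, Polynomial.natDegree_mul Polynomial.X_ne_zero hQne, Polynomial.natDegree_X]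
    have hQdeg : Q.natDegree < k := by
      have := Pv_natDegree k v
      rw [← hqdef] at this
      omega
    -- ∫ q·Q = 0 by expanding Q
    have hiQ : (∫ t in (0:ℝ)..1, q.eval t * Q.eval t) = 0 := by
      have hevQ : ∀ t : ℝ, q.eval t * Q.eval t
          = ∑ m ∈ Finset.range k, Q.coeff m * (q.eval t * t^m) := by
        intro t
        rw [Polynomial.eval_eq_sum_range' hQdeg t, Finset.mul_sum]
        exact Finset.sum_congr rfl (fun m _ => by ring)
      rw [intervalIntegral.integral_congr (g := fun t => ∑ m ∈ Finset.range k, Q.coeff m * (q.eval t * t^m)) (fun t _ => hevQ t)]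
      rw [intervalIntegral.integral_finset_sum]
      · apply Finset.sum_eq_zero
        intro m hm
        rw [intervalIntegral.integral_const_mul, hints m (Finset.mem_range.mp hm), mul_zero]
      · intro m _
        exact (continuous_const.mul ((Pv k v).continuous.mul (continuous_pow m))).intervalIntegrable _ _
    -- but ∫ q·Q = ∫ t Q(t)^2 > 0
    have hpos : 0 < ∫ t in (0:ℝ)..1, q.eval t * Q.eval t := by
      have hev : ∀ t : ℝ, q.eval t * Q.eval t = t * (Q.eval t)^2 := by
        intro t; rw [hQ]; simp [Polynomial.eval_mul]; ring
      rw [intervalIntegral.integral_congr (g := fun t => t * (Q.eval t)^2) (fun t _ => hev t)]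
      apply intervalIntegral.integral_pos zero_lt_one
      · exact (continuous_id.mul (Q.continuous.pow 2)).continuousOn
      · intro x hx
        exact mul_nonneg (le_of_lt hx.1) (sq_nonneg _)
      · obtain ⟨t0, ht0⟩ := ((Set.Ioo_infinite (zero_lt_one)).diff
          (Polynomial.finite_setOf_isRoot hQne)).nonempty
        refine ⟨t0, ⟨le_of_lt ht0.1.1, le_of_lt ht0.1.2⟩, ?_⟩
        have hne : Q.eval t0 ≠ 0 := ht0.2
        have h2 : 0 < (Q.eval t0)^2 := by positivity
        exact mul_pos ht0.1.1 h2
    rw [hiQ] at hpos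
    exact lt_irrefl _ hpos
  funext i
  have := Pv_coeff k v i
  rw [← hqdef, hq0] at this
  simpa using this.symm

lemma ref_lemma (k : ℕ) : ∃ M : ℝ, 0 < M ∧ ∀ q : Polynomial ℝ, q.natDegree ≤ k →
    (∑ i ∈ Finset.range (k+1), |q.coeff i|)
      ≤ M * (|q.eval 0| + ∑ j ∈ Finset.range k, |∫ t in (0:ℝ)..1, q.eval t * t^j|) := by
  have hinj := Lmap_inj k
  have hsurj : Function.Surjective (Lmap k) :=
    LinearMap.injective_iff_surjective.mp hinj
  let E := LinearEquiv.ofBijective (Lmap k) ⟨hinj, hsurj⟩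
  let G : (Fin (k+1) → ℝ) →L[ℝ] (Fin (k+1) → ℝ) :=
    { toLinearMap := (E.symm : (Fin (k+1) → ℝ) →ₗ[ℝ] (Fin (k+1) → ℝ)),
      cont := LinearMap.continuous_of_finiteDimensional _ }
  refine ⟨(k+1) * (‖G‖ + 1), by positivity, ?_⟩
  intro q hq
  set v : Fin (k+1) → ℝ := fun i => q.coeff i with hvdef
  have hPv : Pv k v = q := Pv_eq k q hq
  set R := |q.eval 0| + ∑ j ∈ Finset.range k, |∫ t in (0:ℝ)..1, q.eval t * t^j| with hR
  have hRnn : 0 ≤ R := by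
    apply add_nonneg (abs_nonneg _)
    exact Finset.sum_nonneg (fun j _ => abs_nonneg _)
  have hLvR : ‖Lmap k v‖ ≤ R := by
    rw [pi_norm_le_iff_of_nonneg hRnn]
    intro j
    rw [Real.norm_eq_abs]
    by_cases hj : (j:ℕ) = 0
    · have h1 : Lmap k v j = q.eval 0 := by
        rw [Lmap_apply, if_pos hj]
        show q.coeff ((0 : Fin (k+1)):ℕ) = q.eval 0
        rw [Fin.val_zero, Polynomial.coeff_zero_eq_eval_zero]
      rw [h1]
      exact le_add_of_nonneg_right (Finset.sum_nonneg fun j _ => abs_nonneg _)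
    · obtain ⟨m, hm⟩ : ∃ m, (j:ℕ) = m + 1 := ⟨(j:ℕ) - 1, by omega⟩
      have hmk : m < k := by have := j.isLt; omega
      have h1 : Lmap k v j = ∫ t in (0:ℝ)..1, q.eval t * t^m := by
        rw [Lmap_integral k v j m hm, hPv]
      rw [h1]
      have h2 : |∫ t in (0:ℝ)..1, q.eval t * t^m|
          ≤ ∑ j ∈ Finset.range k, |∫ t in (0:ℝ)..1, q.eval t * t^j| :=
        Finset.single_le_sum (f := fun j => |∫ t in (0:ℝ)..1, q.eval t * t^j|)
          (fun i _ => abs_nonneg _) (Finset.mem_range.mpr hmk)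
      exact h2.trans (le_add_of_nonneg_left (abs_nonneg _))
  have hvnorm : ‖v‖ ≤ (‖G‖ + 1) * R := by
    have hGv : G (Lmap k v) = v := by
      show E.symm (Lmap k v) = v
      have h3 : Lmap k v = E v := rfl
      rw [h3, LinearEquiv.symm_apply_apply]
    calc ‖v‖ = ‖G (Lmap k v)‖ := by rw [hGv]
      _ ≤ ‖G‖ * ‖Lmap k v‖ := G.le_opNorm _
      _ ≤ (‖G‖ + 1) * R :=
          mul_le_mul (by linarith [norm_nonneg G]) hLvR (norm_nonneg _)
            (by linarith [norm_nonneg G])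
  calc (∑ i ∈ Finset.range (k+1), |q.coeff i|)
      = ∑ i : Fin (k+1), |v i| :=
        (Fin.sum_univ_eq_sum_range (fun i => |q.coeff i|) (k+1)).symm
    _ ≤ ∑ _i : Fin (k+1), ‖v‖ := Finset.sum_le_sum (fun i _ => by
        rw [← Real.norm_eq_abs]; exact norm_le_pi_norm v i)
    _ = (k+1) * ‖v‖ := by
        rw [Finset.sum_const, Finset.card_univ]
        simp [nsmul_eq_mul]
    _ ≤ (k+1) * ((‖G‖+1) * R) :=
        mul_le_mul_of_nonneg_left hvnorm (by positivity)
    _ = (k+1) * (‖G‖+1) * R := by ring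

lemma ftc_aux {a c : ℝ} (hac : a < c) {f f' : ℝ → ℝ}
    (hcont : ContinuousOn f (Set.Icc a c))
    (hderiv : ∀ x ∈ Set.Icc a c, HasDerivWithinAt f (f' x) (Set.Icc a c) x)
    (hint : ContinuousOn f' (Set.Icc a c))
    {s : ℝ} (hs : s ∈ Set.Icc a c) :
    ∫ t in a..s, f' t = f s - f a := by
  apply intervalIntegral.integral_eq_sub_of_hasDeriv_right_of_le hs.1
  · exact hcont.mono (Set.Icc_subset_Icc le_rfl hs.2)
  · intro x hx
    have hxc : x < c := lt_of_lt_of_le hx.2 hs.2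
    have hxIcc : x ∈ Set.Icc a c := ⟨le_of_lt hx.1, le_of_lt hxc⟩
    exact (hderiv x hxIcc).mono_of_mem_nhdsWithin
      (Icc_mem_nhdsGT_of_mem ⟨hxIcc.1, hxc⟩)
  · have : Set.uIcc a s = Set.Icc a s := Set.uIcc_of_le hs.1
    exact ContinuousOn.intervalIntegrable
      (this ▸ (hint.mono (Set.Icc_subset_Icc le_rfl hs.2)))

lemma taylorish (a c : ℝ) (hac : a < c) :
    ∀ n : ℕ, ∀ u : ℝ → ℝ, ContDiffOn ℝ (n+1) u (Set.Icc a c) →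
    ∃ T : Polynomial ℝ, T.natDegree ≤ n ∧ T.eval a = u a ∧
      ∀ s ∈ Set.Icc a c, |u s - T.eval s|
        ≤ (c-a)^n * ∫ t in a..c, |iteratedDerivWithin (n+1) u (Set.Icc a c) t| := by
  have hUD : UniqueDiffOn ℝ (Set.Icc a c) := uniqueDiffOn_Icc hac
  have huIcc : ∀ s ∈ Set.Icc a c, Set.uIcc a s = Set.Icc a s :=
    fun s hs => Set.uIcc_of_le hs.1
  intro n
  induction n with
  | zero =>
    intro u hu
    refine ⟨Polynomial.C (u a), by simp, by simp, ?_⟩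
    intro s hs
    set w := derivWithin u (Set.Icc a c) with hw
    have hw_cont : ContinuousOn w (Set.Icc a c) :=
      hu.continuousOn_derivWithin hUD (by norm_cast)
    have hderiv : ∀ x ∈ Set.Icc a c, HasDerivWithinAt u (w x) (Set.Icc a c) x :=
      fun x hx => ((hu.differentiableOn (by norm_num)) x hx).hasDerivWithinAt
    have hftc : ∫ t in a..s, w t = u s - u a :=
      ftc_aux hac hu.continuousOn hderiv hw_cont hs
    have hiter : ∀ t ∈ Set.Icc a c,
        |iteratedDerivWithin 1 u (Set.Icc a c) t| = |w t| := by
      intro t ht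
      rw [iteratedDerivWithin_succ', iteratedDerivWithin_zero]
    have h1 : |u s - u a| ≤ ∫ t in a..s, |w t| := by
      rw [← hftc]
      exact intervalIntegral.abs_integral_le_integral_abs hs.1
    have h2 : (∫ t in a..s, |w t|) ≤ ∫ t in a..c, |w t| := by
      apply intervalIntegral.integral_mono_interval le_rfl hs.1 hs.2
      · exact Filter.Eventually.of_forall (fun t => abs_nonneg _)
      · exact ContinuousOn.intervalIntegrable (Set.uIcc_of_le (le_of_lt hac) ▸ hw_cont.abs)
    have h3 : (∫ t in a..c, |w t|)
        = ∫ t in a..c, |iteratedDerivWithin 1 u (Set.Icc a c) t| := by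
      apply intervalIntegral.integral_congr
      intro t ht
      rw [Set.uIcc_of_le (le_of_lt hac)] at ht
      exact (hiter t ht).symm
    simp only [Polynomial.eval_C, pow_zero, one_mul]
    calc |u s - u a| ≤ ∫ t in a..s, |w t| := h1
      _ ≤ ∫ t in a..c, |w t| := h2
      _ = _ := h3
  | succ n IH =>
    intro u hu
    set w := derivWithin u (Set.Icc a c) with hwdef
    have hw : ContDiffOn ℝ (n+1) w (Set.Icc a c) := by
      apply hu.derivWithin hUD
      norm_cast
    obtain ⟨Q, hQdeg, hQa, hQbound⟩ := IH w hw
    have hiter : ∀ t ∈ Set.Icc a c,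
        iteratedDerivWithin (n+1+1) u (Set.Icc a c) t
          = iteratedDerivWithin (n+1) w (Set.Icc a c) t := by
      intro t ht
      rw [iteratedDerivWithin_succ']
    -- antiderivative of Q with value u a at a
    set A : Polynomial ℝ := ∑ i ∈ Finset.range (n+1),
      Polynomial.C (Q.coeff i / (i+1)) * Polynomial.X ^ (i+1) with hA
    have hA' : A.derivative = Q := by
      rw [hA, Polynomial.derivative_sum]
      conv_rhs => rw [Polynomial.as_sum_range' Q (n+1) (Nat.lt_succ_of_le hQdeg)]
      refine Finset.sum_congr rfl (fun i _ => ?_)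
      rw [Polynomial.derivative_C_mul, Polynomial.derivative_X_pow]
      rw [← Polynomial.C_mul_X_pow_eq_monomial]
      rw [Nat.add_sub_cancel]
      rw [← mul_assoc, ← Polynomial.C_mul]
      congr 1
      push_cast
      field_simp
    set P : Polynomial ℝ := Polynomial.C (u a - A.eval a) + A with hP
    have hPa : P.eval a = u a := by simp [hP]
    have hPdeg : P.natDegree ≤ n+1 := by
      refine (Polynomial.natDegree_add_le _ _).trans (max_le (by simp) ?_)
      apply Polynomial.natDegree_sum_le_of_forall_le
      intro i hi
      exact (Polynomial.natDegree_C_mul_X_pow_le _ _).trans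
        (Nat.succ_le_succ (Nat.le_of_lt_succ (Finset.mem_range.mp hi)))
    have hP' : P.derivative = Q := by
      rw [hP, Polynomial.derivative_add, Polynomial.derivative_C, zero_add, hA']
    refine ⟨P, hPdeg, hPa, ?_⟩
    intro s hs
    have hw_cont : ContinuousOn w (Set.Icc a c) := hw.continuousOn
    have hderiv_u : ∀ x ∈ Set.Icc a c, HasDerivWithinAt u (w x) (Set.Icc a c) x :=
      fun x hx => ((hu.differentiableOn (by norm_cast)) x hx).hasDerivWithinAt
    have hderiv : ∀ x ∈ Set.Icc a c,
        HasDerivWithinAt (fun y => u y - P.eval y) (w x - Q.eval x) (Set.Icc a c) x := by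
      intro x hx
      refine (hderiv_u x hx).sub ?_
      have := (P.hasDerivAt x).hasDerivWithinAt (s := Set.Icc a c)
      rwa [hP'] at this
    have hftc : ∫ t in a..s, (w t - Q.eval t) = (u s - P.eval s) - (u a - P.eval a) :=
      ftc_aux hac (hu.continuousOn.sub P.continuousOn) hderiv
        (hw_cont.sub Q.continuousOn) hs
    rw [hPa, sub_self, sub_zero] at hftc
    set D := (c-a)^n * ∫ t in a..c, |iteratedDerivWithin (n+1) w (Set.Icc a c) t| with hD
    have hDnn : 0 ≤ D := by
      apply mul_nonneg (pow_nonneg (by linarith) n)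
      exact intervalIntegral.integral_nonneg (le_of_lt hac) (fun t _ => abs_nonneg _)
    have habs : |u s - P.eval s| ≤ ∫ t in a..s, |w t - Q.eval t| := by
      rw [← hftc]
      exact intervalIntegral.abs_integral_le_integral_abs hs.1
    have hmono : (∫ t in a..s, |w t - Q.eval t|) ≤ ∫ t in a..s, D := by
      apply intervalIntegral.integral_mono_on hs.1
      · exact ContinuousOn.intervalIntegrable
          (huIcc s hs ▸ ((hw_cont.sub Q.continuousOn).mono
            (Set.Icc_subset_Icc le_rfl hs.2)).abs)
      · exact intervalIntegrable_const
      · intro t ht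
        exact hQbound t ⟨ht.1, le_trans ht.2 hs.2⟩
    have hconst : (∫ t in a..s, D) = (s - a) * D := by
      rw [intervalIntegral.integral_const, smul_eq_mul]
    have hfinal : |u s - P.eval s| ≤ (c - a) * D := by
      calc |u s - P.eval s| ≤ ∫ t in a..s, D := le_trans habs hmono
        _ = (s-a) * D := hconst
        _ ≤ (c-a) * D := by
            apply mul_le_mul_of_nonneg_right _ hDnn
            linarith [hs.2]
    have hInteq : (∫ t in a..c, |iteratedDerivWithin (n+1) w (Set.Icc a c) t|)
        = ∫ t in a..c, |iteratedDerivWithin (n+1+1) u (Set.Icc a c) t| := by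
      apply intervalIntegral.integral_congr
      intro t ht
      rw [Set.uIcc_of_le (le_of_lt hac)] at ht
      exact congrArg abs (hiter t ht).symm
    calc |u s - P.eval s| ≤ (c-a) * D := hfinal
      _ = (c-a)^(n+1) * ∫ t in a..c, |iteratedDerivWithin (n+1+1) u (Set.Icc a c) t| := by
          rw [hD, hInteq]; ring

/-- Optimal approximation estimate for the Gauss--Radau projection:
`‖u - Πu‖_{L²(a,c)} ≤ C h^{k+1} ‖u^{(k+1)}‖_{L²(a,c)}` with `h = c - a`
and `C` depending only on `k`. -/
theorem stmt16 (k : ℕ) :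
    ∃ C : ℝ, 0 < C ∧
      ∀ a c : ℝ, a < c →
        ∀ u : ℝ → ℝ, ContDiffOn ℝ (k + 1) u (Set.Icc a c) →
          ∀ p : Polynomial ℝ, p.natDegree ≤ k → p.eval a = u a →
            (∀ j < k, (∫ s in a..c, (u s - p.eval s) * s ^ j) = 0) →
            Real.sqrt (∫ s in a..c, (u s - p.eval s) ^ 2)
              ≤ C * (c - a) ^ (k + 1) *
                Real.sqrt (∫ s in a..c,
                  (iteratedDerivWithin (k + 1) u (Set.Icc a c) s) ^ 2) := by
  obtain ⟨M, hM, href⟩ := ref_lemma k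
  refine ⟨1 + M * k, by positivity, ?_⟩
  intro a c hac u hu p hpdeg hpa horth
  set h : ℝ := c - a with hh
  have hhpos : 0 < h := by simp [hh]; linarith
  have hne : h ≠ 0 := ne_of_gt hhpos
  have hUD : UniqueDiffOn ℝ (Set.Icc a c) := uniqueDiffOn_Icc hac
  set K := Real.sqrt (∫ s in a..c, (iteratedDerivWithin (k + 1) u (Set.Icc a c) s) ^ 2) with hK
  have hKnn : 0 ≤ K := Real.sqrt_nonneg _
  -- continuity facts
  have hu_cont : ContinuousOn u (Set.Icc a c) := hu.continuousOn
  have hup_cont : ContinuousOn (fun s => u s - p.eval s) (Set.Icc a c) :=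
    hu_cont.sub p.continuousOn
  have hiter_cont : ContinuousOn (iteratedDerivWithin (k+1) u (Set.Icc a c)) (Set.Icc a c) :=
    hu.continuousOn_iteratedDerivWithin le_rfl hUD
  -- Step A : Taylor
  have hCS : (∫ t in a..c, |iteratedDerivWithin (k+1) u (Set.Icc a c) t|)
      ≤ Real.sqrt h * K := cs_aux (le_of_lt hac) hiter_cont
  obtain ⟨T, hTdeg, hTa, hTbound⟩ := taylorish a c hac k u hu
  set B1 : ℝ := h^k * (Real.sqrt h * K) with hB1
  have hB1nn : 0 ≤ B1 := by positivity
  have hTb : ∀ s ∈ Set.Icc a c, |u s - T.eval s| ≤ B1 := by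
    intro s hs
    refine (hTbound s hs).trans ?_
    rw [hB1]
    exact mul_le_mul_of_nonneg_left hCS (by positivity)
  -- r and q
  set r : Polynomial ℝ := T - p with hr
  have hrdeg : r.natDegree ≤ k :=
    (Polynomial.natDegree_sub_le T p).trans (max_le hTdeg hpdeg)
  have hra : r.eval a = 0 := by
    rw [hr, Polynomial.eval_sub, hTa, hpa, sub_self]
  set f : Polynomial ℝ := Polynomial.C a + Polynomial.C h * Polynomial.X with hf
  have hfeval : ∀ t : ℝ, f.eval t = a + h * t := by intro t; simp [hf]
  set q : Polynomial ℝ := r.comp f with hq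
  have hqeval : ∀ t : ℝ, q.eval t = r.eval (a + h * t) := by
    intro t; rw [hq, Polynomial.eval_comp, hfeval]
  have hfdeg : f.natDegree ≤ 1 := by
    refine (Polynomial.natDegree_add_le _ _).trans (max_le (by simp) ?_)
    simp [Polynomial.natDegree_C_mul_X h hne]
  have hqdeg : q.natDegree ≤ k := by
    refine (Polynomial.natDegree_comp_le).trans ?_
    calc r.natDegree * f.natDegree ≤ k * 1 := Nat.mul_le_mul hrdeg hfdeg
      _ = k := by ring
  have hq0 : q.eval 0 = 0 := by rw [hqeval 0]; simpa using hra
  -- orthogonality transferred to shifted monomials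
  have horth' : ∀ j, j < k → (∫ s in a..c, (u s - p.eval s) * ((s - a)/h)^j) = 0 := by
    intro j hj
    have hexp : ∀ s : ℝ, (u s - p.eval s) * ((s - a)/h)^j
        = ∑ i ∈ Finset.range (j+1),
            ((-a)^(j-i) * (Nat.choose j i : ℝ) / h^j) * ((u s - p.eval s) * s^i) := by
      intro s
      have hbin : (s - a)^j = ∑ i ∈ Finset.range (j+1), s^i * (-a)^(j-i) * (Nat.choose j i : ℝ) := by
        rw [sub_eq_add_neg, add_pow]
      rw [div_pow, hbin, Finset.sum_div, Finset.mul_sum]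
      refine Finset.sum_congr rfl fun i _ => by ring
    rw [intervalIntegral.integral_congr (g := fun s => ∑ i ∈ Finset.range (j+1),
      ((-a)^(j-i) * (Nat.choose j i : ℝ) / h^j) * ((u s - p.eval s) * s^i))
      (fun s _ => hexp s)]
    rw [intervalIntegral.integral_finset_sum]
    · apply Finset.sum_eq_zero
      intro i hi
      have hik : i < k := lt_of_lt_of_le (Finset.mem_range.mp hi) (Nat.succ_le_of_lt hj)
      rw [intervalIntegral.integral_const_mul, horth i hik, mul_zero]
    · intro i _
      apply ContinuousOn.intervalIntegrable
      rw [Set.uIcc_of_le (le_of_lt hac)]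
      exact continuousOn_const.mul (hup_cont.mul (continuous_pow i).continuousOn)
  -- integrals of q against monomials
  have hTmU_cont : ContinuousOn (fun s => T.eval s - u s) (Set.Icc a c) :=
    T.continuousOn.sub hu_cont
  have hphi_mem : ∀ s ∈ Set.Icc a c, (s - a)/h ∈ Set.Icc (0:ℝ) 1 := by
    intro s hs
    constructor
    · apply div_nonneg (by linarith [hs.1]) (le_of_lt hhpos)
    · rw [div_le_one hhpos]; linarith [hs.2]
  have hqint : ∀ m, m < k → |∫ t in (0:ℝ)..1, q.eval t * t^m| ≤ B1 := by
    intro m hm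
    set F : ℝ → ℝ := fun s => r.eval s * ((s - a)/h)^m with hF
    have hcomp : ∀ t : ℝ, q.eval t * t^m = F (h * t + a) := by
      intro t
      rw [hF]
      simp only
      rw [hqeval]
      have : (h * t + a - a)/h = t := by field_simp; ring
      rw [this]
      ring_nf
    have hchg : (∫ t in (0:ℝ)..1, q.eval t * t^m) = h⁻¹ * ∫ s in a..c, F s := by
      rw [intervalIntegral.integral_congr (g := fun t => F (h * t + a)) (fun t _ => hcomp t)]
      rw [intervalIntegral.integral_comp_mul_add F hne a]
      rw [smul_eq_mul]
      congr 2
      · ring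
      · rw [hh]; ring
    -- split F-integral
    have hsplit : (∫ s in a..c, F s)
        = (∫ s in a..c, (T.eval s - u s) * ((s-a)/h)^m)
          + ∫ s in a..c, (u s - p.eval s) * ((s-a)/h)^m := by
      rw [← intervalIntegral.integral_add]
      · apply intervalIntegral.integral_congr
        intro s _
        rw [hF]
        simp only
        rw [hr, Polynomial.eval_sub]
        ring
      · apply ContinuousOn.intervalIntegrable
        rw [Set.uIcc_of_le (le_of_lt hac)]
        exact hTmU_cont.mul ((continuousOn_id.sub continuousOn_const).div_const h |>.pow m)
      · apply ContinuousOn.intervalIntegrable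
        rw [Set.uIcc_of_le (le_of_lt hac)]
        exact hup_cont.mul ((continuousOn_id.sub continuousOn_const).div_const h |>.pow m)
    have hTmUb : |∫ s in a..c, (T.eval s - u s) * ((s-a)/h)^m| ≤ h * B1 := by
      have habs : |∫ s in a..c, (T.eval s - u s) * ((s-a)/h)^m|
          ≤ ∫ s in a..c, |(T.eval s - u s) * ((s-a)/h)^m| :=
        intervalIntegral.abs_integral_le_integral_abs (le_of_lt hac)
      refine habs.trans ?_
      have hpt : ∀ s ∈ Set.Icc a c, |(T.eval s - u s) * ((s-a)/h)^m| ≤ B1 := by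
        intro s hs
        rw [abs_mul]
        have h1 : |T.eval s - u s| ≤ B1 := by
          rw [abs_sub_comm]; exact hTb s hs
        have h2 : |((s-a)/h)^m| ≤ 1 := by
          rw [abs_pow]
          apply pow_le_one₀ (abs_nonneg _)
          rw [abs_of_nonneg (hphi_mem s hs).1]
          exact (hphi_mem s hs).2
        calc |T.eval s - u s| * |((s-a)/h)^m| ≤ B1 * 1 :=
            mul_le_mul h1 h2 (abs_nonneg _) hB1nn
          _ = B1 := mul_one _
      calc (∫ s in a..c, |(T.eval s - u s) * ((s-a)/h)^m|)
          ≤ ∫ s in a..c, B1 := by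
            apply intervalIntegral.integral_mono_on (le_of_lt hac) _ intervalIntegrable_const hpt
            apply ContinuousOn.intervalIntegrable
            rw [Set.uIcc_of_le (le_of_lt hac)]
            exact (hTmU_cont.mul ((continuousOn_id.sub continuousOn_const).div_const h |>.pow m)).abs
        _ = h * B1 := by rw [intervalIntegral.integral_const, smul_eq_mul, hh]
    rw [hchg, hsplit, horth' m hm, add_zero, abs_mul, abs_inv, abs_of_pos hhpos]
    calc h⁻¹ * |∫ s in a..c, (T.eval s - u s) * ((s-a)/h)^m| ≤ h⁻¹ * (h * B1) := by
          apply mul_le_mul_of_nonneg_left hTmUb (by positivity)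
      _ = B1 := by field_simp
  -- apply reference lemma
  have hqsum : (∑ i ∈ Finset.range (k+1), |q.coeff i|) ≤ M * (k * B1) := by
    refine (href q hqdeg).trans ?_
    apply mul_le_mul_of_nonneg_left _ (le_of_lt hM)
    rw [hq0, abs_zero, zero_add]
    calc (∑ j ∈ Finset.range k, |∫ t in (0:ℝ)..1, q.eval t * t^j|)
        ≤ ∑ j ∈ Finset.range k, B1 :=
          Finset.sum_le_sum (fun j hj => hqint j (Finset.mem_range.mp hj))
      _ = k * B1 := by rw [Finset.sum_const, Finset.card_range, nsmul_eq_mul]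
  -- pointwise bound on r
  have hrb : ∀ s ∈ Set.Icc a c, |r.eval s| ≤ M * (k * B1) := by
    intro s hs
    have hseq : r.eval s = q.eval ((s - a)/h) := by
      rw [hqeval]
      congr 1
      field_simp; ring
    rw [hseq]
    have ht01 := hphi_mem s hs
    set t := (s - a)/h
    have hevq : q.eval t = ∑ i ∈ Finset.range (k+1), q.coeff i * t^i :=
      Polynomial.eval_eq_sum_range' (Nat.lt_succ_of_le hqdeg) t
    rw [hevq]
    calc |∑ i ∈ Finset.range (k+1), q.coeff i * t^i|
        ≤ ∑ i ∈ Finset.range (k+1), |q.coeff i * t^i| := Finset.abs_sum_le_sum_abs _ _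
      _ ≤ ∑ i ∈ Finset.range (k+1), |q.coeff i| := by
          apply Finset.sum_le_sum
          intro i _
          rw [abs_mul]
          calc |q.coeff i| * |t^i| ≤ |q.coeff i| * 1 := by
                apply mul_le_mul_of_nonneg_left _ (abs_nonneg _)
                rw [abs_pow]
                apply pow_le_one₀ (abs_nonneg _)
                rw [abs_of_nonneg ht01.1]
                exact ht01.2
            _ = |q.coeff i| := mul_one _
      _ ≤ M * (k * B1) := hqsum
  -- pointwise bound on the error
  set B : ℝ := (1 + M * k) * B1 with hB
  have hBnn : 0 ≤ B := by positivity
  have heb : ∀ s ∈ Set.Icc a c, |u s - p.eval s| ≤ B := by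
    intro s hs
    have : u s - p.eval s = (u s - T.eval s) + r.eval s := by
      rw [hr, Polynomial.eval_sub]; ring
    rw [this]
    calc |(u s - T.eval s) + r.eval s| ≤ |u s - T.eval s| + |r.eval s| := abs_add_le _ _
      _ ≤ B1 + M * (k * B1) := add_le_add (hTb s hs) (hrb s hs)
      _ = B := by rw [hB]; ring
  -- conclude
  have hsq : (∫ s in a..c, (u s - p.eval s)^2) ≤ h * B^2 := by
    have : (∫ s in a..c, (u s - p.eval s)^2) ≤ ∫ s in a..c, B^2 := by
      apply intervalIntegral.integral_mono_on (le_of_lt hac) _ intervalIntegrable_const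
      · intro s hs
        have := heb s hs
        nlinarith [heb s hs, abs_nonneg (u s - p.eval s), sq_abs (u s - p.eval s)]
      · apply ContinuousOn.intervalIntegrable
        rw [Set.uIcc_of_le (le_of_lt hac)]
        exact hup_cont.pow 2
    refine this.trans ?_
    rw [intervalIntegral.integral_const, smul_eq_mul, hh]
  calc Real.sqrt (∫ s in a..c, (u s - p.eval s)^2)
      ≤ Real.sqrt (h * B^2) := Real.sqrt_le_sqrt hsq
    _ = Real.sqrt h * B := by
        rw [Real.sqrt_mul (le_of_lt hhpos), Real.sqrt_sq hBnn]
    _ = (1 + M * k) * h^(k+1) * K := by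
        have hss : Real.sqrt h * Real.sqrt h = h := Real.mul_self_sqrt (le_of_lt hhpos)
        calc Real.sqrt h * B = (1 + M*k) * (h^k * (Real.sqrt h * Real.sqrt h) * K) := by
              rw [hB, hB1]; ring
          _ = (1 + M*k) * (h^k * h * K) := by rw [hss]
          _ = (1 + M*k) * h^(k+1) * K := by rw [pow_succ]; ring
    _ = (1 + M * ↑k) * (c - a)^(k+1) * K := by rw [hh]
end

section
/- Let b > 0, L ≥ 0, and let u, v : [0,b] → ℝ be continuous with radial averages ũ, ṽ satisfying |u(r) − ũ(r)| ≤ L·r and |v(r) − ṽ(r)| ≤ L·r for all r ∈ (0,b]. Define g_u(r) := exp(−∫_r^b (1/s)(u(s) − ũ(s))² ds), g_v(r) := exp(−∫_r^b (1/s)(v(s) − ṽ(s))² ds), and the Bondi masses M_u := (b/2)·(1 − (1/b)∫_0^b g_u(s) ds) and M_v := (b/2)·(1 − (1/b)∫_0^b g_v(s) ds). Then |M_u − M_v| ≤ 3·L·b^{3/2}·(∫_0^b (u(s) − v(s))² ds)^{1/2}. -/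
open MeasureTheory intervalIntegral

lemma bondi_memLp_of_bound {t : ℝ} {w : ℝ → ℝ}
    (hw : AEStronglyMeasurable w (volume.restrict (Set.Ioc 0 t)))
    (C : ℝ) (hC : ∀ᵐ s ∂(volume.restrict (Set.Ioc 0 t)), |w s| ≤ C) :
    MemLp w (ENNReal.ofReal 2) (volume.restrict (Set.Ioc 0 t)) := by
  haveI : IsFiniteMeasure (volume.restrict (Set.Ioc 0 t)) :=
    ⟨by rw [Measure.restrict_apply_univ]; exact measure_Ioc_lt_top⟩
  refine (memLp_top_of_bound hw C ?_).mono_exponent le_top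
  filter_upwards [hC] with s hs using by simpa [Real.norm_eq_abs] using hs

/-- Cauchy–Schwarz for interval integrals of bounded a.e.-measurable functions. -/
lemma bondi_cs {t : ℝ} (ht : 0 ≤ t) {w : ℝ → ℝ}
    (hw : AEStronglyMeasurable w (volume.restrict (Set.Ioc 0 t)))
    (C : ℝ) (hC : ∀ᵐ s ∂(volume.restrict (Set.Ioc 0 t)), |w s| ≤ C) :
    ∫ s in (0:ℝ)..t, |w s| ≤ Real.sqrt t * Real.sqrt (∫ s in (0:ℝ)..t, w s ^ 2) := by
  set μ := volume.restrict (Set.Ioc 0 t) with hμ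
  have hconj : Real.HolderConjugate 2 2 := Real.HolderConjugate.two_two
  have habs : AEStronglyMeasurable (fun s => |w s|) μ := by
    refine hw.norm.congr ?_
    filter_upwards with s using (Real.norm_eq_abs _)
  have hmem : MemLp (fun s => |w s|) (ENNReal.ofReal 2) μ := by
    refine bondi_memLp_of_bound habs C ?_
    filter_upwards [hC] with s hs using by simpa [abs_abs] using hs
  have hone : MemLp (fun _ : ℝ => (1:ℝ)) (ENNReal.ofReal 2) μ := by
    refine bondi_memLp_of_bound aestronglyMeasurable_const 1 ?_
    filter_upwards with s using by norm_num
  have key := integral_mul_le_Lp_mul_Lq_of_nonneg hconj (μ := μ)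
    (f := fun s => |w s|) (g := fun _ => 1)
    (Filter.Eventually.of_forall fun s => abs_nonneg _)
    (Filter.Eventually.of_forall fun s => zero_le_one) hmem hone
  simp only [mul_one] at key
  have h1 : (∫ _ : ℝ, (1:ℝ) ^ (2:ℝ) ∂μ) = t := by
    simp [hμ, Real.volume_Ioc, ENNReal.toReal_ofReal ht, ht]
  have h2 : (∫ a, |w a| ^ (2:ℝ) ∂μ) = ∫ a, w a ^ 2 ∂μ := by
    refine integral_congr_ae (Filter.Eventually.of_forall fun s => ?_)
    show |w s| ^ (2:ℝ) = w s ^ 2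
    rw [show (2:ℝ) = ((2:ℕ):ℝ) by norm_num, Real.rpow_natCast, sq_abs]
  rw [h1, h2] at key
  rw [intervalIntegral.integral_of_le ht, intervalIntegral.integral_of_le ht]
  refine key.trans (le_of_eq ?_)
  rw [mul_comm, Real.sqrt_eq_rpow, Real.sqrt_eq_rpow]

/-- `exp` is 1-Lipschitz on nonpositive reals. -/
lemma bondi_exp_lip {a c : ℝ} (ha : 0 ≤ a) (hc : 0 ≤ c) :
    |Real.exp (-a) - Real.exp (-c)| ≤ |a - c| := by
  have main : ∀ x y : ℝ, 0 ≤ x → x ≤ y → Real.exp (-x) - Real.exp (-y) ≤ y - x := by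
    intro x y hx hxy
    have h1 : Real.exp (-x) ≤ 1 := Real.exp_le_one_iff.2 (by linarith)
    have h2 : (x - y) + 1 ≤ Real.exp (x - y) := Real.add_one_le_exp _
    have h3 : Real.exp (-x) * Real.exp (x - y) = Real.exp (-y) := by
      rw [← Real.exp_add]; ring_nf
    have h4 : 0 < Real.exp (-x) := Real.exp_pos _
    nlinarith
  rcases le_total a c with h | h
  · rw [abs_of_nonneg (by linarith [Real.exp_le_exp.2 (neg_le_neg h)]),
      abs_of_nonpos (by linarith)]
    linarith [main a c ha h]
  · rw [abs_of_nonpos (by linarith [Real.exp_le_exp.2 (neg_le_neg h)]),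
      abs_of_nonneg (by linarith)]
    linarith [main c a hc h]

/-- Interval integrability of the metric-coefficient integrand. -/
lemma bondi_intInt {b L : ℝ} (hb : 0 < b) {u ut : ℝ → ℝ}
    (hu : ContinuousOn u (Set.Icc 0 b))
    (hut : ∀ r ∈ Set.Ioc 0 b, ut r = (1 / r) * ∫ s in (0:ℝ)..r, u s)
    (hub : ∀ r ∈ Set.Ioc 0 b, |u r - ut r| ≤ L * r)
    {s₁ s₂ : ℝ} (h1 : 0 ≤ s₁) (h12 : s₁ ≤ s₂) (h2 : s₂ ≤ b) :
    IntervalIntegrable (fun t => (1 / t) * (u t - ut t) ^ 2) volume s₁ s₂ := by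
  rw [intervalIntegrable_iff_integrableOn_Ioc_of_le h12]
  have hsub : Set.Ioc s₁ s₂ ⊆ Set.Ioc 0 b := Set.Ioc_subset_Ioc h1 h2
  have hF : ContinuousOn (fun r => ∫ s in (0:ℝ)..r, u s) (Set.Icc 0 b) := by
    have h := intervalIntegral.continuousOn_primitive_interval (a := (0:ℝ)) (b := b)
      (μ := volume) (f := u) ?_
    · rwa [Set.uIcc_of_le hb.le] at h
    · rw [Set.uIcc_of_le hb.le]; exact hu.integrableOn_Icc
  have h1t : ContinuousOn (fun t : ℝ => 1 / t) (Set.Ioc 0 b) :=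
    continuousOn_const.div continuousOn_id (fun t ht => ht.1.ne')
  have hg : ContinuousOn
      (fun t => (1/t) * (u t - (1/t) * ∫ s in (0:ℝ)..t, u s) ^ 2) (Set.Ioc 0 b) :=
    h1t.mul (((hu.mono Set.Ioc_subset_Icc_self).sub
      (h1t.mul (hF.mono Set.Ioc_subset_Icc_self))).pow 2)
  have haesm : AEStronglyMeasurable (fun t => (1/t) * (u t - ut t) ^ 2)
      (volume.restrict (Set.Ioc s₁ s₂)) := by
    refine ((hg.aestronglyMeasurable measurableSet_Ioc).mono_measure
      (Measure.restrict_mono hsub le_rfl)).congr ?_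
    rw [Filter.EventuallyEq, ae_restrict_iff' measurableSet_Ioc]
    filter_upwards with t ht
    rw [hut t (hsub ht)]
  have hL2 : 0 ≤ L := by
    have := hub b ⟨hb, le_refl b⟩
    nlinarith [abs_nonneg (u b - ut b)]
  refine Integrable.mono' (g := fun _ => L ^ 2 * b)
    (integrableOn_const measure_Ioc_lt_top.ne) haesm ?_
  rw [ae_restrict_iff' measurableSet_Ioc]
  filter_upwards with t ht
  have ht' := hsub ht
  have htpos : 0 < t := ht'.1
  have hb1 : |u t - ut t| ≤ L * t := hub t ht'
  rw [Real.norm_eq_abs, abs_of_nonneg (mul_nonneg (by positivity) (sq_nonneg _))]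
  have hsq : (u t - ut t) ^ 2 ≤ (L * t) ^ 2 := by
    nlinarith [sq_abs (u t - ut t), abs_nonneg (u t - ut t)]
  calc (1/t) * (u t - ut t) ^ 2 ≤ (1/t) * (L * t) ^ 2 := by
        exact mul_le_mul_of_nonneg_left hsq (by positivity)
    _ = L ^ 2 * t := by field_simp
    _ ≤ L ^ 2 * b := by nlinarith [sq_nonneg L, ht'.2]

/-- Bondi mass error estimate (Corollary 4.5):
`|M_u - M_v| ≤ 3 L b^{3/2} ‖u - v‖_{L²(0,b)}`, where
`M_u = (b/2)(1 - (1/b)∫_0^b g_u)` with `g_u(r) = exp(-∫_r^b (1/s)(u - ũ)² ds)`. -/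
theorem stmt19 (b L : ℝ) (hb : 0 < b) (hL : 0 ≤ L)
    (u v ut vt : ℝ → ℝ)
    (hu : ContinuousOn u (Set.Icc 0 b)) (hv : ContinuousOn v (Set.Icc 0 b))
    (hut : ∀ r ∈ Set.Ioc 0 b, ut r = (1 / r) * ∫ s in (0:ℝ)..r, u s)
    (hvt : ∀ r ∈ Set.Ioc 0 b, vt r = (1 / r) * ∫ s in (0:ℝ)..r, v s)
    (hub : ∀ r ∈ Set.Ioc 0 b, |u r - ut r| ≤ L * r)
    (hvb : ∀ r ∈ Set.Ioc 0 b, |v r - vt r| ≤ L * r) :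
    |(b / 2) * (1 - (1 / b) *
        ∫ s in (0:ℝ)..b, Real.exp (-(∫ t in s..b, (1 / t) * (u t - ut t) ^ 2)))
      - (b / 2) * (1 - (1 / b) *
        ∫ s in (0:ℝ)..b, Real.exp (-(∫ t in s..b, (1 / t) * (v t - vt t) ^ 2)))|
      ≤ 3 * L * b ^ ((3 : ℝ) / 2) * Real.sqrt (∫ s in (0:ℝ)..b, (u s - v s) ^ 2) := by
  set N := Real.sqrt (∫ s in (0:ℝ)..b, (u s - v s) ^ 2) with hN
  have hN0 : 0 ≤ N := Real.sqrt_nonneg _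
  have hsb0 : 0 ≤ Real.sqrt b := Real.sqrt_nonneg _
  have hwc : ContinuousOn (fun s => u s - v s) (Set.Icc 0 b) := hu.sub hv
  obtain ⟨C, hC⟩ := (isCompact_Icc : IsCompact (Set.Icc (0:ℝ) b)).exists_bound_of_continuousOn hwc
  -- interval integrability of w and w² on subintervals
  have hw_ii : ∀ t₁ t₂ : ℝ, 0 ≤ t₁ → t₁ ≤ t₂ → t₂ ≤ b →
      IntervalIntegrable (fun s => u s - v s) volume t₁ t₂ := by
    intro t₁ t₂ h1 h12 h2
    apply ContinuousOn.intervalIntegrable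
    apply hwc.mono
    rw [Set.uIcc_of_le h12]; exact Set.Icc_subset_Icc h1 h2
  have hwsq_ii : ∀ t₁ t₂ : ℝ, 0 ≤ t₁ → t₁ ≤ t₂ → t₂ ≤ b →
      IntervalIntegrable (fun s => (u s - v s) ^ 2) volume t₁ t₂ := by
    intro t₁ t₂ h1 h12 h2
    apply ContinuousOn.intervalIntegrable
    apply (hwc.pow 2).mono
    rw [Set.uIcc_of_le h12]; exact Set.Icc_subset_Icc h1 h2
  have hmono : ∀ t ∈ Set.Icc (0:ℝ) b,
      (∫ s in (0:ℝ)..t, (u s - v s) ^ 2) ≤ ∫ s in (0:ℝ)..b, (u s - v s) ^ 2 := by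
    intro t ht
    have hadd := intervalIntegral.integral_add_adjacent_intervals
      (hwsq_ii 0 t le_rfl ht.1 ht.2) (hwsq_ii t b ht.1 ht.2 le_rfl)
    have hpos : 0 ≤ ∫ s in t..b, (u s - v s) ^ 2 :=
      intervalIntegral.integral_nonneg ht.2 (fun x _ => sq_nonneg _)
    linarith
  -- Cauchy–Schwarz bound on the primitive of w
  have hCS : ∀ t ∈ Set.Icc (0:ℝ) b,
      |∫ s in (0:ℝ)..t, (u s - v s)| ≤ Real.sqrt t * N := by
    intro t ht
    have hsub : Set.Ioc (0:ℝ) t ⊆ Set.Icc 0 b :=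
      fun x hx => ⟨hx.1.le, hx.2.trans ht.2⟩
    have haesm : AEStronglyMeasurable (fun s => u s - v s) (volume.restrict (Set.Ioc 0 t)) :=
      (hwc.mono hsub).aestronglyMeasurable measurableSet_Ioc
    have hbound : ∀ᵐ s ∂(volume.restrict (Set.Ioc 0 t)), |u s - v s| ≤ C := by
      rw [ae_restrict_iff' measurableSet_Ioc]
      filter_upwards with s hs
      simpa [Real.norm_eq_abs] using hC s (hsub hs)
    have h1 : |∫ s in (0:ℝ)..t, (u s - v s)| ≤ ∫ s in (0:ℝ)..t, |u s - v s| :=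
      intervalIntegral.abs_integral_le_integral_abs ht.1
    have h2 := bondi_cs ht.1 haesm C hbound
    have h3 : Real.sqrt (∫ s in (0:ℝ)..t, (u s - v s) ^ 2) ≤ N :=
      Real.sqrt_le_sqrt (hmono t ht)
    calc |∫ s in (0:ℝ)..t, (u s - v s)| ≤ ∫ s in (0:ℝ)..t, |u s - v s| := h1
      _ ≤ Real.sqrt t * Real.sqrt (∫ s in (0:ℝ)..t, (u s - v s) ^ 2) := h2
      _ ≤ Real.sqrt t * N := mul_le_mul_of_nonneg_left h3 (Real.sqrt_nonneg _)
  -- bound on the difference of radial averages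
  have hutvt : ∀ t ∈ Set.Ioc (0:ℝ) b, |ut t - vt t| ≤ N * t ^ (-(1/2) : ℝ) := by
    intro t ht
    have htpos : 0 < t := ht.1
    have hu_ii : IntervalIntegrable u volume 0 t := by
      apply ContinuousOn.intervalIntegrable
      apply hu.mono; rw [Set.uIcc_of_le htpos.le]; exact Set.Icc_subset_Icc le_rfl ht.2
    have hv_ii : IntervalIntegrable v volume 0 t := by
      apply ContinuousOn.intervalIntegrable
      apply hv.mono; rw [Set.uIcc_of_le htpos.le]; exact Set.Icc_subset_Icc le_rfl ht.2
    rw [hut t ht, hvt t ht, ← mul_sub, ← intervalIntegral.integral_sub hu_ii hv_ii]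
    rw [abs_mul, abs_of_nonneg (one_div_nonneg.2 htpos.le)]
    have h1 := hCS t ⟨htpos.le, ht.2⟩
    have hst : Real.sqrt t * Real.sqrt t = t := Real.mul_self_sqrt htpos.le
    have hstpos : 0 < Real.sqrt t := Real.sqrt_pos.2 htpos
    have heq : (1/t) * (Real.sqrt t * N) = N * t ^ (-(1/2) : ℝ) := by
      rw [Real.rpow_neg htpos.le, ← Real.sqrt_eq_rpow]
      field_simp
      nlinarith
    calc (1/t) * |∫ s in (0:ℝ)..t, (u s - v s)| ≤ (1/t) * (Real.sqrt t * N) :=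
          mul_le_mul_of_nonneg_left h1 (one_div_nonneg.2 htpos.le)
      _ = N * t ^ (-(1/2) : ℝ) := heq
  -- the dominating function h and its integrability
  have hh_ii : ∀ t₁ t₂ : ℝ, 0 ≤ t₁ → t₁ ≤ t₂ → t₂ ≤ b →
      IntervalIntegrable (fun t => 2 * L * (|u t - v t| + N * t ^ (-(1/2) : ℝ)))
        volume t₁ t₂ := by
    intro t₁ t₂ h1 h12 h2
    apply IntervalIntegrable.const_mul
    apply IntervalIntegrable.add
    · apply ContinuousOn.intervalIntegrable
      apply (hwc.abs).mono
      rw [Set.uIcc_of_le h12]; exact Set.Icc_subset_Icc h1 h2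
    · exact (intervalIntegrable_rpow' (by norm_num)).const_mul N
  have hh_nonneg : ∀ t : ℝ, 0 ≤ t → 0 ≤ 2 * L * (|u t - v t| + N * t ^ (-(1/2) : ℝ)) := by
    intro t ht
    have := Real.rpow_nonneg ht (-(1/2) : ℝ)
    positivity
  -- value of ∫₀ᵇ h
  have hrpow_int : (∫ t in (0:ℝ)..b, t ^ (-(1/2) : ℝ)) = 2 * Real.sqrt b := by
    rw [integral_rpow (Or.inl (by norm_num))]
    norm_num
    rw [Real.sqrt_eq_rpow]
    ring
  have habsw : (∫ t in (0:ℝ)..b, |u t - v t|) ≤ Real.sqrt b * N := by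
    have haesm : AEStronglyMeasurable (fun s => u s - v s) (volume.restrict (Set.Ioc 0 b)) :=
      (hwc.mono Set.Ioc_subset_Icc_self).aestronglyMeasurable measurableSet_Ioc
    have hbound : ∀ᵐ s ∂(volume.restrict (Set.Ioc 0 b)), |u s - v s| ≤ C := by
      rw [ae_restrict_iff' measurableSet_Ioc]
      filter_upwards with s hs
      simpa [Real.norm_eq_abs] using hC s (Set.Ioc_subset_Icc_self hs)
    exact bondi_cs hb.le haesm C hbound
  have hHval : (∫ t in (0:ℝ)..b, 2 * L * (|u t - v t| + N * t ^ (-(1/2) : ℝ)))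
      ≤ 6 * L * Real.sqrt b * N := by
    rw [intervalIntegral.integral_const_mul, intervalIntegral.integral_add
      (by
        apply ContinuousOn.intervalIntegrable
        apply (hwc.abs).mono
        rw [Set.uIcc_of_le hb.le])
      ((intervalIntegrable_rpow' (by norm_num)).const_mul N),
      intervalIntegral.integral_const_mul, hrpow_int]
    nlinarith
  -- key pointwise bound on the difference of the exponents
  have key : ∀ s ∈ Set.Icc (0:ℝ) b,
      |(∫ t in s..b, (1 / t) * (u t - ut t) ^ 2)
        - (∫ t in s..b, (1 / t) * (v t - vt t) ^ 2)| ≤ 6 * L * Real.sqrt b * N := by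
    intro s hs
    rw [← intervalIntegral.integral_sub (bondi_intInt hb hu hut hub hs.1 hs.2 le_rfl)
      (bondi_intInt hb hv hvt hvb hs.1 hs.2 le_rfl)]
    have step1 : ‖∫ t in s..b, ((1 / t) * (u t - ut t) ^ 2 - (1 / t) * (v t - vt t) ^ 2)‖
        ≤ |∫ t in s..b, 2 * L * (|u t - v t| + N * t ^ (-(1/2) : ℝ))| := by
      apply intervalIntegral.norm_integral_le_abs_of_norm_le ?_ (hh_ii s b hs.1 hs.2 le_rfl)
      rw [ae_restrict_iff' measurableSet_uIoc]
      filter_upwards with t ht'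
      rw [Set.uIoc_of_le hs.2] at ht'
      have htpos : 0 < t := lt_of_le_of_lt hs.1 ht'.1
      have htb : t ∈ Set.Ioc (0:ℝ) b := ⟨htpos, ht'.2⟩
      have ha1 : |u t - ut t| ≤ L * t := hub t htb
      have hc1 : |v t - vt t| ≤ L * t := hvb t htb
      have hd1 : |ut t - vt t| ≤ N * t ^ (-(1/2) : ℝ) := hutvt t htb
      rw [Real.norm_eq_abs]
      have e1 : (1 / t) * (u t - ut t) ^ 2 - (1 / t) * (v t - vt t) ^ 2
          = (1 / t) * (((u t - ut t) + (v t - vt t)) * ((u t - ut t) - (v t - vt t))) := by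
        ring
      rw [e1, abs_mul, abs_mul, abs_of_nonneg (one_div_nonneg.2 htpos.le)]
      have hsum : |(u t - ut t) + (v t - vt t)| ≤ 2 * L * t := by
        calc |(u t - ut t) + (v t - vt t)| ≤ |u t - ut t| + |v t - vt t| := abs_add_le _ _
          _ ≤ 2 * L * t := by linarith
      have hdiff : |(u t - ut t) - (v t - vt t)| ≤ |u t - v t| + N * t ^ (-(1/2) : ℝ) := by
        have e2 : (u t - ut t) - (v t - vt t) = (u t - v t) - (ut t - vt t) := by ring
        rw [e2]
        calc |(u t - v t) - (ut t - vt t)| ≤ |u t - v t| + |ut t - vt t| := abs_sub _ _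
          _ ≤ |u t - v t| + N * t ^ (-(1/2) : ℝ) := by linarith
      calc (1 / t) * (|(u t - ut t) + (v t - vt t)| * |(u t - ut t) - (v t - vt t)|)
          ≤ (1 / t) * ((2 * L * t) * (|u t - v t| + N * t ^ (-(1/2) : ℝ))) := by
            apply mul_le_mul_of_nonneg_left ?_ (one_div_nonneg.2 htpos.le)
            apply mul_le_mul hsum hdiff (abs_nonneg _) (by positivity)
        _ = 2 * L * (|u t - v t| + N * t ^ (-(1/2) : ℝ)) := by field_simp
    have step2 : |∫ t in s..b, 2 * L * (|u t - v t| + N * t ^ (-(1/2) : ℝ))|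
        ≤ 6 * L * Real.sqrt b * N := by
      rw [abs_of_nonneg (intervalIntegral.integral_nonneg hs.2
        (fun t ht => hh_nonneg t (hs.1.trans ht.1)))]
      have hadd := intervalIntegral.integral_add_adjacent_intervals
        (hh_ii 0 s le_rfl hs.1 hs.2) (hh_ii s b hs.1 hs.2 le_rfl)
      have h0s : 0 ≤ ∫ t in (0:ℝ)..s, 2 * L * (|u t - v t| + N * t ^ (-(1/2) : ℝ)) :=
        intervalIntegral.integral_nonneg hs.1 (fun t ht => hh_nonneg t ht.1)
      linarith
    calc |∫ t in s..b, ((1 / t) * (u t - ut t) ^ 2 - (1 / t) * (v t - vt t) ^ 2)|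
        ≤ |∫ t in s..b, 2 * L * (|u t - v t| + N * t ^ (-(1/2) : ℝ))| := step1
      _ ≤ 6 * L * Real.sqrt b * N := step2
  -- integrability of the exponential factors
  have hfu_on : IntegrableOn (fun t => (1 / t) * (u t - ut t) ^ 2) (Set.uIcc 0 b) volume := by
    rw [Set.uIcc_of_le hb.le, integrableOn_Icc_iff_integrableOn_Ioc]
    exact (intervalIntegrable_iff_integrableOn_Ioc_of_le hb.le).1
      (bondi_intInt hb hu hut hub le_rfl hb.le le_rfl)
  have hfv_on : IntegrableOn (fun t => (1 / t) * (v t - vt t) ^ 2) (Set.uIcc 0 b) volume := by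
    rw [Set.uIcc_of_le hb.le, integrableOn_Icc_iff_integrableOn_Ioc]
    exact (intervalIntegrable_iff_integrableOn_Ioc_of_le hb.le).1
      (bondi_intInt hb hv hvt hvb le_rfl hb.le le_rfl)
  have hAcont : ContinuousOn (fun s => ∫ t in s..b, (1 / t) * (u t - ut t) ^ 2)
      (Set.Icc 0 b) := by
    have h := intervalIntegral.continuousOn_primitive_interval_left hfu_on
    rwa [Set.uIcc_of_le hb.le] at h
  have hBcont : ContinuousOn (fun s => ∫ t in s..b, (1 / t) * (v t - vt t) ^ 2)
      (Set.Icc 0 b) := by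
    have h := intervalIntegral.continuousOn_primitive_interval_left hfv_on
    rwa [Set.uIcc_of_le hb.le] at h
  have hA_ii : IntervalIntegrable
      (fun s => Real.exp (-(∫ t in s..b, (1 / t) * (u t - ut t) ^ 2))) volume 0 b := by
    apply ContinuousOn.intervalIntegrable
    rw [Set.uIcc_of_le hb.le]
    exact Real.continuous_exp.comp_continuousOn hAcont.neg
  have hB_ii : IntervalIntegrable
      (fun s => Real.exp (-(∫ t in s..b, (1 / t) * (v t - vt t) ^ 2))) volume 0 b := by
    apply ContinuousOn.intervalIntegrable
    rw [Set.uIcc_of_le hb.le]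
    exact Real.continuous_exp.comp_continuousOn hBcont.neg
  have hA0 : ∀ s ∈ Set.Icc (0:ℝ) b, 0 ≤ ∫ t in s..b, (1 / t) * (u t - ut t) ^ 2 := by
    intro s hs
    exact intervalIntegral.integral_nonneg hs.2
      (fun t ht => mul_nonneg (one_div_nonneg.2 (hs.1.trans ht.1)) (sq_nonneg _))
  have hB0 : ∀ s ∈ Set.Icc (0:ℝ) b, 0 ≤ ∫ t in s..b, (1 / t) * (v t - vt t) ^ 2 := by
    intro s hs
    exact intervalIntegral.integral_nonneg hs.2
      (fun t ht => mul_nonneg (one_div_nonneg.2 (hs.1.trans ht.1)) (sq_nonneg _))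
  set Iu := ∫ s in (0:ℝ)..b, Real.exp (-(∫ t in s..b, (1 / t) * (u t - ut t) ^ 2)) with hIu
  set Iv := ∫ s in (0:ℝ)..b, Real.exp (-(∫ t in s..b, (1 / t) * (v t - vt t) ^ 2)) with hIv
  have hII : |Iu - Iv| ≤ 6 * L * Real.sqrt b * N * b := by
    rw [hIu, hIv, ← intervalIntegral.integral_sub hA_ii hB_ii]
    have h := intervalIntegral.norm_integral_le_of_norm_le_const (a := (0:ℝ)) (b := b)
      (C := 6 * L * Real.sqrt b * N)
      (f := fun s => Real.exp (-(∫ t in s..b, (1 / t) * (u t - ut t) ^ 2))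
        - Real.exp (-(∫ t in s..b, (1 / t) * (v t - vt t) ^ 2))) ?_
    · rw [Real.norm_eq_abs] at h
      calc |∫ s in (0:ℝ)..b, (Real.exp (-(∫ t in s..b, (1 / t) * (u t - ut t) ^ 2))
            - Real.exp (-(∫ t in s..b, (1 / t) * (v t - vt t) ^ 2)))|
          ≤ 6 * L * Real.sqrt b * N * |b - 0| := h
        _ = 6 * L * Real.sqrt b * N * b := by rw [sub_zero, abs_of_pos hb]
    · intro s hs
      rw [Set.uIoc_of_le hb.le] at hs
      have hs' : s ∈ Set.Icc (0:ℝ) b := ⟨hs.1.le, hs.2⟩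
      rw [Real.norm_eq_abs]
      exact (bondi_exp_lip (hA0 s hs') (hB0 s hs')).trans (key s hs')
  have hfinal : (b / 2) * (1 - (1 / b) * Iu) - (b / 2) * (1 - (1 / b) * Iv)
      = (Iv - Iu) / 2 := by
    field_simp
    ring
  rw [hfinal]
  have hpow : b ^ ((3:ℝ) / 2) = b * Real.sqrt b := by
    rw [show ((3:ℝ)/2) = 1 + 1/2 by norm_num, Real.rpow_add hb, Real.rpow_one,
      ← Real.sqrt_eq_rpow]
  rw [hpow, abs_div, abs_two, abs_sub_comm Iv Iu]
  linarith
end
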